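/- arXiv:1910.03627 — 8 statements merged into one kernel-verified Lean document; each statement's English description precedes it below -/
import Mathlib

section
/- Let α ∈ (0,1) and c > 0, and assume H₀ is nonempty. Then P( for every k ∈ {1,…,p}: wFDP(R_k) ≤ (−log α) · (1 + c·#{j ≤ k : κ_j > 1}) / max(C(R_k), 1) · max_{m ∈ H₀} [ ω_m / log(ω_m − (ω_m − 1)·α^c) ] ) ≥ 1 − α. -/
open MeasureTheory ProbabilityTheory Finset

open scoped Classical

namespace CheapKO

variable {p : ℕ} (w : Fin p → ℕ) (H0 : Finset (Fin p)) (l b t : ℝ)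

noncomputable def Xd (n : ℕ) (v : Fin p → ℕ) : ℝ :=
  if h : n < p then
    (if (⟨n, h⟩ : Fin p) ∈ H0 then
      (if v ⟨n, h⟩ = 1 then Real.exp (l * (w ⟨n, h⟩ : ℝ)) else b) else 1)
  else 1

noncomputable def Sd (n : ℕ) (v : Fin p → ℕ) : ℝ := ∏ m ∈ Finset.range n, Xd w H0 l b m v

noncomputable def Gd (n : ℕ) (v : Fin p → ℕ) : ℝ :=
  if h : ∃ m, m < n ∧ t ≤ Sd w H0 l b m v then Sd w H0 l b (Nat.find h) v
  else Sd w H0 l b n v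

noncomputable def Fd (n : ℕ) (v : Fin p → ℕ) : ℝ :=
  if ∃ m, m ≤ n ∧ t ≤ Sd w H0 l b m v then 0 else Gd w H0 l b t n v

variable {w H0 l b t}

lemma Xd_nonneg (hb : 0 ≤ b) (n : ℕ) (v : Fin p → ℕ) : 0 ≤ Xd w H0 l b n v := by
  unfold Xd
  split_ifs with h h2 h3
  · positivity
  · exact hb
  · norm_num
  · norm_num

lemma Xd_le (hb : b ≤ 1) (n : ℕ) (v : Fin p → ℕ) :
    Xd w H0 l b n v ≤ Real.exp (|l| * ∑ j, (w j : ℝ)) := by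
  have h1 : (1:ℝ) ≤ Real.exp (|l| * ∑ j, (w j : ℝ)) := by
    rw [Real.one_le_exp_iff]
    positivity
  unfold Xd
  split_ifs with h h2 h3
  · apply Real.exp_le_exp.2
    calc l * (w ⟨n, h⟩ : ℝ) ≤ |l| * (w ⟨n, h⟩ : ℝ) := by
          apply mul_le_mul_of_nonneg_right (le_abs_self l) (by positivity)
      _ ≤ |l| * ∑ j, (w j : ℝ) := by
          apply mul_le_mul_of_nonneg_left _ (abs_nonneg l)
          exact Finset.single_le_sum (f := fun j => (w j : ℝ)) (fun j _ => by positivity)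
            (Finset.mem_univ _)
  · exact hb.trans h1
  · exact h1
  · exact h1

lemma Sd_nonneg (hb : 0 ≤ b) (n : ℕ) (v : Fin p → ℕ) : 0 ≤ Sd w H0 l b n v :=
  Finset.prod_nonneg fun m _ => Xd_nonneg hb m v

lemma Sd_le (hb0 : 0 ≤ b) (hb : b ≤ 1) (n : ℕ) (v : Fin p → ℕ) :
    Sd w H0 l b n v ≤ Real.exp (|l| * ∑ j, (w j : ℝ)) ^ n := by
  unfold Sd
  refine (Finset.prod_le_prod (fun m _ => Xd_nonneg hb0 m v) (fun m _ => Xd_le hb m v)).trans ?_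
  rw [Finset.prod_const, Finset.card_range]

lemma Gd_nonneg (hb : 0 ≤ b) (n : ℕ) (v : Fin p → ℕ) : 0 ≤ Gd w H0 l b t n v := by
  unfold Gd; split_ifs <;> exact Sd_nonneg hb _ v

lemma Gd_le (hb0 : 0 ≤ b) (hb : b ≤ 1) (n : ℕ) (v : Fin p → ℕ) :
    Gd w H0 l b t n v ≤ Real.exp (|l| * ∑ j, (w j : ℝ)) ^ n := by
  have h1 : (1:ℝ) ≤ Real.exp (|l| * ∑ j, (w j : ℝ)) := by
    rw [Real.one_le_exp_iff]; positivity
  unfold Gd; split_ifs with h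
  · exact (Sd_le hb0 hb _ v).trans (pow_le_pow_right₀ h1 (Nat.find_spec h).1.le)
  · exact Sd_le hb0 hb n v

lemma Fd_nonneg (hb : 0 ≤ b) (n : ℕ) (v : Fin p → ℕ) : 0 ≤ Fd w H0 l b t n v := by
  unfold Fd; split_ifs
  · exact le_rfl
  · exact Gd_nonneg hb n v

lemma Fd_le (hb0 : 0 ≤ b) (hb : b ≤ 1) (n : ℕ) (v : Fin p → ℕ) :
    Fd w H0 l b t n v ≤ Real.exp (|l| * ∑ j, (w j : ℝ)) ^ n := by
  have h1 : (1:ℝ) ≤ Real.exp (|l| * ∑ j, (w j : ℝ)) := by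
    rw [Real.one_le_exp_iff]; positivity
  unfold Fd; split_ifs
  · positivity
  · exact Gd_le hb0 hb n v

/-- once hit by time `n`, the stopped process is at least `t`. -/
lemma t_le_Gd (h : ∃ m ≤ n, t ≤ Sd w H0 l b m v) : t ≤ Gd w H0 l b t n v := by
  unfold Gd; split_ifs with h'
  · exact (Nat.find_spec h').2
  · obtain ⟨m, hm, hts⟩ := h
    rcases lt_or_eq_of_le hm with hlt | rfl
    · exact absurd ⟨m, hlt, hts⟩ h'
    · exact hts

lemma Gd_succ (n : ℕ) (v : Fin p → ℕ) :
    Gd w H0 l b t (n + 1) v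
      = Gd w H0 l b t n v + Fd w H0 l b t n v * (Xd w H0 l b n v - 1) := by
  by_cases h1 : ∃ m, m < n ∧ t ≤ Sd w H0 l b m v
  · have h2 : ∃ m, m < n + 1 ∧ t ≤ Sd w H0 l b m v :=
      ⟨Nat.find h1, (Nat.find_spec h1).1.trans (Nat.lt_succ_self n), (Nat.find_spec h1).2⟩
    have hF : Fd w H0 l b t n v = 0 := by
      unfold Fd
      rw [if_pos ⟨Nat.find h1, (Nat.find_spec h1).1.le, (Nat.find_spec h1).2⟩]
    have hfind : Nat.find h2 = Nat.find h1 := by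
      apply le_antisymm
      · exact Nat.find_le ⟨(Nat.find_spec h1).1.trans (Nat.lt_succ_self n), (Nat.find_spec h1).2⟩
      · have hlt : Nat.find h2 < n := lt_of_le_of_lt
          (Nat.find_le ⟨(Nat.find_spec h1).1.trans (Nat.lt_succ_self n), (Nat.find_spec h1).2⟩)
          (Nat.find_spec h1).1
        exact Nat.find_le ⟨hlt, (Nat.find_spec h2).2⟩
    unfold Gd
    rw [dif_pos h1, dif_pos h2, hfind, hF]
    ring
  · by_cases h2 : t ≤ Sd w H0 l b n v
    · have h3 : ∃ m, m < n + 1 ∧ t ≤ Sd w H0 l b m v := ⟨n, Nat.lt_succ_self n, h2⟩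
      have hF : Fd w H0 l b t n v = 0 := by
        unfold Fd; rw [if_pos ⟨n, le_rfl, h2⟩]
      have hfind : Nat.find h3 = n := by
        apply le_antisymm (Nat.find_le ⟨Nat.lt_succ_self n, h2⟩)
        by_contra hlt
        push_neg at hlt
        exact h1 ⟨Nat.find h3, hlt, (Nat.find_spec h3).2⟩
      unfold Gd
      rw [dif_pos h3, dif_neg h1, hfind, hF]
      ring
    · have h3 : ¬ ∃ m, m < n + 1 ∧ t ≤ Sd w H0 l b m v := by
        rintro ⟨m, hm, hts⟩
        rcases Nat.lt_succ_iff_lt_or_eq.1 hm with hlt | rfl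
        · exact h1 ⟨m, hlt, hts⟩
        · exact h2 hts
      have hF : Fd w H0 l b t n v = Gd w H0 l b t n v := by
        unfold Fd
        rw [if_neg]
        rintro ⟨m, hm, hts⟩
        rcases lt_or_eq_of_le hm with hlt | rfl
        · exact h1 ⟨m, hlt, hts⟩
        · exact h2 hts
      rw [hF]
      unfold Gd
      rw [dif_neg h1, dif_neg h3]
      unfold Sd
      rw [Finset.prod_range_succ]
      ring

/-- `Xd m` only depends on the null coordinates below `n`, for `m < n`. -/
lemma Xd_congr {v v' : Fin p → ℕ} {n : ℕ}
    (hvv : ∀ j : Fin p, j.1 < n → j ∈ H0 → v j = v' j) {m : ℕ} (hm : m < n) :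
    Xd w H0 l b m v = Xd w H0 l b m v' := by
  unfold Xd
  by_cases h : m < p
  · rw [dif_pos h, dif_pos h]
    by_cases h2 : (⟨m, h⟩ : Fin p) ∈ H0
    · rw [if_pos h2, if_pos h2, hvv ⟨m, h⟩ hm h2]
    · rw [if_neg h2, if_neg h2]
  · rw [dif_neg h, dif_neg h]

lemma Sd_congr {v v' : Fin p → ℕ} {n : ℕ}
    (hvv : ∀ j : Fin p, j.1 < n → j ∈ H0 → v j = v' j) {m : ℕ} (hm : m ≤ n) :
    Sd w H0 l b m v = Sd w H0 l b m v' :=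
  Finset.prod_congr rfl fun i hi =>
    Xd_congr hvv (lt_of_lt_of_le (Finset.mem_range.1 hi) hm)

lemma Gd_congr {v v' : Fin p → ℕ} {n : ℕ}
    (hvv : ∀ j : Fin p, j.1 < n → j ∈ H0 → v j = v' j) :
    Gd w H0 l b t n v = Gd w H0 l b t n v' := by
  have hP : ∀ m, (m < n ∧ t ≤ Sd w H0 l b m v) ↔ (m < n ∧ t ≤ Sd w H0 l b m v') := by
    intro m
    constructor <;> rintro ⟨hm, hts⟩ <;> refine ⟨hm, ?_⟩
    · rwa [Sd_congr hvv hm.le] at hts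
    · rwa [Sd_congr hvv hm.le]
  unfold Gd
  by_cases h : ∃ m, m < n ∧ t ≤ Sd w H0 l b m v
  · have h' : ∃ m, m < n ∧ t ≤ Sd w H0 l b m v' := by
      obtain ⟨m, hm⟩ := h; exact ⟨m, (hP m).1 hm⟩
    have hfind : Nat.find h = Nat.find h' :=
      le_antisymm (Nat.find_le ((hP _).2 (Nat.find_spec h')))
        (Nat.find_le ((hP _).1 (Nat.find_spec h)))
    rw [dif_pos h, dif_pos h', hfind, Sd_congr hvv (Nat.find_spec h').1.le]
  · have h' : ¬ ∃ m, m < n ∧ t ≤ Sd w H0 l b m v' := by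
      rintro ⟨m, hm⟩; exact h ⟨m, (hP m).2 hm⟩
    rw [dif_neg h, dif_neg h', Sd_congr hvv le_rfl]

lemma Fd_congr {v v' : Fin p → ℕ} {n : ℕ}
    (hvv : ∀ j : Fin p, j.1 < n → j ∈ H0 → v j = v' j) :
    Fd w H0 l b t n v = Fd w H0 l b t n v' := by
  have hP : (∃ m, m ≤ n ∧ t ≤ Sd w H0 l b m v) ↔ (∃ m, m ≤ n ∧ t ≤ Sd w H0 l b m v') := by
    constructor <;> rintro ⟨m, hm, hts⟩ <;> refine ⟨m, hm, ?_⟩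
    · rwa [Sd_congr hvv hm] at hts
    · rwa [Sd_congr hvv hm]
  unfold Fd
  by_cases h : ∃ m, m ≤ n ∧ t ≤ Sd w H0 l b m v
  · rw [if_pos h, if_pos (hP.1 h)]
  · rw [if_neg h, if_neg (fun h' => h (hP.2 h')), Gd_congr hvv]


section Integral

variable {Ω : Type*} [MeasurableSpace Ω] (μ : Measure Ω) [IsProbabilityMeasure μ]
variable (κ : Fin p → Ω → ℕ)

lemma kv_measurable (hκmeas : ∀ j, Measurable (κ j)) :
    Measurable (fun ω => (fun j => κ j ω : Fin p → ℕ)) :=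
  measurable_pi_lambda _ hκmeas

/-- Expectation of a single null factor is at most one. -/
lemma integral_Xd_le_one (hκmeas : ∀ j, Measurable (κ j))
    (hw : ∀ j, 2 ≤ w j) (hb0 : 0 ≤ b)
    (hunif1 : ∀ j ∈ H0, μ {ω | κ j ω = 1} = ENNReal.ofReal (1 / (w j : ℝ)))
    (hlw : ∀ j ∈ H0, Real.exp (l * (w j : ℝ)) ≤ (w j : ℝ) - ((w j : ℝ) - 1) * b)
    {n : ℕ} (hn : n < p) (hmem : (⟨n, hn⟩ : Fin p) ∈ H0) :
    ∫ ω, Xd w H0 l b n (fun j => κ j ω) ∂μ ≤ 1 := by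
  set jn : Fin p := ⟨n, hn⟩
  set A : ℝ := Real.exp (l * (w jn : ℝ)) with hA
  have hs : MeasurableSet {ω | κ jn ω = 1} := (hκmeas jn) (measurableSet_singleton 1)
  have hXrw : (fun ω => Xd w H0 l b n (fun j => κ j ω))
      = fun ω => b + (A - b) * Set.indicator {ω' | κ jn ω' = 1} (fun _ => (1:ℝ)) ω := by
    funext ω
    unfold Xd
    rw [dif_pos hn, if_pos hmem]
    by_cases h : κ jn ω = 1
    · rw [if_pos h]
      have : ω ∈ {ω' | κ jn ω' = 1} := h
      rw [Set.indicator_of_mem this]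
      ring
    · rw [if_neg h]
      have : ω ∉ {ω' | κ jn ω' = 1} := h
      rw [Set.indicator_of_notMem this]
      ring
  rw [hXrw]
  have hind : Integrable (Set.indicator {ω' | κ jn ω' = 1} (fun _ => (1:ℝ))) μ :=
    (integrable_const (1:ℝ)).indicator hs
  rw [integral_add (integrable_const b) (hind.const_mul _), integral_const,
    integral_const_mul, integral_indicator_const _ hs, measureReal_def μ {ω' | κ jn ω' = 1}, hunif1 jn hmem]
  have hwpos : (0:ℝ) < (w jn : ℝ) := by
    have := hw jn; positivity
  have htoReal : (ENNReal.ofReal (1 / (w jn : ℝ))).toReal = 1 / (w jn : ℝ) :=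
    ENNReal.toReal_ofReal (by positivity)
  rw [htoReal]
  simp only [measureReal_def, measure_univ, ENNReal.toReal_one, smul_eq_mul, one_mul, mul_one, one_div]
  have hAle : A ≤ (w jn : ℝ) - ((w jn : ℝ) - 1) * b := hlw jn hmem
  have hinv : ((w jn : ℝ))⁻¹ * (w jn : ℝ) = 1 := inv_mul_cancel₀ (ne_of_gt hwpos)
  have hinvpos : (0:ℝ) < ((w jn : ℝ))⁻¹ := by positivity
  have hAle' : A - b ≤ (w jn : ℝ) * (1 - b) := by nlinarith
  nlinarith [mul_le_mul_of_nonneg_right hAle' hinvpos.le]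

lemma integrable_Gd (hκmeas : ∀ j, Measurable (κ j)) (hb0 : 0 ≤ b) (hb1 : b ≤ 1) (n : ℕ) :
    Integrable (fun ω => Gd w H0 l b t n (fun j => κ j ω)) μ := by
  refine Integrable.mono' (integrable_const (Real.exp (|l| * ∑ j, (w j : ℝ)) ^ n))
    ((measurable_of_countable (Gd w H0 l b t n)).comp (kv_measurable κ hκmeas)
      |>.aestronglyMeasurable) (ae_of_all _ fun ω => ?_)
  rw [Real.norm_eq_abs, abs_of_nonneg (Gd_nonneg hb0 n _)]
  exact Gd_le hb0 hb1 n _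

lemma integrable_Fd_mul (hκmeas : ∀ j, Measurable (κ j)) (hb0 : 0 ≤ b) (hb1 : b ≤ 1) (n : ℕ) :
    Integrable (fun ω => Fd w H0 l b t n (fun j => κ j ω)
      * (Xd w H0 l b n (fun j => κ j ω) - 1)) μ := by
  set B := Real.exp (|l| * ∑ j, (w j : ℝ)) with hB
  have hB1 : (1:ℝ) ≤ B := by rw [hB, Real.one_le_exp_iff]; positivity
  refine Integrable.mono' (integrable_const (B ^ n * (B + 1)))
    ((((measurable_of_countable (Fd w H0 l b t n)).comp (kv_measurable κ hκmeas)).mul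
      (((measurable_of_countable (Xd w H0 l b n)).comp (kv_measurable κ hκmeas)).sub
        measurable_const)).aestronglyMeasurable) (ae_of_all _ fun ω => ?_)
  rw [Real.norm_eq_abs, abs_mul]
  have h1 : |Fd w H0 l b t n (fun j => κ j ω)| ≤ B ^ n := by
    rw [abs_of_nonneg (Fd_nonneg hb0 n _)]
    exact Fd_le hb0 hb1 n _
  have h2 : |Xd w H0 l b n (fun j => κ j ω) - 1| ≤ B + 1 := by
    have := Xd_nonneg (l := l) (w := w) (H0 := H0) hb0 n (fun j => κ j ω)
    have := Xd_le (l := l) (w := w) (H0 := H0) hb1 n (fun j => κ j ω)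
    rw [abs_le]
    constructor <;> nlinarith
  have h3 : (0:ℝ) ≤ B ^ n := by positivity
  calc |Fd w H0 l b t n (fun j => κ j ω)| * |Xd w H0 l b n (fun j => κ j ω) - 1|
      ≤ B ^ n * (B + 1) := mul_le_mul h1 h2 (abs_nonneg _) h3

/-- Key supermartingale estimate: the stopped product has expectation at most one. -/
lemma integral_Gd_le_one (hκmeas : ∀ j, Measurable (κ j)) (hw : ∀ j, 2 ≤ w j)
    (hindep : iIndepFun (m := fun _ : H0 => (inferInstance : MeasurableSpace ℕ))
      (fun j : H0 => κ j) μ)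
    (hb0 : 0 ≤ b) (hb1 : b ≤ 1)
    (hunif1 : ∀ j ∈ H0, μ {ω | κ j ω = 1} = ENNReal.ofReal (1 / (w j : ℝ)))
    (hlw : ∀ j ∈ H0, Real.exp (l * (w j : ℝ)) ≤ (w j : ℝ) - ((w j : ℝ) - 1) * b)
    (n : ℕ) :
    ∫ ω, Gd w H0 l b t n (fun j => κ j ω) ∂μ ≤ 1 := by
  induction n with
  | zero =>
      have : ∀ ω : Ω, Gd w H0 l b t 0 (fun j => κ j ω) = 1 := by
        intro ω
        unfold Gd
        rw [dif_neg (by rintro ⟨m, hm, -⟩; exact Nat.not_lt_zero m hm)]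
        simp [Sd]
      simp only [this, integral_const, measureReal_def, measure_univ, ENNReal.toReal_one, one_smul, le_refl]
  | succ n ih =>
      have hrec : (fun ω => Gd w H0 l b t (n+1) (fun j => κ j ω))
          = fun ω => Gd w H0 l b t n (fun j => κ j ω)
            + Fd w H0 l b t n (fun j => κ j ω) * (Xd w H0 l b n (fun j => κ j ω) - 1) := by
        funext ω
        exact Gd_succ n _
      rw [hrec, integral_add (integrable_Gd μ κ hκmeas hb0 hb1 n)
        (integrable_Fd_mul μ κ hκmeas hb0 hb1 n)]
      have hcross : ∫ ω, Fd w H0 l b t n (fun j => κ j ω)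
          * (Xd w H0 l b n (fun j => κ j ω) - 1) ∂μ ≤ 0 := by
        by_cases hn : n < p
        · by_cases hmem : (⟨n, hn⟩ : Fin p) ∈ H0
          · -- independence case
            set jn : Fin p := ⟨n, hn⟩
            set S : Finset H0 := Finset.univ.filter (fun j => (j : Fin p).1 < n) with hS
            set T : Finset H0 := {⟨jn, hmem⟩} with hT
            have hST : Disjoint S T := by
              rw [Finset.disjoint_singleton_right, hS]
              simp [jn]
            have base := hindep.indepFun_finset S T hST (fun i => hκmeas i)
            set φ : (S → ℕ) → ℝ := fun u => Fd w H0 l b t n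
              (fun j : Fin p => if h : j ∈ H0 ∧ j.1 < n then
                u ⟨⟨j, h.1⟩, by simp [hS, h.2]⟩ else 0) with hφ
            set ψ : (T → ℕ) → ℝ := fun u =>
              (if u ⟨⟨jn, hmem⟩, Finset.mem_singleton_self _⟩ = 1 then
                Real.exp (l * (w jn : ℝ)) else b) - 1 with hψ
            have hcomp := base.comp (measurable_of_countable φ) (measurable_of_countable ψ)
            have hleft : (φ ∘ fun ω (i : S) => κ i ω)
                = fun ω => Fd w H0 l b t n (fun j => κ j ω) := by
              funext ω
              simp only [Function.comp_apply, hφ]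
              refine Fd_congr fun j hj hjmem => ?_
              rw [dif_pos ⟨hjmem, hj⟩]
            have hright : (ψ ∘ fun ω (i : T) => κ i ω)
                = fun ω => Xd w H0 l b n (fun j => κ j ω) - 1 := by
              funext ω
              simp only [Function.comp_apply, hψ]
              unfold Xd
              rw [dif_pos hn, if_pos hmem]
            rw [hleft, hright] at hcomp
            have hintF : Integrable (fun ω => Fd w H0 l b t n (fun j => κ j ω)) μ := by
              refine Integrable.mono' (integrable_const (Real.exp (|l| * ∑ j, (w j : ℝ)) ^ n))
                ((measurable_of_countable (Fd w H0 l b t n)).comp (kv_measurable κ hκmeas)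
                  |>.aestronglyMeasurable) (ae_of_all _ fun ω => ?_)
              rw [Real.norm_eq_abs, abs_of_nonneg (Fd_nonneg hb0 n _)]
              exact Fd_le hb0 hb1 n _
            have hintX : Integrable (fun ω => Xd w H0 l b n (fun j => κ j ω) - 1) μ := by
              refine Integrable.mono' (integrable_const (Real.exp (|l| * ∑ j, (w j : ℝ)) + 1))
                (((measurable_of_countable (Xd w H0 l b n)).comp (kv_measurable κ hκmeas)
                  |>.sub measurable_const).aestronglyMeasurable) (ae_of_all _ fun ω => ?_)
              have := Xd_nonneg (l := l) (w := w) (H0 := H0) hb0 n (fun j => κ j ω)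
              have := Xd_le (l := l) (w := w) (H0 := H0) hb1 n (fun j => κ j ω)
              rw [Real.norm_eq_abs, abs_le]
              constructor <;> nlinarith
            have hmul : (fun ω => Fd w H0 l b t n (fun j => κ j ω)
                * (Xd w H0 l b n (fun j => κ j ω) - 1))
                = (fun ω => Fd w H0 l b t n (fun j => κ j ω))
                  * (fun ω => Xd w H0 l b n (fun j => κ j ω) - 1) := rfl
            rw [hmul, IndepFun.integral_mul_eq_mul_integral hcomp hintF.aestronglyMeasurable hintX.aestronglyMeasurable]
            have hF0 : 0 ≤ ∫ ω, Fd w H0 l b t n (fun j => κ j ω) ∂μ :=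
              integral_nonneg fun ω => Fd_nonneg hb0 n _
            have hX0 : ∫ ω, (Xd w H0 l b n (fun j => κ j ω) - 1) ∂μ ≤ 0 := by
              have hXint : Integrable (fun ω => Xd w H0 l b n (fun j => κ j ω)) μ := by
                have h := hintX.add (integrable_const (1:ℝ))
                refine h.congr (ae_of_all _ fun ω => ?_)
                show (Xd w H0 l b n (fun j => κ j ω) - 1) + 1
                  = Xd w H0 l b n (fun j => κ j ω)
                ring
              rw [integral_sub hXint (integrable_const 1), integral_const]
              simp only [measureReal_def, measure_univ, ENNReal.toReal_one, one_smul]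
              have := integral_Xd_le_one μ κ hκmeas hw hb0 hunif1 hlw hn hmem
              linarith
            exact mul_nonpos_iff.2 (Or.inl ⟨hF0, hX0⟩)
          · have : ∀ ω : Ω, Xd w H0 l b n (fun j => κ j ω) - 1 = 0 := by
              intro ω; unfold Xd; rw [dif_pos hn, if_neg hmem]; ring
            simp only [this, mul_zero, integral_zero, le_refl]
        · have : ∀ ω : Ω, Xd w H0 l b n (fun j => κ j ω) - 1 = 0 := by
            intro ω; unfold Xd; rw [dif_neg hn]; ring
          simp only [this, mul_zero, integral_zero, le_refl]
      linarith

end Integral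

lemma Sd_succ_eq (v : Fin p → ℕ) (k : Fin p) :
    Sd w H0 l b (k.1 + 1) v
      = Real.exp (l * ∑ j ∈ Finset.univ.filter (fun j => j ≤ k ∧ v j = 1 ∧ j ∈ H0), (w j : ℝ))
        * b ^ (Finset.univ.filter (fun j => j ≤ k ∧ ¬(v j = 1) ∧ j ∈ H0)).card := by
  have h1 : Sd w H0 l b (k.1 + 1) v
      = ∏ j ∈ Finset.univ.filter (fun j : Fin p => j ≤ k),
          (if j ∈ H0 then (if v j = 1 then Real.exp (l * (w j : ℝ)) else b) else 1) := by
    unfold Sd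
    refine Finset.prod_bij'
      (fun m hm => (⟨m, lt_of_le_of_lt (Nat.lt_succ_iff.1 (Finset.mem_range.1 hm)) k.isLt⟩ : Fin p))
      (fun j _ => j.1) ?_ ?_ ?_ ?_ ?_
    · intro m hm
      simp only [Finset.mem_filter, Finset.mem_univ, true_and]
      exact Nat.lt_succ_iff.1 (Finset.mem_range.1 hm)
    · intro j hj
      simp only [Finset.mem_filter, Finset.mem_univ, true_and] at hj
      exact Finset.mem_range.2 (Nat.lt_succ_iff.2 hj)
    · intro m hm; rfl
    · intro j hj; rfl
    · intro m hm
      unfold Xd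
      rw [dif_pos (lt_of_le_of_lt (Nat.lt_succ_iff.1 (Finset.mem_range.1 hm)) k.isLt)]
  rw [h1, ← Finset.prod_filter, Finset.prod_ite, Finset.prod_const, ← Real.exp_sum,
    Finset.filter_filter, Finset.filter_filter]
  congr 2
  · rw [Finset.mul_sum]
    apply Finset.sum_congr _ (fun j _ => rfl)
    ext j
    simp only [Finset.mem_filter, Finset.mem_univ, true_and]
    tauto
  · congr 1
    ext j
    simp only [Finset.mem_filter, Finset.mem_univ, true_and]
    tauto

end CheapKO


open CheapKO

/-- **Theorem 1 (cheap knockoffs, simultaneous wFDP control).**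
With integer costs `w j ≥ 2`, null set `H₀` nonempty, and selection statistics
`κ j` taking values in `{1, …, w j}` that are mutually independent and uniform on
`{1, …, w j}` for `j ∈ H₀`, for any `α ∈ (0,1)` and `c > 0`, with probability at
least `1 - α`, simultaneously for every `k`,
`wFDP(R_k) ≤ (-log α) · (1 + c·#{j ≤ k : κ_j > 1}) / max(C(R_k), 1)
  · max_{m ∈ H₀} [ ω_m / log(ω_m - (ω_m - 1)·α^c) ]`,
where `R_k = {j ≤ k : κ_j = 1}`, `C(A) = ∑_{j ∈ A} ω_j`, and
`wFDP(R_k) = C(R_k ∩ H₀) / max(C(R_k), 1)`. -/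
theorem cheap_knockoffs_simultaneous_wFDP_control
    {Ω : Type*} [MeasurableSpace Ω] (μ : Measure Ω) [IsProbabilityMeasure μ]
    (p : ℕ) (hp : 0 < p) (w : Fin p → ℕ) (hw : ∀ j, 2 ≤ w j)
    (H0 : Finset (Fin p)) (hH0 : H0.Nonempty)
    (κ : Fin p → Ω → ℕ)
    (hκmeas : ∀ j, Measurable (κ j))
    (hrange : ∀ j ω₀, κ j ω₀ ∈ Finset.Icc 1 (w j))
    (hindep : iIndepFun (m := fun _ : H0 => (inferInstance : MeasurableSpace ℕ))
      (fun j : H0 => κ j) μ)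
    (hunif : ∀ j ∈ H0, ∀ i ∈ Finset.Icc 1 (w j),
      μ {ω₀ | κ j ω₀ = i} = ENNReal.ofReal (1 / (w j : ℝ)))
    (α c : ℝ) (hα : α ∈ Set.Ioo (0 : ℝ) 1) (hc : 0 < c) :
    ENNReal.ofReal (1 - α) ≤
      μ {ω₀ | ∀ k : Fin p,
        (∑ j ∈ Finset.univ.filter (fun j => j ≤ k ∧ κ j ω₀ = 1 ∧ j ∈ H0), (w j : ℝ)) /
            max (∑ j ∈ Finset.univ.filter (fun j => j ≤ k ∧ κ j ω₀ = 1), (w j : ℝ)) 1 ≤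
          (- Real.log α) *
            ((1 + c * (Finset.univ.filter (fun j => j ≤ k ∧ 1 < κ j ω₀)).card) /
              max (∑ j ∈ Finset.univ.filter (fun j => j ≤ k ∧ κ j ω₀ = 1), (w j : ℝ)) 1) *
            (H0.sup' hH0 (fun m =>
              (w m : ℝ) / Real.log ((w m : ℝ) - ((w m : ℝ) - 1) * α ^ c)))} := by
  obtain ⟨hα0, hα1⟩ := hα
  set b : ℝ := α ^ c with hbdef
  have hb0 : 0 < b := Real.rpow_pos_of_pos hα0 c
  have hb1 : b < 1 := Real.rpow_lt_one hα0.le hα1 hc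
  set L : Fin p → ℝ := fun m => Real.log ((w m : ℝ) - ((w m : ℝ) - 1) * b) with hLdef
  have harg : ∀ m, (1:ℝ) < (w m : ℝ) - ((w m : ℝ) - 1) * b := by
    intro m
    have hwm : (2:ℝ) ≤ (w m : ℝ) := by exact_mod_cast hw m
    nlinarith
  have hL : ∀ m, 0 < L m := fun m => Real.log_pos (harg m)
  set M : ℝ := H0.sup' hH0 (fun m => (w m : ℝ) / L m) with hMdef
  have hM : 0 < M := by
    obtain ⟨m0, hm0⟩ := hH0
    refine lt_of_lt_of_le ?_ (Finset.le_sup' (fun m => (w m : ℝ) / L m) hm0)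
    have : (0:ℝ) < (w m0 : ℝ) := by
      have := hw m0; positivity
    exact div_pos this (hL m0)
  set l : ℝ := 1 / M with hldef
  have hl0 : 0 < l := by positivity
  set t : ℝ := 1 / α with htdef
  have ht0 : 0 < t := by positivity
  have hlw : ∀ j ∈ H0, Real.exp (l * (w j : ℝ)) ≤ (w j : ℝ) - ((w j : ℝ) - 1) * b := by
    intro j hj
    have hdiv : (w j : ℝ) / L j ≤ M := Finset.le_sup' (fun m => (w m : ℝ) / L m) hj
    have hwle : (w j : ℝ) ≤ M * L j := by
      rw [div_le_iff₀ (hL j)] at hdiv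
      linarith
    have h2 : l * (w j : ℝ) ≤ L j := by
      rw [hldef, one_div, ← div_eq_inv_mul, div_le_iff₀ hM]
      linarith
    calc Real.exp (l * (w j : ℝ)) ≤ Real.exp (L j) := Real.exp_le_exp.2 h2
      _ = (w j : ℝ) - ((w j : ℝ) - 1) * b := Real.exp_log (lt_trans one_pos (harg j))
  have hunif1 : ∀ j ∈ H0, μ {ω₀ | κ j ω₀ = 1} = ENNReal.ofReal (1 / (w j : ℝ)) := by
    intro j hj
    exact hunif j hj 1 (Finset.mem_Icc.2 ⟨le_rfl, le_trans one_le_two (hw j)⟩)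
  -- the bad event
  set A : Set Ω := ⋃ n ∈ Finset.range (p+1), {ω | t ≤ Sd w H0 l b n (fun j => κ j ω)} with hAdef
  have hSmeas : ∀ n : ℕ, Measurable (fun ω => Sd w H0 l b n (fun j => κ j ω)) := fun n =>
    (measurable_of_countable (Sd w H0 l b n)).comp (kv_measurable κ hκmeas)
  have hAmeas : MeasurableSet A := by
    refine Finset.measurableSet_biUnion _ fun n _ => ?_
    exact measurableSet_le measurable_const (hSmeas n)
  -- Markov bound on the bad event
  have hμA : μ A ≤ ENNReal.ofReal α := by
    have hindic : ∀ ω, A.indicator (fun _ => t) ω ≤ Gd w H0 l b t p (fun j => κ j ω) := by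
      intro ω
      by_cases hω : ω ∈ A
      · rw [Set.indicator_of_mem hω]
        rw [hAdef, Set.mem_iUnion] at hω
        obtain ⟨n, hω⟩ := hω
        rw [Set.mem_iUnion] at hω
        obtain ⟨hn, hts⟩ := hω
        exact t_le_Gd ⟨n, Nat.lt_succ_iff.1 (Finset.mem_range.1 hn), hts⟩
      · rw [Set.indicator_of_notMem hω]
        exact Gd_nonneg hb0.le p _
    have hInt1 : Integrable (A.indicator fun _ => t) μ := (integrable_const t).indicator hAmeas
    have h1 : ∫ ω, A.indicator (fun _ => t) ω ∂μ ≤ 1 := by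
      refine le_trans (integral_mono hInt1 (integrable_Gd μ κ hκmeas hb0.le hb1.le p)
        hindic) ?_
      exact integral_Gd_le_one μ κ hκmeas hw hindep hb0.le hb1.le hunif1 hlw p
    rw [integral_indicator_const _ hAmeas, smul_eq_mul, measureReal_def] at h1
    have h2 : (μ A).toReal ≤ α := by
      rw [htdef] at h1
      rw [← mul_le_mul_iff_of_pos_right (by positivity : (0:ℝ) < 1/α)]
      calc (μ A).toReal * (1/α) ≤ 1 := h1
        _ = α * (1/α) := by field_simp
    rw [← ENNReal.ofReal_toReal (measure_ne_top μ A)]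
    exact ENNReal.ofReal_le_ofReal h2
  -- the good event contains the complement of the bad event
  have hsub : Aᶜ ⊆ {ω₀ | ∀ k : Fin p,
        (∑ j ∈ Finset.univ.filter (fun j => j ≤ k ∧ κ j ω₀ = 1 ∧ j ∈ H0), (w j : ℝ)) /
            max (∑ j ∈ Finset.univ.filter (fun j => j ≤ k ∧ κ j ω₀ = 1), (w j : ℝ)) 1 ≤
          (- Real.log α) *
            ((1 + c * (Finset.univ.filter (fun j => j ≤ k ∧ 1 < κ j ω₀)).card) /
              max (∑ j ∈ Finset.univ.filter (fun j => j ≤ k ∧ κ j ω₀ = 1), (w j : ℝ)) 1) *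
            M} := by
    intro ω hω
    intro k
    by_contra hfail
    push_neg at hfail
    set C0 : ℝ := ∑ j ∈ Finset.univ.filter (fun j => j ≤ k ∧ κ j ω = 1 ∧ j ∈ H0), (w j : ℝ)
      with hC0def
    set Dsum : ℝ := ∑ j ∈ Finset.univ.filter (fun j => j ≤ k ∧ κ j ω = 1), (w j : ℝ)
    set D : ℝ := max Dsum 1 with hDdef
    set N : ℕ := (Finset.univ.filter (fun j => j ≤ k ∧ 1 < κ j ω)).card with hNdef
    set N0 : ℕ := (Finset.univ.filter (fun j => j ≤ k ∧ ¬(κ j ω = 1) ∧ j ∈ H0)).card with hN0def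
    have hD : (0:ℝ) < D := lt_of_lt_of_le one_pos (le_max_right _ _)
    have hKey : (- Real.log α) * (1 + c * N) * M < C0 := by
      have heq : (- Real.log α) * ((1 + c * N) / D) * M
          = ((- Real.log α) * (1 + c * N) * M) / D := by ring
      rw [heq] at hfail
      have := mul_lt_mul_of_pos_right hfail hD
      rwa [div_mul_cancel₀ _ (ne_of_gt hD), div_mul_cancel₀ _ (ne_of_gt hD)] at this
    have hlog : 0 < - Real.log α := by
      have := Real.log_neg hα0 hα1
      linarith
    have hK : (- Real.log α) * (1 + c * N) < l * C0 := by
      rw [hldef, one_div, ← div_eq_inv_mul, lt_div_iff₀ hM]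
      exact hKey
    have hexp : Real.exp ((- Real.log α) * (1 + c * N)) < Real.exp (l * C0) :=
      Real.exp_lt_exp.2 hK
    have hEq : Real.exp ((- Real.log α) * (1 + c * N)) * b ^ N = t := by
      have hb : b = Real.exp (Real.log α * c) := Real.rpow_def_of_pos hα0 c
      rw [hb, ← Real.exp_nat_mul, ← Real.exp_add,
        show (- Real.log α) * (1 + c * N) + N * (Real.log α * c) = - Real.log α by ring,
        Real.exp_neg, Real.exp_log hα0, htdef, one_div]
    have hN0N : N0 ≤ N := by
      refine Finset.card_le_card fun j hj => ?_
      simp only [Finset.mem_filter, Finset.mem_univ, true_and] at hj ⊢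
      obtain ⟨hjk, hne, -⟩ := hj
      refine ⟨hjk, ?_⟩
      have h1 := (Finset.mem_Icc.1 (hrange j ω)).1
      exact lt_of_le_of_ne h1 (fun h => hne h.symm)
    have hbN : b ^ N ≤ b ^ N0 := pow_le_pow_of_le_one hb0.le hb1.le hN0N
    have hSgt : t < Sd w H0 l b (k.1 + 1) (fun j => κ j ω) := by
      rw [Sd_succ_eq]
      calc t = Real.exp ((- Real.log α) * (1 + c * N)) * b ^ N := hEq.symm
        _ < Real.exp (l * C0) * b ^ N := mul_lt_mul_of_pos_right hexp (pow_pos hb0 N)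
        _ ≤ Real.exp (l * C0) * b ^ N0 :=
            mul_le_mul_of_nonneg_left hbN (Real.exp_pos _).le
    apply hω
    rw [hAdef, Set.mem_iUnion]
    refine ⟨k.1 + 1, ?_⟩
    rw [Set.mem_iUnion]
    exact ⟨Finset.mem_range.2 (Nat.succ_lt_succ k.isLt), hSgt.le⟩
  calc ENNReal.ofReal (1 - α) = 1 - ENNReal.ofReal α := by
        rw [ENNReal.ofReal_sub _ hα0.le, ENNReal.ofReal_one]
    _ ≤ 1 - μ A := tsub_le_tsub_left hμA 1
    _ = μ Aᶜ := (prob_compl_eq_one_sub hAmeas).symm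
    _ ≤ _ := measure_mono hsub
end

section
/- Let α ∈ (0,1) and c > 0, and let Ĥ₀ ⊆ {1,…,p} be any nonempty set with H₀ ⊆ Ĥ₀. Then P( for every k ∈ {1,…,p}: wFDP(R_k) ≤ (−log α) · (1 + c·#{j ≤ k : κ_j > 1}) / max(C(R_k), 1) · max_{m ∈ Ĥ₀} [ ω_m / log(ω_m − (ω_m − 1)·α^c) ] ) ≥ 1 − α. In particular, taking Ĥ₀ = {1,…,p} gives the computable bound Ū(R_k, c). -/
open MeasureTheory ProbabilityTheory Finset

noncomputable def ckG (w : ℕ) (α c : ℝ) (n : ℕ) : ℝ :=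
  if n = 1 then Real.log ((w : ℝ) - ((w : ℝ) - 1) * α ^ c) else c * Real.log α

lemma ck_one_lt {w : ℕ} (hw : 2 ≤ w) {α c : ℝ} (hα0 : 0 < α) (hα1 : α < 1) (hc : 0 < c) :
    1 < (w : ℝ) - ((w : ℝ) - 1) * α ^ c := by
  have h1 : α ^ c < 1 := Real.rpow_lt_one hα0.le hα1 hc
  have h0 : 0 < α ^ c := Real.rpow_pos_of_pos hα0 c
  have hw2 : (2 : ℝ) ≤ (w : ℝ) := by exact_mod_cast hw
  nlinarith

lemma ckG_le {w : ℕ} (hw : 2 ≤ w) {α c : ℝ} (hα0 : 0 < α) (hα1 : α < 1) (hc : 0 < c) (n : ℕ) :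
    ckG w α c n ≤ Real.log ((w : ℝ) - ((w : ℝ) - 1) * α ^ c) := by
  have hlog : 0 ≤ Real.log ((w : ℝ) - ((w : ℝ) - 1) * α ^ c) :=
    (Real.log_pos (ck_one_lt hw hα0 hα1 hc)).le
  have hla : Real.log α < 0 := Real.log_neg hα0 hα1
  unfold ckG
  split
  · exact le_refl _
  · nlinarith

lemma ck_exp_one {w : ℕ} (hw : 2 ≤ w) {α c : ℝ} (hα0 : 0 < α) (hα1 : α < 1) (hc : 0 < c) :
    Real.exp (ckG w α c 1) = (w : ℝ) - ((w : ℝ) - 1) * α ^ c := by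
  unfold ckG
  rw [if_pos rfl]
  exact Real.exp_log (lt_trans one_pos (ck_one_lt hw hα0 hα1 hc))

lemma ck_exp_ne {w : ℕ} {α c : ℝ} (hα0 : 0 < α) {n : ℕ} (hn : n ≠ 1) :
    Real.exp (ckG w α c n) = α ^ c := by
  unfold ckG
  rw [if_neg hn, Real.rpow_def_of_pos hα0, mul_comm]

lemma ck_integral {Ω : Type*} [MeasurableSpace Ω] (μ : Measure Ω) [IsProbabilityMeasure μ]
    {w : ℕ} (hw : 2 ≤ w) {α c : ℝ} (hα0 : 0 < α) (hα1 : α < 1) (hc : 0 < c)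
    {X : Ω → ℕ} (hX : Measurable X) (hrange : ∀ ω, X ω ∈ Finset.Icc 1 w)
    (hunif : ∀ i ∈ Finset.Icc 1 w, μ {ω | X ω = i} = ENNReal.ofReal (1 / (w : ℝ))) :
    ∫ ω, Real.exp (ckG w α c (X ω)) ∂μ = 1 := by
  classical
  have hwR : (0:ℝ) < (w:ℝ) := by positivity
  have hmeas : ∀ i : ℕ, MeasurableSet {ω | X ω = i} := fun i => hX (measurableSet_singleton i)
  have hfun : (fun ω => Real.exp (ckG w α c (X ω))) =
      fun ω => ∑ i ∈ Finset.Icc 1 w, if X ω = i then Real.exp (ckG w α c i) else 0 := by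
    funext ω
    rw [Finset.sum_ite_eq, if_pos (hrange ω)]
  have hind : ∀ i : ℕ, (fun ω => if X ω = i then Real.exp (ckG w α c i) else 0) =
      Set.indicator {ω | X ω = i} (fun _ => Real.exp (ckG w α c i)) := by
    intro i
    funext ω
    simp [Set.indicator_apply, Set.mem_setOf_eq]
  have hint : ∀ i ∈ Finset.Icc 1 w,
      Integrable (fun ω => if X ω = i then Real.exp (ckG w α c i) else 0) μ := by
    intro i _
    rw [hind i]
    exact (integrable_const _).indicator (hmeas i)
  rw [hfun, integral_finset_sum _ hint]
  have hval : ∀ i ∈ Finset.Icc 1 w,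
      ∫ ω, (if X ω = i then Real.exp (ckG w α c i) else 0) ∂μ
        = (1 / (w:ℝ)) * Real.exp (ckG w α c i) := by
    intro i hi
    rw [hind i, integral_indicator_const _ (hmeas i), measureReal_def, hunif i hi, smul_eq_mul,
      ENNReal.toReal_ofReal (by positivity)]
  rw [Finset.sum_congr rfl hval]
  have hsplit : Finset.Icc 1 w = insert 1 (Finset.Icc 2 w) := by
    ext i; simp only [Finset.mem_Icc, Finset.mem_insert]; omega
  rw [hsplit, Finset.sum_insert (by simp)]
  have h2 : ∀ i ∈ Finset.Icc 2 w, (1 / (w:ℝ)) * Real.exp (ckG w α c i)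
      = (1 / (w:ℝ)) * α ^ c := by
    intro i hi
    rw [ck_exp_ne hα0 (by simp only [Finset.mem_Icc] at hi; omega)]
  rw [Finset.sum_congr rfl h2, Finset.sum_const, ck_exp_one hw hα0 hα1 hc, Nat.card_Icc]
  have hcard : ((w + 1 - 2 : ℕ) : ℝ) = (w : ℝ) - 1 := by
    have : w + 1 - 2 = w - 1 := by omega
    rw [this, Nat.cast_sub (by omega), Nat.cast_one]
  rw [nsmul_eq_mul, hcard]
  field_simp
  ring


/-- **Remark (computable wFDP bound via an estimated null set).**
If `Ĥ₀ ⊇ H₀` is any nonempty superset of the null set, then with probability at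
least `1 - α`, simultaneously for every `k`,
`wFDP(R_k) ≤ (-log α) · (1 + c·#{j ≤ k : κ_j > 1}) / max(C(R_k), 1)
  · max_{m ∈ Ĥ₀} [ ω_m / log(ω_m - (ω_m - 1)·α^c) ]`.
Taking `Ĥ₀ = {1, …, p}` gives the computable bound `Ū(R_k, c)`. -/
theorem cheap_knockoffs_wFDP_control_estimated_nulls
    {Ω : Type*} [MeasurableSpace Ω] (μ : Measure Ω) [IsProbabilityMeasure μ]
    (p : ℕ) (hp : 0 < p) (w : Fin p → ℕ) (hw : ∀ j, 2 ≤ w j)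
    (H0 : Finset (Fin p)) (hH0 : H0.Nonempty)
    (κ : Fin p → Ω → ℕ)
    (hκmeas : ∀ j, Measurable (κ j))
    (hrange : ∀ j ω₀, κ j ω₀ ∈ Finset.Icc 1 (w j))
    (hindep : iIndepFun
      (fun j : H0 => κ j) μ)
    (hunif : ∀ j ∈ H0, ∀ i ∈ Finset.Icc 1 (w j),
      μ {ω₀ | κ j ω₀ = i} = ENNReal.ofReal (1 / (w j : ℝ)))
    (α c : ℝ) (hα : α ∈ Set.Ioo (0 : ℝ) 1) (hc : 0 < c)
    (Hhat : Finset (Fin p)) (hHhat : Hhat.Nonempty) (hsub : H0 ⊆ Hhat) :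
    ENNReal.ofReal (1 - α) ≤
      μ {ω₀ | ∀ k : Fin p,
        (∑ j ∈ Finset.univ.filter (fun j => j ≤ k ∧ κ j ω₀ = 1 ∧ j ∈ H0), (w j : ℝ)) /
            max (∑ j ∈ Finset.univ.filter (fun j => j ≤ k ∧ κ j ω₀ = 1), (w j : ℝ)) 1 ≤
          (- Real.log α) *
            ((1 + c * (Finset.univ.filter (fun j => j ≤ k ∧ 1 < κ j ω₀)).card) /
              max (∑ j ∈ Finset.univ.filter (fun j => j ≤ k ∧ κ j ω₀ = 1), (w j : ℝ)) 1) *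
            (Hhat.sup' hHhat (fun m =>
              (w m : ℝ) / Real.log ((w m : ℝ) - ((w m : ℝ) - 1) * α ^ c)))} := by
  classical
  obtain ⟨hα0, hα1⟩ := hα
  set t : ℝ := -Real.log α with htdef
  have ht0 : 0 < t := by
    have := Real.log_neg hα0 hα1
    simp only [htdef]; linarith
  set g : Fin p → ℕ → ℝ := fun j => ckG (w j) α c with hgdef
  set Y : Fin p → Ω → ℝ := fun j ω => g j (κ j ω) with hYdef
  have hYmeas : ∀ j, Measurable (Y j) := fun j =>
    (measurable_of_countable (g j)).comp (hκmeas j)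
  set S : Fin p → Ω → ℝ := fun k ω => ∑ j ∈ H0.filter (fun j => j ≤ k), Y j ω with hSdef
  have hSmeas : ∀ k, Measurable (S k) := fun k =>
    Finset.measurable_sum _ (fun j _ => hYmeas j)
  set l : Fin p → ℝ := fun j => Real.log ((w j : ℝ) - ((w j : ℝ) - 1) * α ^ c) with hldef
  have hlpos : ∀ j, 0 < l j := fun j => Real.log_pos (ck_one_lt (hw j) hα0 hα1 hc)
  have hgle : ∀ j n, g j n ≤ l j := fun j n => ckG_le (hw j) hα0 hα1 hc n
  set B : ℝ := ∑ j ∈ H0, l j with hBdef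
  -- bound on partial sums of Y over subsets of H0
  have hsumle : ∀ (T : Finset (Fin p)), T ⊆ H0 → ∀ ω, (∑ j ∈ T, Y j ω) ≤ B := by
    intro T hT ω
    calc (∑ j ∈ T, Y j ω) ≤ ∑ j ∈ T, l j :=
          Finset.sum_le_sum (fun j _ => hgle j (κ j ω))
      _ ≤ B := Finset.sum_le_sum_of_subset_of_nonneg hT (fun j _ _ => (hlpos j).le)
  set Sf : Ω → ℝ := fun ω => ∑ j ∈ H0, Y j ω with hSfdef
  have hSfmeas : Measurable Sf := Finset.measurable_sum _ (fun j _ => hYmeas j)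
  -- integrals of exponentials
  have hYindep : iIndepFun
      (fun j : H0 => Y (j : Fin p)) μ :=
    hindep.comp (fun j : H0 => g (j : Fin p)) (fun j => measurable_of_countable _)
  have hmgf : ∀ T' : Finset H0, ∫ ω, Real.exp (∑ j ∈ T', Y (j : Fin p) ω) ∂μ = 1 := by
    intro T'
    have h := hYindep.mgf_sum (fun j => hYmeas (j : Fin p)) T' (t := 1)
    have h1 : mgf (∑ i ∈ T', fun ω => Y (i : Fin p) ω) μ 1
        = ∫ ω, Real.exp (∑ j ∈ T', Y (j : Fin p) ω) ∂μ := by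
      unfold mgf
      congr 1
      funext ω
      simp [Finset.sum_apply]
    have h2 : ∀ j : H0, mgf (Y (j : Fin p)) μ 1 = 1 := by
      intro j
      unfold mgf
      simp only [one_mul]
      exact ck_integral μ (hw _) hα0 hα1 hc (hκmeas _) (hrange _)
        (hunif _ j.2)
    rw [h1] at h
    rw [h, Finset.prod_congr rfl (fun j _ => h2 j), Finset.prod_const_one]
  have hexpSf : ∫ ω, Real.exp (Sf ω) ∂μ = 1 := by
    have := hmgf Finset.univ
    rw [← this]
    congr 1
    funext ω
    rw [hSfdef]
    exact congrArg Real.exp (Finset.sum_coe_sort H0 (fun j => Y j ω)).symm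

  -- first-violation events
  set P : Fin p → Ω → Prop := fun k ω => t < S k ω ∧ ∀ i, i < k → S i ω ≤ t with hPdef
  have hPmeas : ∀ k, MeasurableSet {ω | P k ω} := by
    intro k
    have hrw : {ω | P k ω} =
        {ω | t < S k ω} ∩ ⋂ (i : Fin p), ⋂ (_ : i < k), {ω | S i ω ≤ t} := by
      ext ω
      simp only [hPdef, Set.mem_setOf_eq, Set.mem_inter_iff, Set.mem_iInter]
    rw [hrw]
    exact (measurableSet_lt measurable_const (hSmeas k)).inter
      (MeasurableSet.iInter fun i => MeasurableSet.iInter fun _ =>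
        measurableSet_le (hSmeas i) measurable_const)
  set X : Fin p → Ω → ℝ := fun k ω => (if P k ω then 1 else 0) * Real.exp (S k ω) with hXdef
  set XF : Fin p → Ω → ℝ := fun k ω => (if P k ω then 1 else 0) * Real.exp (Sf ω) with hXFdef
  have hXmeas : ∀ k, Measurable (X k) := fun k =>
    ((Measurable.ite (hPmeas k) measurable_const measurable_const)).mul (hSmeas k).exp
  have hXFmeas : ∀ k, Measurable (XF k) := fun k =>
    ((Measurable.ite (hPmeas k) measurable_const measurable_const)).mul hSfmeas.exp
  have hbdd : ∀ f : Ω → ℝ, Measurable f → (∀ ω, |f ω| ≤ Real.exp B) → Integrable f μ :=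
    fun f hf hb => (integrable_const (Real.exp B)).mono' hf.aestronglyMeasurable (ae_of_all _ hb)
  have hXint : ∀ k, Integrable (X k) μ := by
    intro k
    refine hbdd _ (hXmeas k) (fun ω => ?_)
    simp only [hXdef]
    by_cases h : P k ω
    · rw [if_pos h, one_mul, abs_of_nonneg (Real.exp_nonneg _)]
      exact Real.exp_le_exp.mpr (hsumle _ (Finset.filter_subset _ _) ω)
    · rw [if_neg h, zero_mul, abs_zero]; positivity
  have hXFint : ∀ k, Integrable (XF k) μ := by
    intro k
    refine hbdd _ (hXFmeas k) (fun ω => ?_)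
    simp only [hXFdef]
    by_cases h : P k ω
    · rw [if_pos h, one_mul, abs_of_nonneg (Real.exp_nonneg _)]
      exact Real.exp_le_exp.mpr (hsumle _ (Finset.Subset.refl _) ω)
    · rw [if_neg h, zero_mul, abs_zero]; positivity
  -- key step: ∫ X k = ∫ XF k via independence
  have hXeqXF : ∀ k, ∫ ω, X k ω ∂μ = ∫ ω, XF k ω ∂μ := by
    intro k
    set B1 : Finset H0 := Finset.univ.filter (fun j : H0 => (j : Fin p) ≤ k) with hB1def
    set B2 : Finset H0 := Finset.univ.filter (fun j : H0 => ¬ (j : Fin p) ≤ k) with hB2def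
    set Z : Ω → ℝ := fun ω => Real.exp (∑ j ∈ B2, Y (j : Fin p) ω) with hZdef
    have hZmeas : Measurable Z := (Finset.measurable_sum _ (fun j _ => hYmeas _)).exp
    have hZint : ∫ ω, Z ω ∂μ = 1 := hmgf B2
    have hB2sum : ∀ ω, (∑ j ∈ B2, Y (j : Fin p) ω)
        = ∑ j ∈ H0.filter (fun j => ¬ j ≤ k), Y j ω := by
      intro ω
      rw [hB2def, Finset.sum_filter,
        Finset.sum_coe_sort H0 (fun j => if ¬ j ≤ k then Y j ω else 0), ← Finset.sum_filter]
    have hXZ : ∀ ω, X k ω * Z ω = XF k ω := by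
      intro ω
      simp only [hXdef, hXFdef, hZdef]
      rw [hB2sum, mul_assoc, ← Real.exp_add,
        Finset.sum_filter_add_sum_filter_not H0 (fun j => j ≤ k) (fun j => Y j ω)]
    have hdisj : Disjoint B1 B2 := Finset.disjoint_filter_filter_not Finset.univ Finset.univ _
    have hT := hindep.indepFun_finset B1 B2 hdisj (fun i => hκmeas (i : Fin p))
    set SB : Fin p → ((i : B1) → ℕ) → ℝ := fun i z =>
      ∑ j : B1, if ((j : H0) : Fin p) ≤ i then g ((j : H0) : Fin p) (z j) else 0 with hSBdef
    have hSBeq : ∀ i : Fin p, i ≤ k →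
        ∀ ω, SB i (fun j : B1 => κ ((j : H0) : Fin p) ω) = S i ω := by
      intro i hik ω
      simp only [hSBdef, hSdef, hYdef]
      rw [Finset.sum_coe_sort B1
        (fun j : H0 => if (j : Fin p) ≤ i then g (j : Fin p) (κ (j : Fin p) ω) else 0)]
      rw [hB1def, Finset.sum_filter]
      have hcollapse : ∀ j : H0,
          (if (j : Fin p) ≤ k then
            (if (j : Fin p) ≤ i then g (j : Fin p) (κ (j : Fin p) ω) else 0) else 0)
          = (if (j : Fin p) ≤ i then g (j : Fin p) (κ (j : Fin p) ω) else 0) := by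
        intro j
        by_cases h : (j : Fin p) ≤ i
        · simp [h, le_trans h hik]
        · simp [h]
      rw [Finset.sum_congr rfl (fun j _ => hcollapse j),
        Finset.sum_coe_sort H0 (fun j => if j ≤ i then g j (κ j ω) else 0),
        ← Finset.sum_filter]
    set Φ : ((i : B1) → ℕ) → ℝ := fun z =>
      (if (t < SB k z ∧ ∀ i, i < k → SB i z ≤ t) then 1 else 0) * Real.exp (SB k z) with hΦdef
    set Ψ : ((i : B2) → ℕ) → ℝ := fun z =>
      Real.exp (∑ j : B2, g ((j : H0) : Fin p) (z j)) with hΨdef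
    have hΦmeas : Measurable Φ := measurable_of_countable _
    have hΨmeas : Measurable Ψ := measurable_of_countable _
    have hXcomp : X k = Φ ∘ (fun ω (i : B1) => κ ((i : H0) : Fin p) ω) := by
      funext ω
      simp only [hXdef, hΦdef, Function.comp_apply]
      rw [hSBeq k le_rfl ω]
      have hcond : (t < S k ω ∧
          ∀ i, i < k → SB i (fun j : B1 => κ ((j : H0) : Fin p) ω) ≤ t) ↔ P k ω := by
        simp only [hPdef]
        constructor
        · rintro ⟨h1, h2⟩
          exact ⟨h1, fun i hik => by rw [← hSBeq i hik.le ω]; exact h2 i hik⟩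
        · rintro ⟨h1, h2⟩
          exact ⟨h1, fun i hik => by rw [hSBeq i hik.le ω]; exact h2 i hik⟩
      rw [if_congr hcond rfl rfl]
    have hZcomp : Z = Ψ ∘ (fun ω (i : B2) => κ ((i : H0) : Fin p) ω) := by
      funext ω
      simp only [hZdef, hΨdef, hYdef, Function.comp_apply]
      exact congrArg Real.exp
        (Finset.sum_coe_sort B2 (fun j : H0 => g (j : Fin p) (κ (j : Fin p) ω))).symm
    have hIndXZ : IndepFun (X k) Z μ := by
      rw [hXcomp, hZcomp]
      exact hT.comp hΦmeas hΨmeas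
    have hXnn : 0 ≤ X k := by
      intro ω
      simp only [hXdef, Pi.zero_apply]
      apply mul_nonneg _ (Real.exp_nonneg _)
      split <;> norm_num
    have hZnn : 0 ≤ Z := by
      intro ω
      simp only [hZdef, Pi.zero_apply]
      exact Real.exp_nonneg _
    have hmul := hIndXZ.integral_mul_eq_mul_integral
      (hXmeas k).aestronglyMeasurable hZmeas.aestronglyMeasurable
    have hprod : (X k * Z) = XF k := funext (fun ω => hXZ ω)
    rw [hprod, hZint, mul_one] at hmul
    exact hmul.symm

  -- per-k measure bound
  have hexpt : Real.exp t = α⁻¹ := by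
    rw [htdef, Real.exp_neg, Real.exp_log hα0]
  have hμk : ∀ k, μ {ω | P k ω} ≤ ENNReal.ofReal (α * ∫ ω, XF k ω ∂μ) := by
    intro k
    have hreal : (μ {ω | P k ω}).toReal ≤ α * ∫ ω, X k ω ∂μ := by
      have hi : ∫ ω, Set.indicator {ω | P k ω} (fun _ => (1:ℝ)) ω ∂μ
          = (μ {ω | P k ω}).toReal := by
        rw [integral_indicator_const (1:ℝ) (hPmeas k)]; simp [measureReal_def]
      rw [← hi, ← integral_const_mul]
      apply integral_mono ((integrable_const (1:ℝ)).indicator (hPmeas k))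
        ((hXint k).const_mul α)
      intro ω
      by_cases h : P k ω
      · rw [Set.indicator_of_mem (show ω ∈ {ω' | P k ω'} from h)]
        have hS : t < S k ω := h.1
        have h2 : α⁻¹ < Real.exp (S k ω) := by rw [← hexpt]; exact Real.exp_lt_exp.mpr hS
        have h3 := mul_lt_mul_of_pos_left h2 hα0
        rw [mul_inv_cancel₀ (ne_of_gt hα0)] at h3
        simp only [hXdef]
        rw [if_pos h, one_mul]
        exact h3.le
      · rw [Set.indicator_of_notMem (show ω ∉ {ω' | P k ω'} from h)]
        simp only [hXdef]
        rw [if_neg h, zero_mul, mul_zero]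
        
    calc μ {ω | P k ω} = ENNReal.ofReal ((μ {ω | P k ω}).toReal) :=
          (ENNReal.ofReal_toReal (measure_ne_top μ _)).symm
      _ ≤ ENNReal.ofReal (α * ∫ ω, X k ω ∂μ) := ENNReal.ofReal_le_ofReal hreal
      _ = ENNReal.ofReal (α * ∫ ω, XF k ω ∂μ) := by rw [hXeqXF k]
  have hXFnn : ∀ k ω, 0 ≤ XF k ω := by
    intro k ω
    simp only [hXFdef]
    apply mul_nonneg _ (Real.exp_nonneg _)
    split <;> norm_num
  have hexpSfint : Integrable (fun ω => Real.exp (Sf ω)) μ := by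
    refine hbdd _ hSfmeas.exp (fun ω => ?_)
    rw [abs_of_nonneg (Real.exp_nonneg _)]
    exact Real.exp_le_exp.mpr (hsumle _ (Finset.Subset.refl _) ω)
  have hsumXF : (∑ k : Fin p, ∫ ω, XF k ω ∂μ) ≤ 1 := by
    rw [← integral_finset_sum _ (fun k _ => hXFint k), ← hexpSf]
    apply integral_mono (integrable_finset_sum _ (fun k _ => hXFint k)) hexpSfint
    intro ω
    simp only [hXFdef]
    rw [← Finset.sum_mul]
    have hcard : (∑ k : Fin p, if P k ω then (1:ℝ) else 0) ≤ 1 := by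
      rw [Finset.sum_boole]
      have hone : (Finset.univ.filter (fun k => P k ω)).card ≤ 1 := by
        apply Finset.card_le_one.mpr
        intro a ha b hb
        simp only [Finset.mem_filter, hPdef] at ha hb
        by_contra hab
        rcases lt_or_gt_of_ne hab with h | h
        · exact absurd (hb.2.2 a h) (not_le.mpr ha.2.1)
        · exact absurd (ha.2.2 b h) (not_le.mpr hb.2.1)
      exact_mod_cast hone
    calc (∑ k : Fin p, if P k ω then (1:ℝ) else 0) * Real.exp (Sf ω)
        ≤ 1 * Real.exp (Sf ω) := mul_le_mul_of_nonneg_right hcard (Real.exp_nonneg _)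
      _ = Real.exp (Sf ω) := one_mul _
  have hBad : μ {ω | ∃ k : Fin p, t < S k ω} ≤ ENNReal.ofReal α := by
    have hcover : {ω | ∃ k : Fin p, t < S k ω} ⊆ ⋃ k : Fin p, {ω | P k ω} := by
      intro ω hω
      obtain ⟨k0, hk0⟩ := hω
      have hne : (Finset.univ.filter (fun k : Fin p => t < S k ω)).Nonempty :=
        ⟨k0, Finset.mem_filter.mpr ⟨Finset.mem_univ _, hk0⟩⟩
      refine Set.mem_iUnion.mpr ⟨(Finset.univ.filter (fun k : Fin p => t < S k ω)).min' hne, ?_⟩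
      have hmem := Finset.min'_mem _ hne
      simp only [Finset.mem_filter] at hmem
      refine ⟨hmem.2, fun i hik => ?_⟩
      by_contra hcon
      push_neg at hcon
      have hle : (Finset.univ.filter (fun k : Fin p => t < S k ω)).min' hne ≤ i :=
        Finset.min'_le _ i (Finset.mem_filter.mpr ⟨Finset.mem_univ _, hcon⟩)
      exact absurd hik (not_lt.mpr hle)
    calc μ {ω | ∃ k : Fin p, t < S k ω} ≤ μ (⋃ k : Fin p, {ω | P k ω}) := measure_mono hcover
      _ ≤ ∑ k : Fin p, μ {ω | P k ω} := measure_iUnion_fintype_le _ _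
      _ ≤ ∑ k : Fin p, ENNReal.ofReal (α * ∫ ω, XF k ω ∂μ) :=
          Finset.sum_le_sum (fun k _ => hμk k)
      _ = ENNReal.ofReal (∑ k : Fin p, α * ∫ ω, XF k ω ∂μ) :=
          (ENNReal.ofReal_sum_of_nonneg (fun k _ =>
            mul_nonneg hα0.le (integral_nonneg (fun ω => hXFnn k ω)))).symm
      _ ≤ ENNReal.ofReal α := by
          apply ENNReal.ofReal_le_ofReal
          rw [← Finset.mul_sum]
          exact mul_le_of_le_one_right hα0.le hsumXF
  have hGood : ENNReal.ofReal (1 - α) ≤ μ {ω | ∀ k : Fin p, S k ω ≤ t} := by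
    have hBadmeas : MeasurableSet {ω | ∃ k : Fin p, t < S k ω} := by
      have hrw : {ω | ∃ k : Fin p, t < S k ω} = ⋃ k : Fin p, {ω | t < S k ω} := by
        ext ω; simp
      rw [hrw]
      exact MeasurableSet.iUnion fun k => measurableSet_lt measurable_const (hSmeas k)
    have hcompl : {ω : Ω | ∀ k : Fin p, S k ω ≤ t} = {ω | ∃ k : Fin p, t < S k ω}ᶜ := by
      ext ω; simp [not_lt]
    rw [hcompl, prob_compl_eq_one_sub hBadmeas]
    have h1 : ENNReal.ofReal (1 - α) = 1 - ENNReal.ofReal α := by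
      rw [ENNReal.ofReal_sub 1 hα0.le, ENNReal.ofReal_one]
    rw [h1]
    exact tsub_le_tsub_left hBad 1
  -- final: the good event implies the claimed inequalities
  refine le_trans hGood (measure_mono ?_)
  intro ω hω
  simp only [Set.mem_setOf_eq] at hω ⊢
  have hM0 : 0 < Hhat.sup' hHhat (fun m =>
      (w m : ℝ) / Real.log ((w m : ℝ) - ((w m : ℝ) - 1) * α ^ c)) := by
    obtain ⟨m, hm⟩ := hHhat
    refine lt_of_lt_of_le ?_ (Finset.le_sup' _ hm)
    have hwm : (0:ℝ) < (w m : ℝ) := by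
      have := hw m; positivity
    exact div_pos hwm (hlpos m)
  set M : ℝ := Hhat.sup' hHhat (fun m =>
    (w m : ℝ) / Real.log ((w m : ℝ) - ((w m : ℝ) - 1) * α ^ c)) with hMdef
  have hMw : ∀ j ∈ H0, (w j : ℝ) ≤ M * l j := by
    intro j hj
    have h1 : (w j : ℝ) / Real.log ((w j:ℝ) - ((w j:ℝ) - 1) * α ^ c) ≤ M :=
      Finset.le_sup' (fun m => (w m : ℝ) / Real.log ((w m : ℝ) - ((w m : ℝ) - 1) * α ^ c))
        (hsub hj)
    exact (div_le_iff₀ (hlpos j)).mp h1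
  intro k
  set N : ℕ := (Finset.univ.filter (fun j => j ≤ k ∧ 1 < κ j ω)).card with hNdef
  set den : ℝ := max (∑ j ∈ Finset.univ.filter (fun j => j ≤ k ∧ κ j ω = 1), (w j : ℝ)) 1
    with hdendef
  have hden : 0 < den := lt_max_of_lt_right one_pos
  set s1 := (H0.filter (fun j => j ≤ k)).filter (fun j => κ j ω = 1) with hs1def
  set s2 := (H0.filter (fun j => j ≤ k)).filter (fun j => ¬ κ j ω = 1) with hs2def
  have hnum : Finset.univ.filter (fun j => j ≤ k ∧ κ j ω = 1 ∧ j ∈ H0) = s1 := by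
    ext j
    simp only [hs1def, Finset.mem_filter, Finset.mem_univ, true_and]
    tauto
  have hS1 : ∀ j ∈ s1, Y j ω = l j := by
    intro j hj
    simp only [hs1def, Finset.mem_filter] at hj
    show ckG (w j) α c (κ j ω) = l j
    rw [hj.2]
    unfold ckG
    rw [if_pos rfl]
  have hS2 : ∀ j ∈ s2, Y j ω = c * Real.log α := by
    intro j hj
    simp only [hs2def, Finset.mem_filter] at hj
    show ckG (w j) α c (κ j ω) = c * Real.log α
    unfold ckG
    rw [if_neg hj.2]
  have hsplitS : S k ω = (∑ j ∈ s1, l j) + (s2.card : ℝ) * (c * Real.log α) := by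
    show (∑ j ∈ H0.filter (fun j => j ≤ k), Y j ω) = _
    calc (∑ j ∈ H0.filter (fun j => j ≤ k), Y j ω)
        = (∑ j ∈ s1, Y j ω) + (∑ j ∈ s2, Y j ω) :=
          (Finset.sum_filter_add_sum_filter_not _ _ _).symm
      _ = (∑ j ∈ s1, l j) + (s2.card : ℝ) * (c * Real.log α) := by
          rw [Finset.sum_congr rfl hS1, Finset.sum_congr rfl hS2, Finset.sum_const,
            nsmul_eq_mul]
  have hcard2 : (s2.card : ℝ) ≤ (N : ℝ) := by
    have hsub2 : s2 ⊆ Finset.univ.filter (fun j => j ≤ k ∧ 1 < κ j ω) := by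
      intro j hj
      simp only [hs2def, Finset.mem_filter] at hj
      simp only [Finset.mem_filter, Finset.mem_univ, true_and]
      have h1 := (Finset.mem_Icc.mp (hrange j ω)).1
      have h2 := hj.2
      exact ⟨hj.1.2, by omega⟩
    exact_mod_cast Finset.card_le_card hsub2
  have hT : (∑ j ∈ s1, l j) ≤ t * (1 + c * (N : ℝ)) := by
    have h1 := hω k
    rw [hsplitS] at h1
    have hlog : Real.log α = -t := by rw [htdef]; ring
    rw [hlog] at h1
    nlinarith [mul_le_mul_of_nonneg_right hcard2 (mul_nonneg hc.le ht0.le)]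
  have hnumle : (∑ j ∈ s1, (w j : ℝ)) ≤ t * (1 + c * (N : ℝ)) * M := by
    calc (∑ j ∈ s1, (w j : ℝ)) ≤ ∑ j ∈ s1, M * l j := by
          apply Finset.sum_le_sum
          intro j hj
          apply hMw
          simp only [hs1def, Finset.mem_filter] at hj
          exact hj.1.1
      _ = M * ∑ j ∈ s1, l j := (Finset.mul_sum _ _ _).symm
      _ ≤ M * (t * (1 + c * (N : ℝ))) := mul_le_mul_of_nonneg_left hT hM0.le
      _ = t * (1 + c * (N : ℝ)) * M := by ring
  rw [hnum]
  have hrhs : t * ((1 + c * (N : ℝ)) / den) * M = (t * (1 + c * (N : ℝ)) * M) / den := by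
    ring
  rw [hrhs]
  exact (div_le_div_iff_of_pos_right hden).mpr hnumle
end

section
/- Let α ∈ (0,1) and c > 0, assume H₀ is nonempty, and set x* = (−c·log α) · max_{m ∈ H₀} [ ω_m / log(ω_m − (ω_m − 1)·α^c) ]. Then P( there exists k ∈ {1,…,p} with wFDP(R_k) ≥ x* · V(R_k, c) ) ≤ α. -/
open MeasureTheory ProbabilityTheory Finset

set_option maxHeartbeats 1000000 in
theorem ville_aux
    {Ω : Type*} [MeasurableSpace Ω] (μ : Measure Ω) [IsProbabilityMeasure μ]
    (p : ℕ) (H0 : Finset (Fin p)) (κ : Fin p → Ω → ℕ)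
    (hκmeas : ∀ j, Measurable (κ j))
    (hindep : iIndepFun (m := fun _ : H0 => (inferInstance : MeasurableSpace ℕ))
      (fun j : H0 => κ j) μ)
    (z : Fin p → ℕ → ℝ)
    (hz0 : ∀ j v, 0 ≤ z j v)
    (hzb : ∀ j, ∃ C : ℝ, ∀ v, z j v ≤ C)
    (hz1 : ∀ j, j ∉ H0 → ∀ v, z j v = 1)
    (hzint : ∀ j, j ∈ H0 → ∫ ω, z j (κ j ω) ∂μ ≤ 1)
    (α' : ℝ) (hα'0 : 0 < α') (hα'1 : α' < 1) :
    μ {ω | ∃ K, K ≤ p ∧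
        1 ≤ α' * ∏ j ∈ Finset.univ.filter (fun j : Fin p => (j : ℕ) < K), z j (κ j ω)}
      ≤ ENNReal.ofReal α' := by
  classical
  -- the partial product process
  set Qf : ℕ → (Fin p → ℕ) → ℝ := fun K x =>
    ∏ j ∈ Finset.univ.filter (fun j : Fin p => (j : ℕ) < K), z j (x j) with hQfdef
  have mQf : ∀ J, Measurable (Qf J) := fun J =>
    Finset.measurable_prod _ fun j _ => measurable_from_top.comp (measurable_pi_apply j)
  have hQcong : ∀ (J K : ℕ), J ≤ K → ∀ x y : Fin p → ℕ,
      (∀ j : Fin p, j ∈ H0 → (j : ℕ) < K → x j = y j) → Qf J x = Qf J y := by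
    intro J K hJK x y hxy
    refine Finset.prod_congr rfl fun j hj => ?_
    rcases Finset.mem_filter.mp hj with ⟨-, hjJ⟩
    by_cases h : j ∈ H0
    · rw [hxy j h (lt_of_lt_of_le hjJ hJK)]
    · rw [hz1 j h, hz1 j h]
  set PP : ℕ → Ω → ℝ := fun K ω => Qf K (fun j => κ j ω) with hPPdef
  have mPP : ∀ K, Measurable (PP K) := fun K =>
    Finset.measurable_prod _ (fun j _ => measurable_from_top.comp (hκmeas j))
  -- a uniform bound
  set C : Fin p → ℝ := fun j => Classical.choose (hzb j) with hCdef
  have hC : ∀ j v, z j v ≤ C j := fun j => Classical.choose_spec (hzb j)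
  obtain ⟨D, hD1, hPPle⟩ : ∃ D : ℝ, 1 ≤ D ∧ ∀ K ω, PP K ω ≤ D := by
    refine ⟨∏ j : Fin p, max (C j) 1, ?_, ?_⟩
    · calc (1:ℝ) = ∏ _j : Fin p, (1:ℝ) := (Finset.prod_const_one).symm
        _ ≤ ∏ j : Fin p, max (C j) 1 :=
            Finset.prod_le_prod (fun _ _ => zero_le_one) (fun j _ => le_max_right _ _)
    intro K ω
    calc PP K ω ≤ ∏ j ∈ Finset.univ.filter (fun j : Fin p => (j : ℕ) < K), max (C j) 1 := by
          apply Finset.prod_le_prod (fun j _ => hz0 j _)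
            (fun j _ => le_trans (hC j _) (le_max_left _ _))
      _ ≤ ∏ j : Fin p, max (C j) 1 := by
          rw [← Finset.prod_filter_mul_prod_filter_not Finset.univ
            (fun j : Fin p => (j : ℕ) < K) (fun j => max (C j) 1)]
          refine le_mul_of_one_le_right
            (Finset.prod_nonneg fun j _ => le_trans zero_le_one (le_max_right _ _)) ?_
          calc (1:ℝ) = ∏ _j ∈ Finset.univ.filter (fun j : Fin p => ¬ (j : ℕ) < K), (1:ℝ) :=
                (Finset.prod_const_one).symm
            _ ≤ _ := Finset.prod_le_prod (fun _ _ => zero_le_one) (fun j _ => le_max_right _ _)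
  have hPP0 : ∀ K ω, 0 ≤ PP K ω := fun K ω => Finset.prod_nonneg fun j _ => hz0 j _
  -- the hitting sets
  set A : ℕ → Set Ω := fun K => {ω | ∀ J, J ≤ K → α' * PP J ω < 1} with hAdef
  set B : ℕ → Set Ω := fun K =>
    {ω | (∀ J, J < K → α' * PP J ω < 1) ∧ 1 ≤ α' * PP K ω} with hBdef
  have mlt : ∀ J, MeasurableSet {ω | α' * PP J ω < 1} :=
    fun J => measurableSet_lt (measurable_const.mul (mPP J)) measurable_const
  have mA : ∀ K, MeasurableSet (A K) := by
    intro K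
    have : A K = ⋂ J ∈ Set.Iic K, {ω | α' * PP J ω < 1} := by
      ext ω; simp [hAdef]
    rw [this]
    exact MeasurableSet.biInter (Set.to_countable _) fun J _ => mlt J
  have mB : ∀ K, MeasurableSet (B K) := by
    intro K
    have : B K = (⋂ J ∈ Set.Iio K, {ω | α' * PP J ω < 1}) ∩ {ω | 1 ≤ α' * PP K ω} := by
      ext ω; simp [hBdef]
    rw [this]
    exact (MeasurableSet.biInter (Set.to_countable _) fun J _ => mlt J).inter
      (measurableSet_le measurable_const (measurable_const.mul (mPP K)))
  set f : ℕ → Ω → ℝ := fun K => (A K).indicator (PP K) with hfdef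
  set g : ℕ → Ω → ℝ := fun K => (B K).indicator (PP K) with hgdef
  have hf0 : ∀ K ω, 0 ≤ f K ω := fun K ω => Set.indicator_nonneg (fun ω _ => hPP0 K ω) ω
  have hg0 : ∀ K ω, 0 ≤ g K ω := fun K ω => Set.indicator_nonneg (fun ω _ => hPP0 K ω) ω
  have intf : ∀ K, Integrable (f K) μ := by
    intro K
    refine Integrable.mono' (integrable_const D)
      ((mPP K).indicator (mA K)).aestronglyMeasurable (ae_of_all _ fun ω => ?_)
    rw [Real.norm_eq_abs, abs_of_nonneg (hf0 K ω)]
    by_cases h : ω ∈ A K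
    · rw [hfdef]; simp only [Set.indicator_of_mem h]; exact hPPle K ω
    · rw [hfdef]; simp only [Set.indicator_of_notMem h]; linarith
  have intg : ∀ K, Integrable (g K) μ := by
    intro K
    refine Integrable.mono' (integrable_const D)
      ((mPP K).indicator (mB K)).aestronglyMeasurable (ae_of_all _ fun ω => ?_)
    rw [Real.norm_eq_abs, abs_of_nonneg (hg0 K ω)]
    by_cases h : ω ∈ B K
    · rw [hgdef]; simp only [Set.indicator_of_mem h]; exact hPPle K ω
    · rw [hgdef]; simp only [Set.indicator_of_notMem h]; linarith
  have mf : ∀ K, Measurable (f K) := fun K => (mPP K).indicator (mA K)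
  -- the one-step supermartingale inequality
  have hstep : ∀ K, K < p →
      (∫ ω, f (K+1) ω ∂μ) + (∫ ω, g (K+1) ω ∂μ) ≤ ∫ ω, f K ω ∂μ := by
    intro K hK
    set jK : Fin p := ⟨K, hK⟩ with hjKdef
    have hPPsucc : ∀ ω, PP (K+1) ω = PP K ω * z jK (κ jK ω) := by
      intro ω
      have hins : Finset.univ.filter (fun j : Fin p => (j : ℕ) < K + 1)
          = insert jK (Finset.univ.filter (fun j : Fin p => (j : ℕ) < K)) := by
        ext j
        simp only [Finset.mem_insert, Finset.mem_filter, Finset.mem_univ, true_and,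
          Nat.lt_succ_iff_lt_or_eq]
        constructor
        · rintro (h | h)
          · exact Or.inr h
          · exact Or.inl (Fin.ext h)
        · rintro (h | h)
          · subst h; exact Or.inr rfl
          · exact Or.inl h
      show Qf (K+1) (fun j => κ j ω) = Qf K (fun j => κ j ω) * z jK (κ jK ω)
      rw [hQfdef]
      simp only
      rw [hins, Finset.prod_insert (by simp [hjKdef])]
      ring
    have hsplitfun : ∀ ω, f (K+1) ω + g (K+1) ω = f K ω * z jK (κ jK ω) := by
      intro ω
      by_cases hA : ω ∈ A K
      · have h1 : ∀ J, J ≤ K → α' * PP J ω < 1 := hA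
        have hfK : f K ω = PP K ω := Set.indicator_of_mem hA _
        by_cases h2 : α' * PP (K+1) ω < 1
        · have hAK1 : ω ∈ A (K+1) := by
            intro J hJ
            rcases Nat.eq_or_lt_of_le hJ with rfl | h
            · exact h2
            · exact h1 J (Nat.lt_succ_iff.mp h)
          have hBK1 : ω ∉ B (K+1) := fun hB => absurd hB.2 (not_le.mpr h2)
          rw [hfdef, hgdef]
          simp only [Set.indicator_of_mem hAK1, Set.indicator_of_notMem hBK1, add_zero]
          rw [Set.indicator_of_mem hA]
          exact hPPsucc ω
        · have hAK1 : ω ∉ A (K+1) := fun hA1 => h2 (hA1 (K+1) le_rfl)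
          have hBK1 : ω ∈ B (K+1) :=
            ⟨fun J hJ => h1 J (Nat.lt_succ_iff.mp hJ), not_lt.mp h2⟩
          rw [hfdef, hgdef]
          simp only [Set.indicator_of_notMem hAK1, Set.indicator_of_mem hBK1, zero_add]
          rw [Set.indicator_of_mem hA]
          exact hPPsucc ω
      · have hAK1 : ω ∉ A (K+1) := fun hA1 => hA (fun J hJ => hA1 J (le_trans hJ (Nat.le_succ K)))
        have hBK1 : ω ∉ B (K+1) := fun hB => hA (fun J hJ => hB.1 J (Nat.lt_succ_of_le hJ))
        have hfK : f K ω = 0 := Set.indicator_of_notMem hA _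
        rw [hfdef, hgdef]
        simp only [Set.indicator_of_notMem hAK1, Set.indicator_of_notMem hBK1, add_zero]
        rw [Set.indicator_of_notMem hA]; ring
    have hZKm : Measurable (fun ω => z jK (κ jK ω)) := measurable_from_top.comp (hκmeas jK)
    have hmul : ∫ ω, f K ω * z jK (κ jK ω) ∂μ ≤ ∫ ω, f K ω ∂μ := by
      by_cases hmem : jK ∈ H0
      · -- independence of the past and the new factor
        set S : Finset {x // x ∈ H0} :=
          Finset.univ.filter (fun s : {x // x ∈ H0} => ((s : Fin p) : ℕ) < K) with hSdef
        set T : Finset {x // x ∈ H0} := {⟨jK, hmem⟩} with hTdef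
        have hST : Disjoint S T := by
          rw [Finset.disjoint_singleton_right, hSdef]
          simp [hjKdef]
        have base := hindep.indepFun_finset S T hST (fun i => hκmeas i)
        set ext : ({x // x ∈ S} → ℕ) → (Fin p → ℕ) := fun y j =>
          if h : j ∈ H0 then
            (if hS : (⟨j, h⟩ : {x // x ∈ H0}) ∈ S then y ⟨⟨j, h⟩, hS⟩ else 0)
          else 0 with hextdef
        have hextm : Measurable ext := by
          refine measurable_pi_lambda _ fun j => ?_
          by_cases h : j ∈ H0
          · by_cases hS : (⟨j, h⟩ : {x // x ∈ H0}) ∈ S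
            · simp only [hextdef, dif_pos h, dif_pos hS]
              exact measurable_pi_apply _
            · simp only [hextdef, dif_pos h, dif_neg hS]
              exact measurable_const
          · simp only [hextdef, dif_neg h]
            exact measurable_const
        set F : (Fin p → ℕ) → ℝ := fun x =>
          if (∀ J, J ≤ K → α' * Qf J x < 1) then Qf K x else 0 with hFdef
        have hFm : Measurable F := by
          refine Measurable.ite ?_ (mQf K) measurable_const
          have : {x : Fin p → ℕ | ∀ J, J ≤ K → α' * Qf J x < 1}
              = ⋂ J ∈ Set.Iic K, {x | α' * Qf J x < 1} := by
            ext x; simp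
          rw [this]
          exact MeasurableSet.biInter (Set.to_countable _) fun J _ =>
            measurableSet_lt (measurable_const.mul (mQf J)) measurable_const
        have hext_eval : ∀ ω (j : Fin p), j ∈ H0 → (j : ℕ) < K →
            ext (fun i : {x // x ∈ S} => κ ((i : {x // x ∈ H0}) : Fin p) ω) j = κ j ω := by
          intro ω j hj hjK
          have hS : (⟨j, hj⟩ : {x // x ∈ H0}) ∈ S := by
            rw [hSdef]; simp [hjK]
          simp only [hextdef, dif_pos hj, dif_pos hS]
        have hkey : f K = (fun y => F (ext y)) ∘
            (fun a (i : {x // x ∈ S}) => κ ((i : {x // x ∈ H0}) : Fin p) a) := by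
          funext ω
          have hQ : ∀ J, J ≤ K →
              Qf J (ext (fun i : {x // x ∈ S} => κ ((i : {x // x ∈ H0}) : Fin p) ω))
                = PP J ω := by
            intro J hJ
            exact hQcong J K hJ _ _ (fun j hj hjK => hext_eval ω j hj hjK)
          show f K ω = F (ext (fun i : {x // x ∈ S} => κ ((i : {x // x ∈ H0}) : Fin p) ω))
          rw [hFdef]
          simp only
          rw [hfdef]
          simp only [Set.indicator_apply]
          have hiff : (ω ∈ A K) = (∀ J, J ≤ K → α' * Qf J
              (ext (fun i : {x // x ∈ S} => κ ((i : {x // x ∈ H0}) : Fin p) ω)) < 1) := by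
            simp only [hAdef, Set.mem_setOf_eq]
            refine propext ⟨fun h J hJ => ?_, fun h J hJ => ?_⟩
            · rw [hQ J hJ]; exact h J hJ
            · rw [← hQ J hJ]; exact h J hJ
          simp only [← hiff, hQ K le_rfl]
        have hψ : (fun ω => z jK (κ jK ω)) = (fun y : {x // x ∈ T} → ℕ =>
            z jK (y ⟨⟨jK, hmem⟩, Finset.mem_singleton_self _⟩)) ∘
            (fun a (i : {x // x ∈ T}) => κ ((i : {x // x ∈ H0}) : Fin p) a) := rfl
        have hψm : Measurable (fun y : {x // x ∈ T} → ℕ =>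
            z jK (y ⟨⟨jK, hmem⟩, Finset.mem_singleton_self _⟩)) :=
          measurable_from_top.comp (measurable_pi_apply _)
        have hIndep : IndepFun (f K) (fun ω => z jK (κ jK ω)) μ := by
          rw [hkey, hψ]
          exact base.comp (hFm.comp hextm) hψm
        have heq := IndepFun.integral_mul_eq_mul_integral hIndep
          (mf K).aestronglyMeasurable hZKm.aestronglyMeasurable
        have : ∫ ω, f K ω * z jK (κ jK ω) ∂μ
            = (∫ ω, f K ω ∂μ) * ∫ ω, z jK (κ jK ω) ∂μ := heq
        rw [this]
        exact mul_le_of_le_one_right (integral_nonneg (hf0 K)) (hzint jK hmem)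
      · simp only [hz1 jK hmem, mul_one, le_refl]
    calc (∫ ω, f (K+1) ω ∂μ) + (∫ ω, g (K+1) ω ∂μ)
        = ∫ ω, (f (K+1) ω + g (K+1) ω) ∂μ := (integral_add (intf _) (intg _)).symm
      _ = ∫ ω, f K ω * z jK (κ jK ω) ∂μ := by simp only [hsplitfun]
      _ ≤ ∫ ω, f K ω ∂μ := hmul
  -- base case
  have hPP0eq : ∀ ω, PP 0 ω = 1 := by
    intro ω
    show Qf 0 _ = 1
    rw [hQfdef]
    simp
  have hf0eq : ∀ ω, f 0 ω = 1 := by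
    intro ω
    have hA0 : ω ∈ A 0 := by
      intro J hJ
      have : J = 0 := Nat.le_zero.mp hJ
      subst this
      rw [hPP0eq ω, mul_one]
      exact hα'1
    rw [hfdef]
    simp only [Set.indicator_of_mem hA0]
    exact hPP0eq ω
  have hint0 : ∫ ω, f 0 ω ∂μ = 1 := by
    rw [show (fun ω => f 0 ω) = fun _ => (1:ℝ) from funext hf0eq]
    simp
  -- telescoping
  have hmain : ∀ K, K ≤ p →
      (∫ ω, f K ω ∂μ) + ∑ J ∈ Finset.Icc 1 K, (∫ ω, g J ω ∂μ) ≤ 1 := by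
    intro K
    induction K with
    | zero =>
        intro _
        rw [Finset.Icc_eq_empty (by omega)]
        simp [hint0]
    | succ K ih =>
        intro hK1
        have hK : K < p := hK1
        have hsum : Finset.Icc 1 (K+1) = insert (K+1) (Finset.Icc 1 K) := by
          ext J
          simp only [Finset.mem_Icc, Finset.mem_insert]
          omega
        have hnotmem : (K+1) ∉ Finset.Icc 1 K := by
          simp only [Finset.mem_Icc]
          omega
        calc (∫ ω, f (K+1) ω ∂μ) + ∑ J ∈ Finset.Icc 1 (K+1), (∫ ω, g J ω ∂μ)
            = ((∫ ω, f (K+1) ω ∂μ) + (∫ ω, g (K+1) ω ∂μ))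
              + ∑ J ∈ Finset.Icc 1 K, (∫ ω, g J ω ∂μ) := by
              rw [hsum, Finset.sum_insert hnotmem]; ring
          _ ≤ (∫ ω, f K ω ∂μ) + ∑ J ∈ Finset.Icc 1 K, (∫ ω, g J ω ∂μ) := by
              have := hstep K hK
              linarith
          _ ≤ 1 := ih (le_of_lt hK)
  -- the hitting-time decomposition
  have hBsub : {ω | ∃ K, K ≤ p ∧ 1 ≤ α' * PP K ω} ⊆ ⋃ J ∈ Finset.Icc 1 p, B J := by
    rintro ω ⟨K, hKp, hKω⟩
    have hex : ∃ K, 1 ≤ α' * PP K ω := ⟨K, hKω⟩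
    have hspec : 1 ≤ α' * PP (Nat.find hex) ω := Nat.find_spec hex
    have hmin : ∀ J, J < Nat.find hex → α' * PP J ω < 1 :=
      fun J hJ => not_le.mp (Nat.find_min hex hJ)
    have hK0le : Nat.find hex ≤ K := Nat.find_min' hex hKω
    have hK0pos : 1 ≤ Nat.find hex := by
      by_contra h
      push_neg at h
      have h0 : Nat.find hex = 0 := by omega
      rw [h0, hPP0eq ω, mul_one] at hspec
      linarith
    exact Set.mem_biUnion (Finset.mem_Icc.mpr ⟨hK0pos, le_trans hK0le hKp⟩)
      ⟨hmin, hspec⟩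
  -- put it together
  have hJb : ∀ J, (μ (B J)).toReal ≤ α' * ∫ ω, g J ω ∂μ := by
    intro J
    have h2 : ∀ ω, (B J).indicator (1 : Ω → ℝ) ω ≤ α' * g J ω := by
      intro ω
      by_cases h : ω ∈ B J
      · rw [Set.indicator_of_mem h, hgdef]
        simp only [Set.indicator_of_mem h, Pi.one_apply]
        exact h.2
      · rw [Set.indicator_of_notMem h, hgdef]
        simp only [Set.indicator_of_notMem h, mul_zero, le_refl]
    calc (μ (B J)).toReal = ∫ ω, (B J).indicator (1 : Ω → ℝ) ω ∂μ :=
          (integral_indicator_one (mB J)).symm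
      _ ≤ ∫ ω, α' * g J ω ∂μ :=
          integral_mono ((integrable_const (1:ℝ)).indicator (mB J))
            ((intg J).const_mul α') h2
      _ = α' * ∫ ω, g J ω ∂μ := integral_const_mul α' _
  calc μ {ω | ∃ K, K ≤ p ∧
        1 ≤ α' * ∏ j ∈ Finset.univ.filter (fun j : Fin p => (j : ℕ) < K), z j (κ j ω)}
      ≤ μ (⋃ J ∈ Finset.Icc 1 p, B J) := measure_mono hBsub
    _ ≤ ∑ J ∈ Finset.Icc 1 p, μ (B J) := measure_biUnion_finset_le _ _
    _ ≤ ENNReal.ofReal α' := by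
        refine (ENNReal.le_ofReal_iff_toReal_le ?_ hα'0.le).mpr ?_
        · exact (ENNReal.sum_lt_top.mpr fun J _ => measure_lt_top μ _).ne
        · rw [ENNReal.toReal_sum (fun J _ => measure_ne_top μ _)]
          calc ∑ J ∈ Finset.Icc 1 p, (μ (B J)).toReal
              ≤ ∑ J ∈ Finset.Icc 1 p, α' * ∫ ω, g J ω ∂μ :=
                Finset.sum_le_sum (fun J _ => hJb J)
            _ = α' * ∑ J ∈ Finset.Icc 1 p, ∫ ω, g J ω ∂μ := (Finset.mul_sum _ _ _).symm
            _ ≤ α' * 1 := by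
                refine mul_le_mul_of_nonneg_left ?_ hα'0.le
                have h1 := hmain p le_rfl
                have h2 : 0 ≤ ∫ ω, f p ω ∂μ := integral_nonneg (hf0 p)
                linarith
            _ = α' := mul_one α'

set_option maxHeartbeats 1000000 in
/-- **Key lemma (uniform bound on the wFDP/V ratio).**
With `x* = (-c·log α) · max_{m ∈ H₀} [ ω_m / log(ω_m - (ω_m - 1)·α^c) ]`, the
probability that there exists `k` with `wFDP(R_k) ≥ x* · V(R_k, c)` is at most
`α`, where `V(R_k, c) = (c⁻¹ + #{j ≤ k : κ_j > 1}) / max(C(R_k), 1)`. -/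
theorem cheap_knockoffs_key_lemma
    {Ω : Type*} [MeasurableSpace Ω] (μ : Measure Ω) [IsProbabilityMeasure μ]
    (p : ℕ) (hp : 0 < p) (w : Fin p → ℕ) (hw : ∀ j, 2 ≤ w j)
    (H0 : Finset (Fin p)) (hH0 : H0.Nonempty)
    (κ : Fin p → Ω → ℕ)
    (hκmeas : ∀ j, Measurable (κ j))
    (hrange : ∀ j ω₀, κ j ω₀ ∈ Finset.Icc 1 (w j))
    (hindep : iIndepFun (m := fun _ : H0 => (inferInstance : MeasurableSpace ℕ))
      (fun j : H0 => κ j) μ)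
    (hunif : ∀ j ∈ H0, ∀ i ∈ Finset.Icc 1 (w j),
      μ {ω₀ | κ j ω₀ = i} = ENNReal.ofReal (1 / (w j : ℝ)))
    (α c : ℝ) (hα : α ∈ Set.Ioo (0 : ℝ) 1) (hc : 0 < c) :
    μ {ω₀ | ∃ k : Fin p,
        ((- c * Real.log α) *
            (H0.sup' hH0 (fun m =>
              (w m : ℝ) / Real.log ((w m : ℝ) - ((w m : ℝ) - 1) * α ^ c)))) *
          ((c⁻¹ + (Finset.univ.filter (fun j => j ≤ k ∧ 1 < κ j ω₀)).card) /
            max (∑ j ∈ Finset.univ.filter (fun j => j ≤ k ∧ κ j ω₀ = 1), (w j : ℝ)) 1) ≤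
        (∑ j ∈ Finset.univ.filter (fun j => j ≤ k ∧ κ j ω₀ = 1 ∧ j ∈ H0), (w j : ℝ)) /
          max (∑ j ∈ Finset.univ.filter (fun j => j ≤ k ∧ κ j ω₀ = 1), (w j : ℝ)) 1} ≤
      ENNReal.ofReal α := by
  classical
  obtain ⟨hα0, hα1⟩ := hα
  have hlogα : Real.log α < 0 := Real.log_neg hα0 hα1
  have hαc1 : α ^ c < 1 := Real.rpow_lt_one hα0.le hα1 hc
  have hαc0 : 0 < α ^ c := Real.rpow_pos_of_pos hα0 c
  have hb1 : ∀ m : Fin p, (1:ℝ) < (w m : ℝ) - ((w m : ℝ) - 1) * α ^ c := by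
    intro m
    have hwm : (2:ℝ) ≤ (w m : ℝ) := by exact_mod_cast hw m
    nlinarith
  have hlogb : ∀ m : Fin p, 0 < Real.log ((w m : ℝ) - ((w m : ℝ) - 1) * α ^ c) :=
    fun m => Real.log_pos (hb1 m)
  set L : ℝ := H0.sup' hH0 (fun m =>
    (w m : ℝ) / Real.log ((w m : ℝ) - ((w m : ℝ) - 1) * α ^ c)) with hLdef
  have hL : 0 < L := by
    obtain ⟨m, hm⟩ := hH0
    refine lt_of_lt_of_le ?_ (Finset.le_sup' (fun m =>
      (w m : ℝ) / Real.log ((w m : ℝ) - ((w m : ℝ) - 1) * α ^ c)) hm)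
    have hwm : (2:ℝ) ≤ (w m : ℝ) := by exact_mod_cast hw m
    exact div_pos (by linarith) (hlogb m)
  have hkey : ∀ m ∈ H0,
      Real.exp (L⁻¹ * (w m : ℝ)) ≤ (w m : ℝ) - ((w m : ℝ) - 1) * α ^ c := by
    intro m hm
    have hsup : (w m : ℝ) / Real.log ((w m : ℝ) - ((w m : ℝ) - 1) * α ^ c) ≤ L :=
      Finset.le_sup' (fun m =>
        (w m : ℝ) / Real.log ((w m : ℝ) - ((w m : ℝ) - 1) * α ^ c)) hm
    have h1 : (w m : ℝ) ≤ L * Real.log ((w m : ℝ) - ((w m : ℝ) - 1) * α ^ c) := by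
      rw [div_le_iff₀ (hlogb m)] at hsup; linarith
    have h2 : L⁻¹ * (w m : ℝ) ≤ Real.log ((w m : ℝ) - ((w m : ℝ) - 1) * α ^ c) := by
      rw [inv_mul_le_iff₀ hL]; linarith
    calc Real.exp (L⁻¹ * (w m : ℝ))
        ≤ Real.exp (Real.log ((w m : ℝ) - ((w m : ℝ) - 1) * α ^ c)) :=
          Real.exp_le_exp.mpr h2
      _ = (w m : ℝ) - ((w m : ℝ) - 1) * α ^ c := Real.exp_log (lt_trans one_pos (hb1 m))
  -- the exponential weights
  set z : Fin p → ℕ → ℝ := fun j v =>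
    if j ∈ H0 then (if v = 1 then Real.exp (L⁻¹ * (w j : ℝ))
      else Real.exp (Real.log α * c)) else 1 with hzdef
  have hz0 : ∀ j v, 0 ≤ z j v := by
    intro j v
    rw [hzdef]; dsimp only
    split_ifs <;> positivity
  have hzb : ∀ j, ∃ C : ℝ, ∀ v, z j v ≤ C := by
    intro j
    refine ⟨Real.exp (L⁻¹ * (w j : ℝ)) + Real.exp (Real.log α * c) + 1, fun v => ?_⟩
    have e1 := Real.exp_pos (L⁻¹ * (w j : ℝ))
    have e2 := Real.exp_pos (Real.log α * c)
    rw [hzdef]; dsimp only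
    split_ifs <;> linarith
  have hz1 : ∀ j, j ∉ H0 → ∀ v, z j v = 1 := by
    intro j hj v
    rw [hzdef]; dsimp only
    rw [if_neg hj]
  have hzint : ∀ j, j ∈ H0 → ∫ ω, z j (κ j ω) ∂μ ≤ 1 := by
    intro j hj
    have hset : MeasurableSet {ω₀ | κ j ω₀ = 1} := (hκmeas j) (measurableSet_singleton 1)
    have hfun : (fun ω => z j (κ j ω)) = fun ω => Real.exp (Real.log α * c)
        + {ω₀ | κ j ω₀ = 1}.indicator
            (fun _ => Real.exp (L⁻¹ * (w j : ℝ)) - Real.exp (Real.log α * c)) ω := by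
      funext ω
      rw [hzdef]; dsimp only
      rw [if_pos hj]
      by_cases h : κ j ω = 1
      · rw [if_pos h, Set.indicator_of_mem (show ω ∈ {ω₀ | κ j ω₀ = 1} from h)]; ring
      · rw [if_neg h, Set.indicator_of_notMem (show ω ∉ {ω₀ | κ j ω₀ = 1} from h)]; ring
    have hμ1 : (μ {ω₀ | κ j ω₀ = 1}).toReal = 1 / (w j : ℝ) := by
      rw [hunif j hj 1 (Finset.mem_Icc.mpr ⟨le_refl 1, le_trans one_le_two (hw j)⟩)]
      have : (0:ℝ) ≤ 1 / (w j : ℝ) := by positivity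
      exact ENNReal.toReal_ofReal this
    have hI : ∫ ω, z j (κ j ω) ∂μ
        = Real.exp (Real.log α * c) + 1 / (w j : ℝ)
          * (Real.exp (L⁻¹ * (w j : ℝ)) - Real.exp (Real.log α * c)) := by
      rw [hfun, integral_add (integrable_const _) ((integrable_const _).indicator hset),
        integral_const, integral_indicator_const _ hset, measureReal_def, measureReal_def, hμ1, measure_univ]
      simp only [ENNReal.toReal_one, one_smul, smul_eq_mul]
      ring
    rw [hI]
    have hrpow : α ^ c = Real.exp (Real.log α * c) := Real.rpow_def_of_pos hα0 c
    have hk := hkey j hj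
    have hw2 : (2:ℝ) ≤ (w j : ℝ) := by exact_mod_cast hw j
    have hwpos : (0:ℝ) < (w j : ℝ) := by linarith
    rw [← hrpow]
    have h8 : 1 / (w j : ℝ) * (Real.exp (L⁻¹ * (w j : ℝ)) - α ^ c)
        ≤ 1 / (w j : ℝ) * ((((w j : ℝ) - ((w j : ℝ) - 1) * α ^ c)) - α ^ c) :=
      mul_le_mul_of_nonneg_left (by linarith) (by positivity)
    have h9 : 1 / (w j : ℝ) * ((((w j : ℝ) - ((w j : ℝ) - 1) * α ^ c)) - α ^ c)
        = 1 - α ^ c := by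
      field_simp
      ring
    linarith
  have happ := ville_aux μ p H0 κ hκmeas hindep z hz0 hzb hz1 hzint α hα0 hα1
  refine le_trans (measure_mono ?_) happ
  intro ω₀ hω₀
  obtain ⟨k, hk⟩ := hω₀
  refine ⟨(k : ℕ) + 1, k.isLt, ?_⟩
  -- clear the common denominator
  set Dd : ℝ := max (∑ j ∈ Finset.univ.filter (fun j => j ≤ k ∧ κ j ω₀ = 1), (w j : ℝ)) 1
    with hDdef
  have hD : 0 < Dd := lt_of_lt_of_le one_pos (le_max_right _ _)
  set Sv : ℝ := ∑ j ∈ Finset.univ.filter (fun j => j ≤ k ∧ κ j ω₀ = 1 ∧ j ∈ H0), (w j : ℝ)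
    with hSdef
  set Nc : ℕ := (Finset.univ.filter (fun j => j ≤ k ∧ 1 < κ j ω₀)).card with hNdef
  have hk' : ((- c * Real.log α) * L) * (c⁻¹ + (Nc : ℝ)) ≤ Sv := by
    have h := hk
    rw [← mul_div_assoc] at h
    have h2 := (div_le_div_iff₀ hD hD).mp h
    exact le_of_mul_le_mul_right h2 hD
  -- rewrite the product as an exponential
  set q : Fin p → ℝ := fun j =>
    if j ∈ H0 then (if κ j ω₀ = 1 then L⁻¹ * (w j : ℝ) else Real.log α * c) else 0
    with hqdef
  have hzq : ∀ j, z j (κ j ω₀) = Real.exp (q j) := by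
    intro j
    rw [hzdef, hqdef]; dsimp only
    by_cases h1 : j ∈ H0
    · rw [if_pos h1, if_pos h1]
      by_cases h2 : κ j ω₀ = 1
      · rw [if_pos h2, if_pos h2]
      · rw [if_neg h2, if_neg h2]
    · rw [if_neg h1, if_neg h1, Real.exp_zero]
  have hprod : ∏ j ∈ Finset.univ.filter (fun j : Fin p => (j : ℕ) < (k : ℕ) + 1),
      z j (κ j ω₀) = Real.exp (∑ j ∈ Finset.univ.filter
        (fun j : Fin p => (j : ℕ) < (k : ℕ) + 1), q j) := by
    rw [Real.exp_sum]
    exact Finset.prod_congr rfl fun j _ => hzq j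
  rw [hprod]
  rw [show α = Real.exp (Real.log α) from (Real.exp_log hα0).symm, ← Real.exp_add]
  apply Real.one_le_exp
  -- compute the sum
  have hfilter : ∀ j : Fin p, ((j : ℕ) < (k : ℕ) + 1) ↔ j ≤ k := by
    intro j
    rw [Nat.lt_succ_iff, Fin.le_def]
  set Fk : Finset (Fin p) := Finset.univ.filter (fun j : Fin p => (j : ℕ) < (k : ℕ) + 1)
    with hFkdef
  set F1 : Finset (Fin p) := (Fk.filter (fun j => j ∈ H0)).filter (fun j => κ j ω₀ = 1)
    with hF1def
  set F2 : Finset (Fin p) := (Fk.filter (fun j => j ∈ H0)).filter (fun j => ¬ κ j ω₀ = 1)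
    with hF2def
  have hsum : ∑ j ∈ Fk, q j
      = ∑ j ∈ F1, (L⁻¹ * (w j : ℝ)) + (F2.card : ℝ) * (Real.log α * c) := by
    rw [← Finset.sum_filter_add_sum_filter_not Fk (fun j => j ∈ H0) q]
    have hz : ∑ j ∈ Fk.filter (fun j => ¬ j ∈ H0), q j = 0 :=
      Finset.sum_eq_zero fun j hj => by
        rw [hqdef]; dsimp only
        rw [if_neg (Finset.mem_filter.mp hj).2]
    rw [hz, add_zero,
      ← Finset.sum_filter_add_sum_filter_not (Fk.filter (fun j => j ∈ H0))
        (fun j => κ j ω₀ = 1) q]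
    congr 1
    · refine Finset.sum_congr rfl fun j hj => ?_
      rcases Finset.mem_filter.mp hj with ⟨hj1, hj2⟩
      rcases Finset.mem_filter.mp hj1 with ⟨-, hj3⟩
      rw [hqdef]; dsimp only
      rw [if_pos hj3, if_pos hj2]
    · rw [Finset.sum_congr rfl (fun j hj => ?_), Finset.sum_const, nsmul_eq_mul]
      rcases Finset.mem_filter.mp hj with ⟨hj1, hj2⟩
      rcases Finset.mem_filter.mp hj1 with ⟨-, hj3⟩
      rw [hqdef]; dsimp only
      rw [if_pos hj3, if_neg hj2]
  have hF1eq : F1 = Finset.univ.filter (fun j => j ≤ k ∧ κ j ω₀ = 1 ∧ j ∈ H0) := by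
    ext j
    simp only [hF1def, hFkdef, Finset.mem_filter, Finset.mem_univ, true_and, hfilter j]
    tauto
  have hS1 : ∑ j ∈ F1, (L⁻¹ * (w j : ℝ)) = L⁻¹ * Sv := by
    rw [hSdef, ← hF1eq, Finset.mul_sum]
  have hF2sub : F2 ⊆ Finset.univ.filter (fun j => j ≤ k ∧ 1 < κ j ω₀) := by
    intro j hj
    rcases Finset.mem_filter.mp hj with ⟨hj1, hj2⟩
    rcases Finset.mem_filter.mp hj1 with ⟨hj0, -⟩
    rcases Finset.mem_filter.mp hj0 with ⟨-, hj4⟩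
    refine Finset.mem_filter.mpr ⟨Finset.mem_univ _, (hfilter j).mp hj4, ?_⟩
    have h1 : 1 ≤ κ j ω₀ := (Finset.mem_Icc.mp (hrange j ω₀)).1
    exact lt_of_le_of_ne h1 (Ne.symm hj2)
  have hcard : (F2.card : ℝ) ≤ (Nc : ℝ) := by
    rw [hNdef]
    exact_mod_cast Finset.card_le_card hF2sub
  rw [hsum, hS1]
  -- final arithmetic
  have hLinv : (0:ℝ) ≤ L⁻¹ := by positivity
  have h5 : L⁻¹ * (((- c * Real.log α) * L) * (c⁻¹ + (Nc : ℝ))) ≤ L⁻¹ * Sv :=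
    mul_le_mul_of_nonneg_left hk' hLinv
  have h6 : L⁻¹ * (((- c * Real.log α) * L) * (c⁻¹ + (Nc : ℝ)))
      = - Real.log α + (- c * Real.log α) * (Nc : ℝ) := by
    have hLne : L ≠ 0 := ne_of_gt hL
    have hcne : c ≠ 0 := ne_of_gt hc
    field_simp
    ring
  have h7 : (Nc : ℝ) * (Real.log α * c) ≤ (F2.card : ℝ) * (Real.log α * c) := by
    apply mul_le_mul_of_nonpos_right hcard
    nlinarith
  nlinarith [h5, h6, h7]
end

section
/- Let α ∈ (0,1), c > 0, assume H₀ is nonempty, let θ* = min_{m ∈ H₀} [ ω_m^{-1} · log(ω_m − (ω_m − 1)·α^c) ], let θ satisfy 0 < θ ≤ θ*, and set x = −c·log α / θ. Define Z_0 = 1 and, for k ∈ {1,…,p}, Z_k = exp( θ · Σ_{j ≤ k, j ∈ H₀} ( ω_j·1{κ_j = 1} − x·1{κ_j > 1} ) ). Let F_k be the σ-algebra generated by {κ_j : j ≤ k, j ∈ H₀} (with F_0 the trivial σ-algebra). Then (Z_k)_{k=0}^{p} is a supermartingale with respect to (F_k)_{k=0}^{p}: for each k ∈ {1,…,p}, E[Z_k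 | F_{k−1}] ≤ Z_{k−1} almost surely. -/
open MeasureTheory ProbabilityTheory Finset

set_option maxHeartbeats 1000000 in
/-- **Supermartingale property of the exponential process.**
Let `θ* = min_{m ∈ H₀} [ ω_m⁻¹ · log(ω_m - (ω_m - 1)·α^c) ]`, let `0 < θ ≤ θ*`,
and `x = -c·log α / θ`. With `Z 0 = 1` and
`Z k = exp( θ · ∑_{j ≤ k, j ∈ H₀} ( ω_j·1{κ_j = 1} - x·1{κ_j > 1} ) )`, and `F k`
the σ-algebra generated by `{κ_j : j ≤ k, j ∈ H₀}`, the process `(Z k)_{k=0}^p`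
is a supermartingale: for every `k ∈ {1,…,p}`, `E[Z k | F (k-1)] ≤ Z (k-1)` a.s. -/
theorem cheap_knockoffs_supermartingale
    {Ω : Type*} [MeasurableSpace Ω] (μ : Measure Ω) [IsProbabilityMeasure μ]
    (p : ℕ) (hp : 0 < p) (w : Fin p → ℕ) (hw : ∀ j, 2 ≤ w j)
    (H0 : Finset (Fin p)) (hH0 : H0.Nonempty)
    (κ : Fin p → Ω → ℕ)
    (hκmeas : ∀ j, Measurable (κ j))
    (hrange : ∀ j ω₀, κ j ω₀ ∈ Finset.Icc 1 (w j))
    (hindep : iIndepFun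
      (fun j : H0 => κ j) μ)
    (hunif : ∀ j ∈ H0, ∀ i ∈ Finset.Icc 1 (w j),
      μ {ω₀ | κ j ω₀ = i} = ENNReal.ofReal (1 / (w j : ℝ)))
    (α c : ℝ) (hα : α ∈ Set.Ioo (0 : ℝ) 1) (hc : 0 < c)
    (θ : ℝ) (hθpos : 0 < θ)
    (hθle : θ ≤ H0.inf' hH0 (fun m =>
      ((w m : ℝ))⁻¹ * Real.log ((w m : ℝ) - ((w m : ℝ) - 1) * α ^ c)))
    (x : ℝ) (hx : x = - c * Real.log α / θ)
    (Z : ℕ → Ω → ℝ)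
    (hZ : ∀ k ω₀, Z k ω₀ = Real.exp (θ *
      ∑ j ∈ Finset.univ.filter (fun j : Fin p => (j : ℕ) < k ∧ j ∈ H0),
        ((w j : ℝ) * (if κ j ω₀ = 1 then 1 else 0)
          - x * (if 1 < κ j ω₀ then 1 else 0))))
    (F : ℕ → MeasurableSpace Ω)
    (hF : ∀ k, F k = ⨆ j ∈ Finset.univ.filter (fun j : Fin p => (j : ℕ) < k ∧ j ∈ H0),
      MeasurableSpace.comap (κ j) inferInstance) :
    ∀ k, 1 ≤ k → k ≤ p → μ[Z k | F (k - 1)] ≤ᵐ[μ] Z (k - 1) := by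
  classical
  have hαpos := hα.1
  have hα1 := hα.2
  intro k hk1 hkp
  obtain ⟨n, rfl⟩ : ∃ n, k = n + 1 := ⟨k - 1, by omega⟩
  have hnp : n < p := by omega
  simp only [Nat.add_sub_cancel]
  -- summand
  set t : Fin p → Ω → ℝ := fun j ω₀ =>
    ((w j : ℝ) * (if κ j ω₀ = 1 then 1 else 0) - x * (if 1 < κ j ω₀ then 1 else 0)) with ht
  have hZ' : ∀ m, Z m = fun ω₀ => Real.exp (θ * ∑ j ∈ Finset.univ.filter
      (fun j : Fin p => (j : ℕ) < m ∧ j ∈ H0), t j ω₀) := by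
    intro m; funext ω₀; simp only [ht]; exact hZ m ω₀
  -- σ-algebra facts
  have hcomap_le : ∀ j : Fin p,
      MeasurableSpace.comap (κ j) inferInstance ≤ ‹MeasurableSpace Ω› :=
    fun j => (hκmeas j).comap_le
  have hFle : ∀ m, F m ≤ ‹MeasurableSpace Ω› := by
    intro m; rw [hF]; exact iSup₂_le fun j _ => hcomap_le j
  haveI hσ : SigmaFinite (μ.trim (hFle n)) := inferInstance
  -- measurability
  have ht_meas : ∀ j : Fin p,
      Measurable[MeasurableSpace.comap (κ j) inferInstance] (t j) := by
    intro j
    have h1 : Measurable[MeasurableSpace.comap (κ j) inferInstance] (κ j) :=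
      Measurable.of_comap_le le_rfl
    exact (measurable_from_top (f := fun i : ℕ =>
      (w j : ℝ) * (if i = 1 then 1 else 0) - x * (if 1 < i then 1 else 0))).comp h1
  have hZmeasF : ∀ m, Measurable[F m] (Z m) := by
    intro m
    rw [hZ' m]
    refine Measurable.exp (Measurable.const_mul (Finset.measurable_sum _ fun j hj => ?_) θ)
    have hle : MeasurableSpace.comap (κ j) inferInstance ≤ F m := by
      rw [hF]
      exact le_iSup₂ (f := fun (j : Fin p)
        (_ : j ∈ Finset.univ.filter (fun j : Fin p => (j : ℕ) < m ∧ j ∈ H0)) =>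
        MeasurableSpace.comap (κ j) inferInstance) j hj
    exact (ht_meas j).mono hle le_rfl
  -- bounds
  have hZpos : ∀ m ω₀, 0 < Z m ω₀ := fun m ω₀ => by rw [hZ]; exact Real.exp_pos _
  have htbd : ∀ j ω₀, |t j ω₀| ≤ (w j : ℝ) + |x| := by
    intro j ω₀
    have h1 : (0:ℝ) ≤ (w j : ℝ) := Nat.cast_nonneg _
    have h2 := le_abs_self x
    have h3 := neg_abs_le x
    simp only [ht]
    split_ifs <;> rw [abs_le] <;> constructor <;> nlinarith
  have hZbd : ∀ m ω₀, |Z m ω₀| ≤ Real.exp (|θ| * ∑ j : Fin p, ((w j : ℝ) + |x|)) := by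
    intro m ω₀
    rw [hZ, abs_of_pos (Real.exp_pos _)]
    apply Real.exp_le_exp.mpr
    have habs : |θ * ∑ j ∈ Finset.univ.filter (fun j : Fin p => (j : ℕ) < m ∧ j ∈ H0),
        ((w j : ℝ) * (if κ j ω₀ = 1 then 1 else 0) - x * (if 1 < κ j ω₀ then 1 else 0))|
        ≤ |θ| * ∑ j : Fin p, ((w j : ℝ) + |x|) := by
      rw [abs_mul]
      refine mul_le_mul_of_nonneg_left ?_ (abs_nonneg θ)
      refine (Finset.abs_sum_le_sum_abs _ _).trans ?_
      refine (Finset.sum_le_sum (fun j _ => htbd j ω₀)).trans ?_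
      refine Finset.sum_le_sum_of_subset_of_nonneg (Finset.filter_subset _ _) ?_
      intro j _ _
      positivity
    exact (le_abs_self _).trans habs
  have hZint : ∀ m, Integrable (Z m) μ := by
    intro m
    refine Integrable.mono'
      (integrable_const (Real.exp (|θ| * ∑ j : Fin p, ((w j : ℝ) + |x|))))
      (((hZmeasF m).mono (hFle m) le_rfl).aestronglyMeasurable)
      (Filter.Eventually.of_forall fun ω₀ => ?_)
    rw [Real.norm_eq_abs]
    exact hZbd m ω₀
  set j₀ : Fin p := ⟨n, hnp⟩ with hj₀def
  by_cases hj₀ : j₀ ∈ H0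
  · -- j₀ ∈ H0 : real work
    have hfins : Finset.univ.filter (fun j : Fin p => (j : ℕ) < n + 1 ∧ j ∈ H0)
        = insert j₀ (Finset.univ.filter (fun j : Fin p => (j : ℕ) < n ∧ j ∈ H0)) := by
      ext j
      simp only [Finset.mem_insert, Finset.mem_filter, Finset.mem_univ, true_and]
      constructor
      · rintro ⟨hjlt, hjH⟩
        rcases Nat.lt_succ_iff_lt_or_eq.mp hjlt with h | h
        · exact Or.inr ⟨h, hjH⟩
        · exact Or.inl (Fin.ext h)
      · rintro (rfl | ⟨h1, h2⟩)
        · exact ⟨Nat.lt_succ_self _, hj₀⟩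
        · exact ⟨Nat.lt_succ_of_lt h1, h2⟩
    have hj₀nm : j₀ ∉ Finset.univ.filter (fun j : Fin p => (j : ℕ) < n ∧ j ∈ H0) := by
      simp [hj₀def]
    set g : Ω → ℝ := fun ω₀ => Real.exp (θ * t j₀ ω₀) with hg
    have hZsplit : Z (n + 1) = Z n * g := by
      funext ω₀
      simp only [hZ' (n + 1), hZ' n, Pi.mul_apply, hg]
      rw [hfins, Finset.sum_insert hj₀nm, mul_add, Real.exp_add]
      ring
    have hg_meas₀ : Measurable[MeasurableSpace.comap (κ j₀) inferInstance] g := by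
      simp only [hg]
      exact Measurable.exp (Measurable.const_mul (ht_meas j₀) θ)
    have hg_meas : Measurable g := hg_meas₀.mono (hcomap_le j₀) le_rfl
    have hg_bd : ∀ ω₀, ‖g ω₀‖ ≤ Real.exp (|θ| * ((w j₀ : ℝ) + |x|)) := by
      intro ω₀
      rw [hg, Real.norm_eq_abs, abs_of_pos (Real.exp_pos _)]
      apply Real.exp_le_exp.mpr
      calc θ * t j₀ ω₀ ≤ |θ * t j₀ ω₀| := le_abs_self _
        _ = |θ| * |t j₀ ω₀| := abs_mul _ _
        _ ≤ |θ| * ((w j₀ : ℝ) + |x|) :=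
            mul_le_mul_of_nonneg_left (htbd j₀ ω₀) (abs_nonneg θ)
    have hg_int : Integrable g μ :=
      Integrable.mono' (integrable_const _) hg_meas.aestronglyMeasurable
        (Filter.Eventually.of_forall hg_bd)
    have hZng_int : Integrable (Z n * g) μ := by rw [← hZsplit]; exact hZint _
    have step1 : μ[Z (n + 1)|F n] =ᵐ[μ] Z n * μ[g|F n] := by
      rw [hZsplit]
      exact condExp_mul_of_stronglyMeasurable_left ((hZmeasF n).stronglyMeasurable) hZng_int hg_int
    -- independence
    have hiIndep : iIndep (fun i : H0 =>
        MeasurableSpace.comap (κ (i : Fin p)) inferInstance) μ := hindep.iIndep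
    set tset : Set H0 := {i : H0 | ((i : Fin p) : ℕ) < n} with htset
    have hFn_eq : F n = ⨆ i ∈ tset,
        MeasurableSpace.comap (κ (i : Fin p)) inferInstance := by
      rw [hF]
      apply le_antisymm
      · refine iSup₂_le fun j hj => ?_
        rw [Finset.mem_filter] at hj
        exact le_iSup₂ (f := fun (i : H0) (_ : i ∈ tset) =>
          MeasurableSpace.comap (κ (i : Fin p)) inferInstance) ⟨j, hj.2.2⟩ hj.2.1
      · refine iSup₂_le fun i hi => ?_
        exact le_iSup₂ (f := fun (j : Fin p)
          (_ : j ∈ Finset.univ.filter (fun j : Fin p => (j : ℕ) < n ∧ j ∈ H0)) =>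
          MeasurableSpace.comap (κ j) inferInstance) (i : Fin p)
          (by simp only [Finset.mem_filter, Finset.mem_univ, true_and]
              exact ⟨hi, i.2⟩)
    have hindp : Indep (MeasurableSpace.comap (κ j₀) inferInstance) (F n) μ := by
      have h := (indep_biSup_compl (fun i : H0 => hcomap_le (i : Fin p)) hiIndep tset).symm
      rw [← hFn_eq] at h
      refine indep_of_indep_of_le_left h ?_
      exact le_iSup₂ (f := fun (i : H0) (_ : i ∈ tsetᶜ) =>
        MeasurableSpace.comap (κ (i : Fin p)) inferInstance) (⟨j₀, hj₀⟩ : H0)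
        (by simp [htset, hj₀def])
    have step2 : μ[g|F n] =ᵐ[μ] fun _ => ∫ ω₀, g ω₀ ∂μ :=
      condExp_indep_eq (hcomap_le j₀) (hFle n) hg_meas₀.stronglyMeasurable hindp
    -- integral computation
    set A : Set Ω := {ω₀ | κ j₀ ω₀ = 1} with hA
    have hAmeas : MeasurableSet A := hκmeas j₀ (measurableSet_singleton 1)
    have hwj : (2:ℝ) ≤ (w j₀ : ℝ) := by exact_mod_cast hw j₀
    have hwpos : (0:ℝ) < (w j₀ : ℝ) := by linarith
    have hμA : μ A = ENNReal.ofReal (1 / (w j₀ : ℝ)) :=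
      hunif j₀ hj₀ 1 (Finset.mem_Icc.mpr ⟨le_refl 1, by have := hw j₀; omega⟩)
    have hgdef : ∀ ω₀, g ω₀ = if κ j₀ ω₀ = 1 then Real.exp (θ * (w j₀ : ℝ))
        else Real.exp (-(θ * x)) := by
      intro ω₀
      have hr := hrange j₀ ω₀
      rw [Finset.mem_Icc] at hr
      by_cases h : κ j₀ ω₀ = 1
      · have h2 : ¬ (1 < κ j₀ ω₀) := by omega
        simp [hg, ht, h, h2]
      · have h1 : 1 < κ j₀ ω₀ := by omega
        have := h1
        simp only [hg, ht, if_neg h, if_pos h1, if_neg h]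
        norm_num
    have hgsplit : g = fun ω₀ => Set.indicator A (fun _ => Real.exp (θ * (w j₀ : ℝ))) ω₀
        + Set.indicator Aᶜ (fun _ => Real.exp (-(θ * x))) ω₀ := by
      funext ω₀
      by_cases h : ω₀ ∈ A
      · rw [Set.indicator_of_mem h, Set.indicator_of_notMem (by simpa using h),
          hgdef ω₀, if_pos (show κ j₀ ω₀ = 1 from h)]
        ring
      · rw [Set.indicator_of_notMem h, Set.indicator_of_mem (by simpa using h),
          hgdef ω₀, if_neg (show ¬ κ j₀ ω₀ = 1 from h)]
        ring
    have hgint_eq : ∫ ω₀, g ω₀ ∂μ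
        = Real.exp (θ * (w j₀ : ℝ)) * (μ A).toReal
          + Real.exp (-(θ * x)) * (μ Aᶜ).toReal := by
      rw [hgsplit, integral_add ((integrable_const _).indicator hAmeas)
        ((integrable_const _).indicator hAmeas.compl),
        integral_indicator_const _ hAmeas, integral_indicator_const _ hAmeas.compl]
      simp [smul_eq_mul, mul_comm, measureReal_def]
    have hAval : (μ A).toReal = 1 / (w j₀ : ℝ) := by
      rw [hμA, ENNReal.toReal_ofReal (by positivity)]
    have hAc : (μ Aᶜ).toReal = 1 - 1 / (w j₀ : ℝ) := by
      rw [measure_compl hAmeas (measure_ne_top μ A), measure_univ, hμA,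
        ENNReal.toReal_sub_of_le (ENNReal.ofReal_le_one.mpr (by
          rw [div_le_one hwpos]; linarith)) ENNReal.one_ne_top,
        ENNReal.toReal_one, ENNReal.toReal_ofReal (by positivity)]
    have hxθ : -(θ * x) = c * Real.log α := by
      rw [hx]; field_simp
    have he2 : Real.exp (-(θ * x)) = α ^ c := by
      rw [hxθ, ← Real.log_rpow hαpos, Real.exp_log (Real.rpow_pos_of_pos hαpos c)]
    have hαc1 : α ^ c ≤ 1 := Real.rpow_le_one hαpos.le hα1.le hc.le
    have hαcpos : 0 < α ^ c := Real.rpow_pos_of_pos hαpos c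
    have hLpos : (0:ℝ) < (w j₀ : ℝ) - ((w j₀ : ℝ) - 1) * α ^ c := by nlinarith
    have hθj : θ ≤ ((w j₀ : ℝ))⁻¹ *
        Real.log ((w j₀ : ℝ) - ((w j₀ : ℝ) - 1) * α ^ c) :=
      hθle.trans (Finset.inf'_le _ hj₀)
    have hexp : Real.exp (θ * (w j₀ : ℝ)) ≤ (w j₀ : ℝ) - ((w j₀ : ℝ) - 1) * α ^ c := by
      rw [← Real.exp_log hLpos]
      apply Real.exp_le_exp.mpr
      have h1 := mul_le_mul_of_nonneg_right hθj hwpos.le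
      calc θ * (w j₀ : ℝ)
          ≤ (((w j₀ : ℝ))⁻¹ * Real.log ((w j₀ : ℝ) - ((w j₀ : ℝ) - 1) * α ^ c))
            * (w j₀ : ℝ) := h1
        _ = Real.log ((w j₀ : ℝ) - ((w j₀ : ℝ) - 1) * α ^ c) := by
            field_simp
    have hint_le : ∫ ω₀, g ω₀ ∂μ ≤ 1 := by
      rw [hgint_eq, hAval, hAc, he2]
      have h1 : Real.exp (θ * (w j₀ : ℝ)) * (1 / (w j₀ : ℝ))
          ≤ ((w j₀ : ℝ) - ((w j₀ : ℝ) - 1) * α ^ c) * (1 / (w j₀ : ℝ)) :=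
        mul_le_mul_of_nonneg_right hexp (by positivity)
      have h2 : ((w j₀ : ℝ) - ((w j₀ : ℝ) - 1) * α ^ c) * (1 / (w j₀ : ℝ))
          + α ^ c * (1 - 1 / (w j₀ : ℝ)) = 1 := by
        field_simp
        ring
      linarith
    calc μ[Z (n + 1)|F n] =ᵐ[μ] Z n * μ[g|F n] := step1
      _ =ᵐ[μ] Z n * fun _ => ∫ ω₀, g ω₀ ∂μ :=
          Filter.EventuallyEq.mul (Filter.EventuallyEq.refl _ _) step2
      _ ≤ᵐ[μ] Z n := by
          refine Filter.Eventually.of_forall fun ω₀ => ?_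
          simp only [Pi.mul_apply]
          exact mul_le_of_le_one_right (hZpos n ω₀).le hint_le
  · -- j₀ ∉ H0 : trivial step
    have hfeq : Finset.univ.filter (fun j : Fin p => (j : ℕ) < n + 1 ∧ j ∈ H0)
        = Finset.univ.filter (fun j : Fin p => (j : ℕ) < n ∧ j ∈ H0) := by
      ext j
      simp only [Finset.mem_filter, Finset.mem_univ, true_and]
      constructor
      · rintro ⟨hjlt, hjH⟩
        rcases Nat.lt_succ_iff_lt_or_eq.mp hjlt with h | h
        · exact ⟨h, hjH⟩
        · exact absurd hjH (by rw [show j = j₀ from Fin.ext h]; exact hj₀)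
      · exact fun ⟨h1, h2⟩ => ⟨Nat.lt_succ_of_lt h1, h2⟩
    have hZeq : Z (n + 1) = Z n := by rw [hZ' (n + 1), hZ' n, hfeq]
    rw [hZeq, condExp_of_stronglyMeasurable (hFle n)
      ((hZmeasF n).stronglyMeasurable) (hZint n)]
end

section
/- For each j ∈ H₀, the random variable κ_j is uniformly distributed on {1,…,ω_j} and is independent of the pair consisting of the family (κ_k)_{k ≠ j} and the blockwise order statistics T_ordered. -/
open MeasureTheory ProbabilityTheory
open scoped ENNReal

noncomputable section
namespace KnockoffAux

variable {n : ℕ}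

lemma exists_amax [NeZero n] (t : Fin n → ℝ) :
    ∃ i, (∀ m, t m ≤ t i) ∧ ∀ m, m < i → t m < t i := by
  classical
  obtain ⟨i0, -, hi0⟩ := Finset.exists_max_image Finset.univ t
    ⟨(0 : Fin n), Finset.mem_univ _⟩
  set s : Finset (Fin n) := Finset.univ.filter (fun i => ∀ m, t m ≤ t i) with hs
  have hsne : s.Nonempty := ⟨i0, by
    simp only [hs, Finset.mem_filter, Finset.mem_univ, true_and]
    exact fun m => hi0 m (Finset.mem_univ m)⟩
  have hmem := Finset.min'_mem s hsne
  simp only [hs, Finset.mem_filter, Finset.mem_univ, true_and] at hmem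
  refine ⟨s.min' hsne, hmem, fun m hm => ?_⟩
  have hms : m ∉ s := fun h => absurd (Finset.min'_le s m h) (not_le.mpr hm)
  simp only [hs, Finset.mem_filter, Finset.mem_univ, true_and, not_forall, not_le] at hms
  obtain ⟨m', hm'⟩ := hms
  exact lt_of_lt_of_le hm' (hmem m')

/-- A canonical argmax: the least index attaining the maximum. -/
def amax [NeZero n] (t : Fin n → ℝ) : Fin n := (exists_amax t).choose

lemma amax_isMax [NeZero n] (t : Fin n → ℝ) : ∀ m, t m ≤ t (amax t) :=
  (exists_amax t).choose_spec.1

lemma amax_lt [NeZero n] (t : Fin n → ℝ) : ∀ m, m < amax t → t m < t (amax t) :=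
  (exists_amax t).choose_spec.2

lemma amax_unique [NeZero n] {t : Fin n → ℝ} {i : Fin n}
    (h1 : ∀ m, t m ≤ t i) (h2 : ∀ m, m < i → t m < t i) : amax t = i := by
  rcases lt_trichotomy (amax t) i with h | h | h
  · exact absurd (amax_isMax t i) (not_le.mpr (h2 _ h))
  · exact h
  · exact absurd (h1 (amax t)) (not_le.mpr (amax_lt t i h))

lemma amax_eq_of_inj [NeZero n] {t : Fin n → ℝ} (ht : Function.Injective t)
    {c : Fin n} (h : ∀ m, t m ≤ t c) : amax t = c :=
  ht (le_antisymm (h _) (amax_isMax t c))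

lemma measurable_amax [NeZero n] : Measurable (amax : (Fin n → ℝ) → Fin n) := by
  refine measurable_to_countable' fun i => ?_
  have heq : (amax : (Fin n → ℝ) → Fin n) ⁻¹' {i}
      = {t | (∀ m, t m ≤ t i) ∧ ∀ m, m < i → t m < t i} := by
    ext t
    simp only [Set.mem_preimage, Set.mem_singleton_iff, Set.mem_setOf_eq]
    constructor
    · rintro rfl; exact ⟨amax_isMax t, amax_lt t⟩
    · rintro ⟨h1, h2⟩; exact amax_unique h1 h2
  have h1 : MeasurableSet {t : Fin n → ℝ | ∀ m, t m ≤ t i} := by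
    rw [Set.setOf_forall]
    exact MeasurableSet.iInter fun m =>
      measurableSet_le (measurable_pi_apply m) (measurable_pi_apply i)
  have h2 : MeasurableSet {t : Fin n → ℝ | ∀ m, m < i → t m < t i} := by
    rw [Set.setOf_forall]
    refine MeasurableSet.iInter fun m => ?_
    by_cases hm : m < i
    · simp only [hm, forall_true_left]
      exact measurableSet_lt (measurable_pi_apply m) (measurable_pi_apply i)
    · simp only [hm, false_implies, Set.setOf_true]
      exact MeasurableSet.univ
  rw [heq]
  exact h1.inter h2

/-- Decreasing sort of a tuple. -/
def sortD (t : Fin n → ℝ) : Fin n → ℝ := fun ℓ => t (Tuple.sort t ℓ.rev)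

lemma sortD_comp_perm (t : Fin n → ℝ) (e : Equiv.Perm (Fin n)) :
    sortD (t ∘ e) = sortD t := by
  funext ℓ
  exact congr_fun (Tuple.comp_perm_comp_sort_eq_comp_sort (f := t) (σ := e)) ℓ.rev

lemma sortD_eq_of_antitone {s t : Fin n → ℝ} (e : Equiv.Perm (Fin n))
    (h : ∀ ℓ, s ℓ = t (e ℓ)) (ha : Antitone s) : s = sortD t := by
  have hmon : Monotone (t ∘ ((Fin.revPerm).trans e : Equiv.Perm (Fin n))) := by
    intro a b hab
    simp only [Function.comp_apply, Equiv.trans_apply, Fin.revPerm_apply]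
    rw [← h, ← h]
    exact ha (by simpa using Fin.rev_le_rev.mpr hab)
  have := Tuple.unique_monotone hmon (Tuple.monotone_sort t)
  funext ℓ
  have h2 := congr_fun this ℓ.rev
  simp only [Function.comp_apply, Equiv.trans_apply, Fin.revPerm_apply, Fin.rev_rev] at h2
  rw [sortD, ← h2, ← h]

lemma measurableSet_sort_fiber (π : Equiv.Perm (Fin n)) :
    MeasurableSet {t : Fin n → ℝ | Tuple.sort t = π} := by
  have heq : {t : Fin n → ℝ | Tuple.sort t = π}
      = {t : Fin n → ℝ | Monotone (t ∘ π)} ∩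
          {t : Fin n → ℝ | ∀ i j : Fin n, i < j → t (π i) = t (π j) → π i < π j} := by
    ext t
    simp only [Set.mem_setOf_eq, Set.mem_inter_iff, eq_comm (a := Tuple.sort t)]
    exact Tuple.eq_sort_iff
  have h1 : MeasurableSet {t : Fin n → ℝ | Monotone (t ∘ π)} := by
    have : {t : Fin n → ℝ | Monotone (t ∘ π)}
        = ⋂ (i : Fin n) (j : Fin n), {t : Fin n → ℝ | i ≤ j → t (π i) ≤ t (π j)} := by
      ext t
      constructor
      · intro h
        simp only [Set.mem_iInter, Set.mem_setOf_eq]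
        intro i j hij; exact h hij
      · intro h
        simp only [Set.mem_iInter, Set.mem_setOf_eq] at h
        exact fun a b hab => h a b hab
    rw [this]
    refine MeasurableSet.iInter fun i => MeasurableSet.iInter fun j => ?_
    by_cases hij : i ≤ j
    · simp only [hij, forall_true_left]
      exact measurableSet_le (measurable_pi_apply _) (measurable_pi_apply _)
    · simp only [hij, false_implies, Set.setOf_true]; exact MeasurableSet.univ
  have h2 : MeasurableSet {t : Fin n → ℝ |
      ∀ i j : Fin n, i < j → t (π i) = t (π j) → π i < π j} := by
    rw [Set.setOf_forall]
    refine MeasurableSet.iInter fun i => ?_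
    rw [Set.setOf_forall]
    refine MeasurableSet.iInter fun j => ?_
    by_cases hij : i < j
    · by_cases hπ : π i < π j
      · simp only [hij, hπ, forall_true_left, implies_true, Set.setOf_true]
        exact MeasurableSet.univ
      · simp only [hij, hπ, forall_true_left, imp_false]
        exact (measurableSet_eq_fun (measurable_pi_apply (π i))
          (measurable_pi_apply (π j))).compl
    · simp only [hij, false_implies, Set.setOf_true]; exact MeasurableSet.univ
  rw [heq]
  exact h1.inter h2

lemma measurable_sortD : Measurable (sortD : (Fin n → ℝ) → (Fin n → ℝ)) := by
  apply measurable_pi_lambda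
  intro ℓ
  have : (fun t : Fin n → ℝ => sortD t ℓ)
      = fun t => ∑ π : Equiv.Perm (Fin n),
          if Tuple.sort t = π then t (π ℓ.rev) else 0 := by
    funext t
    rw [Finset.sum_eq_single (Tuple.sort t)]
    · simp [sortD]
    · intro π _ hπ; simp [Ne.symm hπ]
    · simp
  rw [this]
  exact Finset.measurable_sum _ fun π _ =>
    Measurable.ite (measurableSet_sort_fiber π) (measurable_pi_apply _) measurable_const

end KnockoffAux
end

open KnockoffAux in
/-- **Lemma 2 (multiple knockoff statistics).**
Under the null-swap exchangeability of the statistics `T` and a.s. distinctness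
within blocks, for each `j ∈ H₀` the argmax index `κ_j` is uniformly distributed
on `{1,…,ω_j}` and independent of the pair `((κ_k)_{k ≠ j}, T_ordered)`. -/
theorem knockoff_statistic_uniform_and_independent
    {Ω : Type*} [MeasurableSpace Ω] (μ : Measure Ω) [IsProbabilityMeasure μ]
    (p : ℕ) (w : Fin p → ℕ) (hw : ∀ j, 2 ≤ w j)
    (H0 : Finset (Fin p))
    (T : Ω → (j : Fin p) → Fin (w j) → ℝ) (hTmeas : Measurable T)
    -- (i) null-swap exchangeability of T
    (hswap : ∀ ς : (j : Fin p) → Equiv.Perm (Fin (w j)), (∀ j ∉ H0, ς j = 1) →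
      IdentDistrib (fun ω₀ => fun j ℓ => T ω₀ j (ς j ℓ)) T μ μ)
    -- (ii) a.s. pairwise distinct values within each block
    (hdist : ∀ᵐ ω₀ ∂μ, ∀ j, Function.Injective (fun ℓ => T ω₀ j ℓ))
    -- κ j is the argmax of block j
    (κ : Ω → (j : Fin p) → Fin (w j)) (hκmeas : Measurable κ)
    (hκargmax : ∀ᵐ ω₀ ∂μ, ∀ j ℓ, T ω₀ j ℓ ≤ T ω₀ j (κ ω₀ j))
    -- S is T with each block sorted into decreasing order
    (S : Ω → (j : Fin p) → Fin (w j) → ℝ) (hSmeas : Measurable S)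
    (hS : ∀ ω₀ j, ∃ e : Equiv.Perm (Fin (w j)),
      (∀ ℓ, S ω₀ j ℓ = T ω₀ j (e ℓ)) ∧ Antitone (S ω₀ j)) :
    ∀ j ∈ H0,
      (∀ i : Fin (w j), μ {ω₀ | κ ω₀ j = i} = ENNReal.ofReal (1 / (w j : ℝ))) ∧
      IndepFun (fun ω₀ => κ ω₀ j)
        (fun ω₀ => ((fun k : {k : Fin p // k ≠ j} => κ ω₀ k), S ω₀)) μ := by
    classical
  haveI hNZ : ∀ i : Fin p, NeZero (w i) := fun i => ⟨by have := hw i; omega⟩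
  intro j hj
  set β := (((k : {k : Fin p // k ≠ j}) → Fin (w k.1)) × ((i : Fin p) → Fin (w i) → ℝ)) with hβ
  set G : ((i : Fin p) → Fin (w i) → ℝ) → Fin (w j) × β :=
    fun t => (amax (t j), (fun k => amax (t k.1), fun i => sortD (t i))) with hGdef
  have hGmeas : Measurable G := by
    refine Measurable.prodMk ?_ (Measurable.prodMk ?_ ?_)
    · exact measurable_amax.comp (measurable_pi_apply j)
    · exact measurable_pi_lambda _ fun k => measurable_amax.comp (measurable_pi_apply k.1)
    · exact measurable_pi_lambda _ fun i => measurable_sortD.comp (measurable_pi_apply i)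
  set Φ : Ω → Fin (w j) × β :=
    fun ω₀ => (κ ω₀ j, ((fun k : {k : Fin p // k ≠ j} => κ ω₀ k), S ω₀)) with hΦdef
  have hΦmeas : Measurable Φ := by
    refine Measurable.prodMk ?_ (Measurable.prodMk ?_ hSmeas)
    · exact (measurable_pi_apply j).comp hκmeas
    · exact measurable_pi_lambda _ fun k => (measurable_pi_apply k.1).comp hκmeas
  have hSsort : ∀ ω₀ i, S ω₀ i = sortD (T ω₀ i) := by
    intro ω₀ i
    obtain ⟨e, he, hant⟩ := hS ω₀ i
    exact sortD_eq_of_antitone e he hant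
  have hgood : ∀ᵐ ω₀ ∂μ, Φ ω₀ = G (T ω₀) := by
    filter_upwards [hdist, hκargmax] with ω₀ h1 h2
    refine Prod.ext ?_ (Prod.ext ?_ ?_)
    · exact (amax_eq_of_inj (h1 j) (h2 j)).symm
    · funext k
      exact (amax_eq_of_inj (h1 k.1) (h2 k.1)).symm
    · funext i
      exact hSsort ω₀ i
  set ν : Measure (Fin (w j) × β) := Measure.map Φ μ with hνdef
  haveI hνprob : IsProbabilityMeasure ν := Measure.isProbabilityMeasure_map hΦmeas.aemeasurable
  -- invariance of ν under permutations of the first coordinate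
  have hν_inv : ∀ σ : Equiv.Perm (Fin (w j)),
      ν = Measure.map (fun x : Fin (w j) × β => (σ⁻¹ x.1, x.2)) ν := by
    intro σ
    set ς : (k : Fin p) → Equiv.Perm (Fin (w k)) :=
      Function.update (fun k => (1 : Equiv.Perm (Fin (w k)))) j σ with hςdef
    have hςj : ς j = σ := by rw [hςdef]; simp
    have hςk : ∀ k, k ≠ j → ς k = 1 := fun k hk => by rw [hςdef]; simp [Function.update_of_ne hk]
    have hident := hswap ς (fun k hk => hςk k (fun hkj => hk (hkj ▸ hj)))
    have hmσ : Measurable (fun x : Fin (w j) × β => (σ⁻¹ x.1, x.2)) :=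
      Measurable.prodMk ((Measurable.of_discrete).comp measurable_fst) measurable_snd
    have hmap1 : Measure.map (G ∘ fun ω₀ => fun k ℓ => T ω₀ k (ς k ℓ)) μ
        = Measure.map (G ∘ T) μ := (hident.comp hGmeas).map_eq
    have hmap2 : Measure.map (G ∘ T) μ = ν := by
      rw [hνdef]
      exact Measure.map_congr (by filter_upwards [hgood] with ω₀ h; exact h.symm)
    have hae : (G ∘ fun ω₀ => fun k ℓ => T ω₀ k (ς k ℓ))
        =ᵐ[μ] (fun ω₀ => (σ⁻¹ (Φ ω₀).1, (Φ ω₀).2)) := by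
      filter_upwards [hdist, hκargmax] with ω₀ h1 h2
      show G (fun k ℓ => T ω₀ k (ς k ℓ))
          = (σ⁻¹ (κ ω₀ j), ((fun k : {k : Fin p // k ≠ j} => κ ω₀ k), S ω₀))
      refine Prod.ext ?_ (Prod.ext ?_ ?_)
      · show amax (fun ℓ => T ω₀ j (ς j ℓ)) = σ⁻¹ (κ ω₀ j)
        have hre : (fun ℓ => T ω₀ j (ς j ℓ)) = fun ℓ => T ω₀ j (σ ℓ) := by rw [hςj]
        rw [hre]
        apply amax_eq_of_inj
        · exact fun a b hab => σ.injective (h1 j hab)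
        · intro m
          have heq : T ω₀ j (σ (σ⁻¹ (κ ω₀ j))) = T ω₀ j (κ ω₀ j) := by
            simp
          rw [heq]
          exact h2 j (σ m)
      · show (fun k : {k : Fin p // k ≠ j} => amax (fun ℓ => T ω₀ k.1 (ς k.1 ℓ)))
            = fun k : {k : Fin p // k ≠ j} => κ ω₀ k.1
        funext k
        have hre : (fun ℓ => T ω₀ k.1 (ς k.1 ℓ)) = fun ℓ => T ω₀ k.1 ℓ := by
          rw [hςk k.1 k.2]; simp
        rw [hre]
        exact amax_eq_of_inj (h1 k.1) (h2 k.1)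
      · show (fun i => sortD (fun ℓ => T ω₀ i (ς i ℓ))) = S ω₀
        funext i
        have hre : (fun ℓ => T ω₀ i (ς i ℓ)) = (T ω₀ i) ∘ (ς i) := rfl
        rw [hre, sortD_comp_perm, hSsort]
    have hmap3 : Measure.map (G ∘ fun ω₀ => fun k ℓ => T ω₀ k (ς k ℓ)) μ
        = Measure.map (fun x : Fin (w j) × β => (σ⁻¹ x.1, x.2)) ν := by
      rw [Measure.map_congr hae, hνdef, Measure.map_map hmσ hΦmeas]
      rfl
    rw [← hmap3, hmap1, hmap2]
  -- value of ν on rectangles with singleton base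
  have hval : ∀ (i : Fin (w j)) (B : Set β), MeasurableSet B →
      ν (({i} : Set (Fin (w j))) ×ˢ B) = ((w j : ℝ≥0∞))⁻¹ * ν ((Set.univ : Set (Fin (w j))) ×ˢ B) := by
    have hswapval : ∀ (σ : Equiv.Perm (Fin (w j))) (i : Fin (w j)) (B : Set β),
        MeasurableSet B → ν (({i} : Set (Fin (w j))) ×ˢ B) = ν (({σ i} : Set (Fin (w j))) ×ˢ B) := by
      intro σ i B hB
      have hmσ : Measurable (fun x : Fin (w j) × β => (σ⁻¹ x.1, x.2)) :=
        Measurable.prodMk ((Measurable.of_discrete).comp measurable_fst) measurable_snd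
      have hpre : (fun x : Fin (w j) × β => (σ⁻¹ x.1, x.2)) ⁻¹' ({i} ×ˢ B)
          = {σ i} ×ˢ B := by
        ext x
        simp only [Set.mem_preimage, Set.mem_prod, Set.mem_singleton_iff]
        constructor
        · rintro ⟨h1, h2⟩
          exact ⟨by rw [← h1]; exact (Equiv.apply_symm_apply σ x.1).symm, h2⟩
        · rintro ⟨h1, h2⟩
          exact ⟨by rw [h1]; exact Equiv.symm_apply_apply σ i, h2⟩
      calc ν ({i} ×ˢ B)
          = Measure.map (fun x : Fin (w j) × β => (σ⁻¹ x.1, x.2)) ν ({i} ×ˢ B) := by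
            rw [← hν_inv σ]
        _ = ν ({σ i} ×ˢ B) := by
            rw [Measure.map_apply hmσ ((measurableSet_singleton i).prod hB), hpre]
    have hconst : ∀ (i i' : Fin (w j)) (B : Set β), MeasurableSet B →
        ν (({i} : Set (Fin (w j))) ×ˢ B) = ν (({i'} : Set (Fin (w j))) ×ˢ B) := by
      intro i i' B hB
      simpa [Equiv.swap_apply_left] using hswapval (Equiv.swap i i') i B hB
    intro i B hB
    have hcover : (Set.univ : Set (Fin (w j))) ×ˢ B
        = ⋃ i' ∈ (Finset.univ : Finset (Fin (w j))), ({i'} : Set (Fin (w j))) ×ˢ B := by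
      ext ⟨a, b⟩
      constructor
      · rintro ⟨-, hb⟩
        exact Set.mem_iUnion₂.mpr ⟨a, Finset.mem_univ a, rfl, hb⟩
      · intro hx
        obtain ⟨i', -, -, hb⟩ := Set.mem_iUnion₂.mp hx
        exact ⟨trivial, hb⟩
    have hdisj : (↑(Finset.univ : Finset (Fin (w j))) : Set (Fin (w j))).PairwiseDisjoint
        (fun i' => ({i'} : Set (Fin (w j))) ×ˢ B) := by
      intro a _ b _ hab
      apply Set.disjoint_left.mpr
      rintro ⟨x1, x2⟩ ⟨hx1, -⟩ ⟨hy1, -⟩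
      exact hab (hx1.symm.trans hy1)
    have hsum : ν ((Set.univ : Set (Fin (w j))) ×ˢ B) = ∑ i' : Fin (w j), ν (({i'} : Set (Fin (w j))) ×ˢ B) := by
      rw [hcover]
      exact measure_biUnion_finset hdisj fun i' _ => (measurableSet_singleton i').prod hB
    have hsum2 : ν ((Set.univ : Set (Fin (w j))) ×ˢ B) = (w j : ℝ≥0∞) * ν (({i} : Set (Fin (w j))) ×ˢ B) := by
      rw [hsum]
      rw [Finset.sum_congr rfl (fun i' _ => hconst i' i B hB)]
      simp [Finset.card_univ, mul_comm]
    rw [hsum2, ← mul_assoc, ENNReal.inv_mul_cancel (by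
        simp only [ne_eq, Nat.cast_eq_zero]; have := hw j; omega) (ENNReal.natCast_ne_top _),
      one_mul]
  have hwinv : ENNReal.ofReal (1 / (w j : ℝ)) = ((w j : ℝ≥0∞))⁻¹ := by
    rw [one_div, ← ENNReal.ofReal_natCast (w j),
      ← ENNReal.ofReal_inv_of_pos (by have := hw j; positivity)]
  constructor
  · intro i
    have hpre : Φ ⁻¹' (({i} : Set (Fin (w j))) ×ˢ (Set.univ : Set β))
        = {ω₀ | κ ω₀ j = i} := by
      ext ω₀
      simp [hΦdef, Set.mem_prod, eq_comm]
    have : μ {ω₀ | κ ω₀ j = i} = ν ({i} ×ˢ (Set.univ : Set β)) := by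
      rw [hνdef, Measure.map_apply hΦmeas ((measurableSet_singleton i).prod MeasurableSet.univ),
        hpre]
    rw [this, hval i Set.univ MeasurableSet.univ, Set.univ_prod_univ, measure_univ, mul_one,
      hwinv]
  · rw [indepFun_iff_measure_inter_preimage_eq_mul]
    intro s t hs ht
    set F : Finset (Fin (w j)) := Finset.univ.filter (· ∈ s) with hF
    have hmemF : ∀ i, i ∈ F ↔ i ∈ s := by
      intro i; simp [hF]
    have hprePhi : ∀ (s' : Set (Fin (w j))) (t' : Set β),
        (fun ω₀ => κ ω₀ j) ⁻¹' s' ∩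
          (fun ω₀ => ((fun k : {k : Fin p // k ≠ j} => κ ω₀ k), S ω₀)) ⁻¹' t'
        = Φ ⁻¹' (s' ×ˢ t') := by
      intro s' t'
      ext ω₀
      simp [hΦdef, Set.mem_prod]
    have hmeas_st : ∀ (s' : Set (Fin (w j))) (t' : Set β), MeasurableSet t' →
        μ (Φ ⁻¹' (s' ×ˢ t')) = ν (s' ×ˢ t') := by
      intro s' t' ht'
      rw [hνdef, Measure.map_apply hΦmeas ((MeasurableSet.of_discrete (s := s')).prod ht')]
    have hrect : ∀ (s' : Set (Fin (w j))) (t' : Set β), MeasurableSet t' → ν (s' ×ˢ t')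
        = (Finset.univ.filter (· ∈ s')).card * ((w j : ℝ≥0∞))⁻¹
            * ν ((Set.univ : Set (Fin (w j))) ×ˢ t') := by
      intro s' t' ht'
      have hcover : s' ×ˢ t' = ⋃ i ∈ Finset.univ.filter (· ∈ s'),
          ({i} : Set (Fin (w j))) ×ˢ t' := by
        ext ⟨a, b⟩
        constructor
        · rintro ⟨ha, hb⟩
          exact Set.mem_iUnion₂.mpr ⟨a, by simp [ha], rfl, hb⟩
        · intro hx
          obtain ⟨i', hi', ha, hb⟩ := Set.mem_iUnion₂.mp hx
          rw [Set.mem_singleton_iff] at ha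
          subst ha
          refine ⟨?_, hb⟩
          simpa using hi'
      have hdisj : (↑(Finset.univ.filter (· ∈ s')) : Set (Fin (w j))).PairwiseDisjoint
          (fun i' => ({i'} : Set (Fin (w j))) ×ˢ t') := by
        intro a _ b _ hab
        apply Set.disjoint_left.mpr
        rintro ⟨x1, x2⟩ ⟨hx1, -⟩ ⟨hy1, -⟩
        exact hab (hx1.symm.trans hy1)
      rw [hcover, measure_biUnion_finset hdisj
        (fun i' _ => (measurableSet_singleton i').prod ht')]
      rw [Finset.sum_congr rfl (fun i' _ => hval i' t' ht')]
      rw [Finset.sum_const, nsmul_eq_mul, mul_assoc]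
    have e1 : μ ((fun ω₀ => κ ω₀ j) ⁻¹' s ∩
        (fun ω₀ => ((fun k : {k : Fin p // k ≠ j} => κ ω₀ k), S ω₀)) ⁻¹' t)
        = ν (s ×ˢ t) := by
      rw [hprePhi, hmeas_st s t ht]
    have e2 : μ ((fun ω₀ => κ ω₀ j) ⁻¹' s) = ν (s ×ˢ (Set.univ : Set β)) := by
      have : (fun ω₀ => κ ω₀ j) ⁻¹' s = Φ ⁻¹' (s ×ˢ (Set.univ : Set β)) := by
        ext ω₀; simp [hΦdef, Set.mem_prod]
      rw [this, hmeas_st s Set.univ MeasurableSet.univ]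
    have e3 : μ ((fun ω₀ => ((fun k : {k : Fin p // k ≠ j} => κ ω₀ k), S ω₀)) ⁻¹' t)
        = ν ((Set.univ : Set (Fin (w j))) ×ˢ t) := by
      have : (fun ω₀ => ((fun k : {k : Fin p // k ≠ j} => κ ω₀ k), S ω₀)) ⁻¹' t
          = Φ ⁻¹' ((Set.univ : Set (Fin (w j))) ×ˢ t) := by
        ext ω₀; simp [hΦdef, Set.mem_prod]
      rw [this, hmeas_st Set.univ t ht]
    rw [e1, e2, e3, hrect s t ht, hrect s Set.univ MeasurableSet.univ,
      Set.univ_prod_univ, measure_univ, mul_one]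
end

section
/- For each j ∈ H₀ and each i ∈ {1,…,ω_j}, the conditional probability of {κ_j = i} given the σ-algebra generated by the family (κ_k)_{k ≠ j} together with T_ordered equals 1/ω_j almost surely. -/
open MeasureTheory ProbabilityTheory

section Aux

/-- The `k`-th largest value (0-indexed) of a tuple `x : Fin n → ℝ`, expressed as a
max over subsets of size `k+1` of the min over the subset. -/
noncomputable def ordStat {n : ℕ} (x : Fin n → ℝ) (k : Fin n) : ℝ :=
  (Finset.univ.powersetCard (k.val + 1) : Finset (Finset (Fin n))).attach.sup'
    (Finset.attach_nonempty_iff.mpr (Finset.powersetCard_nonempty.mpr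
      (by rw [Finset.card_univ, Fintype.card_fin]; omega)))
    fun A => A.1.inf' (Finset.card_pos.mp (by
      rw [(Finset.mem_powersetCard.mp A.2).2]; omega)) x

lemma measurable_inf'_fun {ι δ : Type*} [MeasurableSpace δ] {s : Finset ι} (hs : s.Nonempty)
    {f : ι → δ → ℝ} (hf : ∀ i ∈ s, Measurable (f i)) :
    Measurable fun x => s.inf' hs fun i => f i x := by
  simp only [← Finset.inf'_apply]
  exact Finset.inf'_induction hs _ (fun _ h _ h' => h.inf h') hf

lemma measurable_sup'_fun {ι δ : Type*} [MeasurableSpace δ] {s : Finset ι} (hs : s.Nonempty)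
    {f : ι → δ → ℝ} (hf : ∀ i ∈ s, Measurable (f i)) :
    Measurable fun x => s.sup' hs fun i => f i x := by
  simp only [← Finset.sup'_apply]
  exact Finset.sup'_induction hs _ (fun _ h _ h' => h.sup h') hf

lemma measurable_ordStat {n : ℕ} (k : Fin n) :
    Measurable fun x : Fin n → ℝ => ordStat x k := by
  unfold ordStat
  apply measurable_sup'_fun
  intro A _
  apply measurable_inf'_fun
  intro i _
  exact measurable_pi_apply i

lemma ordStat_comp_perm {n : ℕ} (x : Fin n → ℝ) (e : Equiv.Perm (Fin n)) (k : Fin n) :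
    ordStat (x ∘ e) k = ordStat x k := by
  classical
  have key : ∀ (x : Fin n → ℝ) (e : Equiv.Perm (Fin n)), ordStat (x ∘ e) k ≤ ordStat x k := by
    intro x e
    apply Finset.sup'_le
    rintro ⟨A, hA⟩ -
    have hAe : A.image e ∈ Finset.univ.powersetCard (k.val + 1) := by
      rw [Finset.mem_powersetCard] at hA ⊢
      exact ⟨Finset.subset_univ _,
        by rw [Finset.card_image_of_injective _ e.injective, hA.2]⟩
    refine le_trans (le_of_eq ?_) (Finset.le_sup' _ (Finset.mem_attach _ ⟨A.image e, hAe⟩))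
    rw [Finset.inf'_image]
  refine le_antisymm (key x e) ?_
  have h := key (x ∘ e) e⁻¹
  have hxe : (x ∘ e) ∘ ⇑e⁻¹ = x := by
    funext ℓ; simp
  rwa [hxe] at h

lemma ordStat_of_antitone {n : ℕ} {y : Fin n → ℝ} (hy : Antitone y) (k : Fin n) :
    ordStat y k = y k := by
  apply le_antisymm
  · apply Finset.sup'_le
    rintro ⟨A, hA⟩ -
    have hcard := (Finset.mem_powersetCard.mp hA).2
    have hne : A.Nonempty := Finset.card_pos.mp (by omega)
    set m := A.max' hne with hm
    have hkm : k ≤ m := by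
      have hsub : A ⊆ Finset.Iic m := fun a ha => Finset.mem_Iic.mpr (Finset.le_max' A a ha)
      have hc := Finset.card_le_card hsub
      rw [Fin.card_Iic, hcard] at hc
      exact Fin.le_def.mpr (by omega)
    calc A.inf' hne y ≤ y m := Finset.inf'_le _ (A.max'_mem hne)
    _ ≤ y k := hy hkm
  · have hmem : Finset.Iic k ∈ Finset.univ.powersetCard (k.val + 1) := by
      rw [Finset.mem_powersetCard]
      exact ⟨Finset.subset_univ _, by rw [Fin.card_Iic]⟩
    refine le_trans ?_ (Finset.le_sup' _ (Finset.mem_attach _ ⟨_, hmem⟩))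
    exact Finset.le_inf' _ _ fun i hi => hy (Finset.mem_Iic.mp hi)

open Classical in
lemma argmax_filter_nonempty {n : ℕ} (hn : 0 < n) (x : Fin n → ℝ) :
    (Finset.univ.filter fun i => ∀ ℓ, x ℓ ≤ x i).Nonempty := by
  obtain ⟨i, -, hi⟩ := Finset.exists_max_image Finset.univ x ⟨⟨0, hn⟩, Finset.mem_univ _⟩
  exact ⟨i, Finset.mem_filter.mpr ⟨Finset.mem_univ _, fun ℓ => hi ℓ (Finset.mem_univ _)⟩⟩

open Classical in
/-- A measurable choice of argmax for a tuple `x : Fin n → ℝ` (the largest index achieving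
the maximum). -/
noncomputable def argmaxIdx {n : ℕ} (hn : 0 < n) (x : Fin n → ℝ) : Fin n :=
  (Finset.univ.filter fun i => ∀ ℓ, x ℓ ≤ x i).max' (argmax_filter_nonempty hn x)

lemma argmaxIdx_spec {n : ℕ} (hn : 0 < n) (x : Fin n → ℝ) :
    ∀ ℓ, x ℓ ≤ x (argmaxIdx hn x) := by
  classical
  have h := Finset.max'_mem (Finset.univ.filter fun i => ∀ ℓ, x ℓ ≤ x i)
    (argmax_filter_nonempty hn x)
  rw [Finset.mem_filter] at h
  exact h.2

lemma argmax_unique {n : ℕ} {x : Fin n → ℝ} (hx : Function.Injective x) {i i' : Fin n}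
    (hi : ∀ ℓ, x ℓ ≤ x i) (hi' : ∀ ℓ, x ℓ ≤ x i') : i = i' :=
  hx (le_antisymm (hi' i) (hi i'))

lemma argmaxIdx_comp_perm {n : ℕ} (hn : 0 < n) {x : Fin n → ℝ}
    (hx : Function.Injective x) (e : Equiv.Perm (Fin n)) :
    argmaxIdx hn (x ∘ e) = e⁻¹ (argmaxIdx hn x) := by
  have h1 : ∀ ℓ, x ℓ ≤ x (e (argmaxIdx hn (x ∘ e))) := by
    intro ℓ
    have := argmaxIdx_spec hn (x ∘ e) (e⁻¹ ℓ)
    simpa using this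
  have h2 := argmaxIdx_spec hn x
  have he : e (argmaxIdx hn (x ∘ e)) = argmaxIdx hn x := argmax_unique hx h1 h2
  rw [← he]; simp

lemma measurable_argmaxIdx {n : ℕ} (hn : 0 < n) :
    Measurable fun x : Fin n → ℝ => argmaxIdx hn x := by
  classical
  refine measurable_to_countable' fun i => ?_
  have hle : ∀ i0 : Fin n, MeasurableSet {x : Fin n → ℝ | ∀ ℓ, x ℓ ≤ x i0} := by
    intro i0
    have h : {x : Fin n → ℝ | ∀ ℓ, x ℓ ≤ x i0} = ⋂ ℓ, {x : Fin n → ℝ | x ℓ ≤ x i0} := by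
      ext x; simp
    rw [h]
    exact MeasurableSet.iInter fun ℓ =>
      measurableSet_le (measurable_pi_apply ℓ) (measurable_pi_apply i0)
  have hset : (fun x : Fin n → ℝ => argmaxIdx hn x) ⁻¹' {i} =
      {x : Fin n → ℝ | ∀ ℓ, x ℓ ≤ x i} ∩
        ⋂ i', {x : Fin n → ℝ | (∀ ℓ, x ℓ ≤ x i') → i' ≤ i} := by
    ext x
    simp only [Set.mem_preimage, Set.mem_singleton_iff, Set.mem_inter_iff, Set.mem_iInter,
      Set.mem_setOf_eq]
    constructor
    · intro h
      refine ⟨h ▸ argmaxIdx_spec hn x, fun i' hi' => ?_⟩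
      have : i' ∈ Finset.univ.filter fun i => ∀ ℓ, x ℓ ≤ x i :=
        Finset.mem_filter.mpr ⟨Finset.mem_univ _, hi'⟩
      exact h ▸ Finset.le_max' _ _ this
    · rintro ⟨hi, hbd⟩
      refine le_antisymm (Finset.max'_le _ _ _ fun b hb => ?_) (Finset.le_max' _ _ ?_)
      · exact hbd b (Finset.mem_filter.mp hb).2
      · exact Finset.mem_filter.mpr ⟨Finset.mem_univ _, hi⟩
  rw [hset]
  refine MeasurableSet.inter (hle i) (MeasurableSet.iInter fun i' => ?_)
  by_cases h : i' ≤ i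
  · simp only [h, imp_true_iff]
    exact MeasurableSet.univ
  · have heq : {x : Fin n → ℝ | (∀ ℓ, x ℓ ≤ x i') → i' ≤ i} =
        {x : Fin n → ℝ | ∀ ℓ, x ℓ ≤ x i'}ᶜ := by
      ext x
      simp [h]
    rw [heq]
    exact (hle i').compl

end Aux

/-- **Conditional distribution of the argmax index.**
For each `j ∈ H₀` and each index `i` of block `j`, the conditional probability
of `{κ_j = i}` given the σ-algebra generated by `(κ_k)_{k ≠ j}` together with
`T_ordered` equals `1/ω_j` almost surely. -/
theorem knockoff_statistic_uniform_conditional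
    {Ω : Type*} [MeasurableSpace Ω] (μ : Measure Ω) [IsProbabilityMeasure μ]
    (p : ℕ) (w : Fin p → ℕ) (hw : ∀ j, 2 ≤ w j)
    (H0 : Finset (Fin p))
    (T : Ω → (j : Fin p) → Fin (w j) → ℝ) (hTmeas : Measurable T)
    -- (i) null-swap exchangeability of T
    (hswap : ∀ ς : (j : Fin p) → Equiv.Perm (Fin (w j)), (∀ j ∉ H0, ς j = 1) →
      IdentDistrib (fun ω₀ => fun j ℓ => T ω₀ j (ς j ℓ)) T μ μ)
    -- (ii) a.s. pairwise distinct values within each block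
    (hdist : ∀ᵐ ω₀ ∂μ, ∀ j, Function.Injective (fun ℓ => T ω₀ j ℓ))
    -- κ j is the argmax of block j
    (κ : Ω → (j : Fin p) → Fin (w j)) (hκmeas : Measurable κ)
    (hκargmax : ∀ᵐ ω₀ ∂μ, ∀ j ℓ, T ω₀ j ℓ ≤ T ω₀ j (κ ω₀ j))
    -- S is T with each block sorted into decreasing order
    (S : Ω → (j : Fin p) → Fin (w j) → ℝ) (hSmeas : Measurable S)
    (hS : ∀ ω₀ j, ∃ e : Equiv.Perm (Fin (w j)),
      (∀ ℓ, S ω₀ j ℓ = T ω₀ j (e ℓ)) ∧ Antitone (S ω₀ j)) :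
    ∀ j ∈ H0, ∀ i : Fin (w j),
      μ[Set.indicator {ω₀ | κ ω₀ j = i} (fun _ => (1 : ℝ)) |
          MeasurableSpace.comap
            (fun ω₀ => ((fun k : {k : Fin p // k ≠ j} => κ ω₀ k), S ω₀)) inferInstance]
        =ᵐ[μ] fun _ => 1 / (w j : ℝ) := by
  intro j hj i
  classical
  have hn : ∀ k : Fin p, 0 < w k := fun k => lt_of_lt_of_le two_pos (hw k)
  set V : Ω → (∀ k : {k : Fin p // k ≠ j}, Fin (w ↑k)) × ((k : Fin p) → Fin (w k) → ℝ) :=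
    fun ω₀ => ((fun k : {k : Fin p // k ≠ j} => κ ω₀ k), S ω₀) with hV
  have hVmeas : Measurable V :=
    Measurable.prodMk
      (measurable_pi_lambda _ fun k => (measurable_pi_apply (k : Fin p)).comp hκmeas)
      hSmeas
  have hm : MeasurableSpace.comap V inferInstance ≤ _ := hVmeas.comap_le
  set Φ : ((k : Fin p) → Fin (w k) → ℝ) →
      ((k : Fin p) → Fin (w k)) × ((k : Fin p) → Fin (w k) → ℝ) :=
    fun t => (fun k => argmaxIdx (hn k) (t k), fun k ℓ => ordStat (t k) ℓ) with hΦ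
  have hΦmeas : Measurable Φ :=
    Measurable.prodMk
      (measurable_pi_lambda _ fun k =>
        (measurable_argmaxIdx (hn k)).comp (measurable_pi_apply k))
      (measurable_pi_lambda _ fun k => measurable_pi_lambda _ fun ℓ =>
        (measurable_ordStat ℓ).comp (measurable_pi_apply k))
  have hΦT : ∀ᵐ ω₀ ∂μ, Φ (T ω₀) = (κ ω₀, S ω₀) := by
    filter_upwards [hdist, hκargmax] with ω₀ hinj hmax
    refine Prod.ext ?_ ?_
    · funext k
      exact argmax_unique (hinj k) (argmaxIdx_spec (hn k) (T ω₀ k)) (hmax k)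
    · funext k ℓ
      obtain ⟨e, he, hanti⟩ := hS ω₀ k
      have hTe : T ω₀ k ∘ e = S ω₀ k := funext fun ℓ => (he ℓ).symm
      show ordStat (T ω₀ k) ℓ = S ω₀ k ℓ
      calc ordStat (T ω₀ k) ℓ = ordStat (T ω₀ k ∘ e) ℓ := (ordStat_comp_perm _ e ℓ).symm
      _ = S ω₀ k ℓ := by rw [hTe, ordStat_of_antitone hanti]
  -- the key exchangeability step
  have key : ∀ B : Set ((∀ k : {k : Fin p // k ≠ j}, Fin (w ↑k)) ×
      ((k : Fin p) → Fin (w k) → ℝ)), MeasurableSet B → ∀ i' : Fin (w j),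
      μ ({ω₀ | κ ω₀ j = i'} ∩ V ⁻¹' B) = μ ({ω₀ | κ ω₀ j = i} ∩ V ⁻¹' B) := by
    intro B hB i'
    set e₀ : Equiv.Perm (Fin (w j)) := Equiv.swap i' i with he₀
    set ς : (k : Fin p) → Equiv.Perm (Fin (w k)) :=
      Function.update (fun k => 1) j e₀ with hς
    have hςj : ς j = e₀ := Function.update_self _ _ _
    have hςne : ∀ k, k ≠ j → ς k = 1 := fun k hk => Function.update_of_ne hk _ _
    set T' : Ω → (k : Fin p) → Fin (w k) → ℝ :=
      fun ω₀ => fun k ℓ => T ω₀ k (ς k ℓ) with hT'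
    have hid : IdentDistrib T' T μ μ :=
      hswap ς (fun k hk => hςne k (fun h => hk (h ▸ hj)))
    set D : Set (((k : Fin p) → Fin (w k)) × ((k : Fin p) → Fin (w k) → ℝ)) :=
      {cs | cs.1 j = i' ∧ ((fun k : {k : Fin p // k ≠ j} => cs.1 k), cs.2) ∈ B} with hD'
    have hD : MeasurableSet D := by
      have hDeq : D = ((fun cs : ((k : Fin p) → Fin (w k)) ×
            ((k : Fin p) → Fin (w k) → ℝ) => cs.1 j) ⁻¹' {i'}) ∩
          ((fun cs : ((k : Fin p) → Fin (w k)) × ((k : Fin p) → Fin (w k) → ℝ) =>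
            ((fun k : {k : Fin p // k ≠ j} => cs.1 k), cs.2)) ⁻¹' B) := by
        ext cs; simp [hD']
      rw [hDeq]
      refine MeasurableSet.inter ?_ ?_
      · exact ((measurable_pi_apply j).comp measurable_fst) (measurableSet_singleton i')
      · have hmeas2 : Measurable fun cs : ((k : Fin p) → Fin (w k)) ×
            ((k : Fin p) → Fin (w k) → ℝ) =>
            ((fun k : {k : Fin p // k ≠ j} => cs.1 (k : Fin p)), cs.2) :=
          Measurable.prodMk
            (measurable_pi_lambda _ fun k =>
              (measurable_pi_apply (k : Fin p)).comp measurable_fst)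
            measurable_snd
        exact hmeas2 hB
    have step1 : μ ({ω₀ | κ ω₀ j = i'} ∩ V ⁻¹' B) = μ ((fun ω₀ => Φ (T ω₀)) ⁻¹' D) := by
      apply measure_congr
      rw [Filter.eventuallyEq_set]
      filter_upwards [hΦT] with ω₀ h
      simp only [Set.mem_inter_iff, Set.mem_preimage, Set.mem_setOf_eq, hD', hV, h]
    have step3 : μ ((fun ω₀ => Φ (T' ω₀)) ⁻¹' D) = μ ({ω₀ | κ ω₀ j = i} ∩ V ⁻¹' B) := by
      apply measure_congr
      rw [Filter.eventuallyEq_set]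
      filter_upwards [hdist, hκargmax, hΦT] with ω₀ hinj hmax h
      have hkappa : ∀ k, argmaxIdx (hn k) (T ω₀ k) = κ ω₀ k := fun k =>
        argmax_unique (hinj k) (argmaxIdx_spec (hn k) (T ω₀ k)) (hmax k)
      have hfst : ∀ k, argmaxIdx (hn k) (T' ω₀ k) = (ς k)⁻¹ (κ ω₀ k) := by
        intro k
        have hTk : T' ω₀ k = T ω₀ k ∘ (ς k) := rfl
        rw [hTk, argmaxIdx_comp_perm (hn k) (hinj k) (ς k), hkappa k]
      have hsnd : (fun k ℓ => ordStat (T' ω₀ k) ℓ) = S ω₀ := by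
        funext k ℓ
        have h2 : ordStat (T ω₀ k) ℓ = S ω₀ k ℓ :=
          congrFun (congrFun (congrArg Prod.snd h) k) ℓ
        have hTk : T' ω₀ k = T ω₀ k ∘ (ς k) := rfl
        show ordStat (T' ω₀ k) ℓ = S ω₀ k ℓ
        rw [hTk, ordStat_comp_perm, h2]
      have hΦT' : Φ (T' ω₀) = (fun k => (ς k)⁻¹ (κ ω₀ k), S ω₀) := by
        refine Prod.ext ?_ ?_
        · funext k; exact hfst k
        · exact hsnd
      have hlam : (fun k : {k : Fin p // k ≠ j} => (ς (k : Fin p))⁻¹ (κ ω₀ (k : Fin p))) =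
          fun k : {k : Fin p // k ≠ j} => κ ω₀ (k : Fin p) := by
        funext k
        rw [hςne (k : Fin p) k.2]
        simp
      have hiff1 : (ς j)⁻¹ (κ ω₀ j) = i' ↔ κ ω₀ j = i := by
        rw [hςj, he₀]
        constructor
        · intro h1
          have h3 := congrArg (Equiv.swap i' i) h1
          rw [← Equiv.Perm.mul_apply, mul_inv_cancel, Equiv.Perm.one_apply] at h3
          rw [h3, Equiv.swap_apply_left]
        · intro h1
          rw [h1, Equiv.swap_inv, Equiv.swap_apply_right]
      show Φ (T' ω₀) ∈ D ↔ _
      rw [hΦT']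
      simp only [hD', Set.mem_setOf_eq, Set.mem_inter_iff, Set.mem_preimage, hV]
      rw [hlam]
      exact and_congr hiff1 Iff.rfl
    calc μ ({ω₀ | κ ω₀ j = i'} ∩ V ⁻¹' B)
        = μ ((fun ω₀ => Φ (T ω₀)) ⁻¹' D) := step1
      _ = μ ((fun ω₀ => Φ (T' ω₀)) ⁻¹' D) := ((hid.comp hΦmeas).measure_mem_eq hD).symm
      _ = μ ({ω₀ | κ ω₀ j = i} ∩ V ⁻¹' B) := step3
  -- the partition identity
  have hκjmeas : Measurable fun ω₀ => κ ω₀ j := (measurable_pi_apply j).comp hκmeas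
  have hpart : ∀ B : Set ((∀ k : {k : Fin p // k ≠ j}, Fin (w ↑k)) ×
      ((k : Fin p) → Fin (w k) → ℝ)), MeasurableSet B →
      μ (V ⁻¹' B) = (w j : ENNReal) * μ ({ω₀ | κ ω₀ j = i} ∩ V ⁻¹' B) := by
    intro B hB
    have hmeasB : MeasurableSet (V ⁻¹' B) := hVmeas hB
    have hU : V ⁻¹' B = ⋃ i' : Fin (w j), ({ω₀ | κ ω₀ j = i'} ∩ V ⁻¹' B) := by
      ext ω₀
      simp only [Set.mem_iUnion, Set.mem_inter_iff, Set.mem_setOf_eq]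
      exact ⟨fun h => ⟨κ ω₀ j, rfl, h⟩, fun ⟨_, _, h⟩ => h⟩
    have hdisj : Pairwise (Function.onFun Disjoint
        fun i' : Fin (w j) => {ω₀ | κ ω₀ j = i'} ∩ V ⁻¹' B) := by
      intro a b hab
      refine Set.disjoint_left.mpr ?_
      rintro ω₀ ⟨ha, -⟩ ⟨hb, -⟩
      exact hab (ha.symm.trans hb)
    have hmeas' : ∀ i' : Fin (w j), MeasurableSet ({ω₀ | κ ω₀ j = i'} ∩ V ⁻¹' B) :=
      fun i' => (hκjmeas (measurableSet_singleton i')).inter hmeasB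
    have hUnion : μ (V ⁻¹' B) = ∑ i' : Fin (w j), μ ({ω₀ | κ ω₀ j = i'} ∩ V ⁻¹' B) := by
      conv_lhs => rw [hU]
      rw [measure_iUnion hdisj hmeas', tsum_fintype]
    rw [hUnion, Finset.sum_congr rfl fun i' _ => key B hB i']
    simp [Finset.card_univ, nsmul_eq_mul]
  -- conclude via the characterization of conditional expectation
  haveI : SigmaFinite (μ.trim hm) := by infer_instance
  have hAmeas : MeasurableSet {ω₀ | κ ω₀ j = i} := hκjmeas (measurableSet_singleton i)
  refine (ae_eq_condExp_of_forall_setIntegral_eq hm ?_ ?_ ?_ ?_).symm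
  · exact (integrable_const (1 : ℝ)).indicator hAmeas
  · exact fun s _ _ => (integrable_const _).integrableOn
  · rintro s hs -
    obtain ⟨B, hB, rfl⟩ := hs
    rw [setIntegral_const, setIntegral_indicator hAmeas, setIntegral_const]
    have h1 := hpart B hB
    rw [Set.inter_comm]
    rw [measureReal_def, measureReal_def, h1, smul_eq_mul, smul_eq_mul, mul_one, ENNReal.toReal_mul, ENNReal.toReal_natCast]
    have hw0 : (w j : ℝ) ≠ 0 := Nat.cast_ne_zero.mpr (hn j).ne'
    field_simp
  · exact StronglyMeasurable.aestronglyMeasurable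
      (@stronglyMeasurable_const _ _ (MeasurableSpace.comap V inferInstance) _ _)
end

section
/- Suppose Z̃ is a valid ω-knockoff of X. Let ς = (ς_1,…,ς_p) be any tuple of permutations such that ς_j is the identity for every j ∉ H₀ and ς_j is an arbitrary permutation of {1,…,ω_j} for j ∈ H₀. Then the pair (Z_swap(ς), Y) has the same joint distribution as (Z, Y). -/
open MeasureTheory ProbabilityTheory

section Aux

/-- `measurable_pi_lambda` for an explicit σ-algebra on the domain. -/
lemma aux_pi_lambda {α δ : Type*} {π : δ → Type*} {m : MeasurableSpace α}
    [∀ a, MeasurableSpace (π a)] (f : α → ∀ a, π a)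
    (hf : ∀ a, Measurable[m] fun c => f c a) : Measurable[m] f :=
  measurable_pi_lambda f hf

/-- Pull-out of an `m'`-measurable set from a conditional expectation of an indicator. -/
lemma aux_condexp_indicator_inter {Ω : Type*} {m' : MeasurableSpace Ω}
    [mΩ : MeasurableSpace Ω] (μ : Measure Ω) [IsFiniteMeasure μ]
    {A D : Set Ω} (hA : MeasurableSet[m'] A) (hD : MeasurableSet D) :
    (μ⟦A ∩ D | m'⟧) =ᵐ[μ] A.indicator (μ⟦D | m'⟧) := by
  have h1 : (A ∩ D).indicator (fun _ : Ω => (1:ℝ)) = A.indicator (D.indicator fun _ => 1) :=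
    (Set.indicator_indicator _ _ _).symm
  show μ[(A ∩ D).indicator (fun _ : Ω => (1:ℝ)) | m'] =ᵐ[μ] _
  rw [h1]
  exact condExp_indicator ((integrable_const (1:ℝ)).indicator hD) hA

/-- If `m₂` and `m₃` are conditionally independent given `m'`, then so are `m' ⊔ m₂` and `m₃`. -/
lemma aux_condIndep_sup {Ω : Type*} {m' m₂ m₃ : MeasurableSpace Ω}
    [mΩ : MeasurableSpace Ω] [StandardBorelSpace Ω]
    (hm' : m' ≤ mΩ) (hm₂ : m₂ ≤ mΩ) (hm₃ : m₃ ≤ mΩ)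
    (μ : Measure Ω) [IsFiniteMeasure μ]
    (h : CondIndep m' m₂ m₃ hm' μ) : CondIndep m' (m' ⊔ m₂) m₃ hm' μ := by
  have hiff := (condIndep_iff m' m₂ m₃ hm' hm₂ hm₃ μ).mp h
  have hgen : m' ⊔ m₂ = MeasurableSpace.generateFrom
      {S : Set Ω | ∃ A B, MeasurableSet[m'] A ∧ MeasurableSet[m₂] B ∧ S = A ∩ B} := by
    apply le_antisymm
    · refine sup_le (fun s hs => ?_) (fun s hs => ?_)
      · exact MeasurableSpace.measurableSet_generateFrom
          ⟨s, Set.univ, hs, MeasurableSet.univ, (Set.inter_univ s).symm⟩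
      · exact MeasurableSpace.measurableSet_generateFrom
          ⟨Set.univ, s, MeasurableSet.univ, hs, (Set.univ_inter s).symm⟩
    · refine MeasurableSpace.generateFrom_le ?_
      rintro S ⟨A, B, hA, hB, rfl⟩
      exact ((le_sup_left : m' ≤ m' ⊔ m₂) _ hA).inter ((le_sup_right : m₂ ≤ m' ⊔ m₂) _ hB)
  have hgen3 : m₃ = MeasurableSpace.generateFrom {S : Set Ω | MeasurableSet[m₃] S} :=
    (@MeasurableSpace.generateFrom_measurableSet Ω m₃).symm
  rw [hgen, hgen3]
  have hp1m : ∀ S ∈ {S : Set Ω | ∃ A B, MeasurableSet[m'] A ∧ MeasurableSet[m₂] B ∧ S = A ∩ B},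
      MeasurableSet S := by
    rintro S ⟨A, B, hA, hB, rfl⟩
    exact (hm' _ hA).inter (hm₂ _ hB)
  have hp2m : ∀ S ∈ {S : Set Ω | MeasurableSet[m₃] S}, MeasurableSet S := fun S hS => hm₃ _ hS
  refine CondIndepSets.condIndep' hp1m hp2m ?_ ?_ ?_
  · rintro _ ⟨A, B, hA, hB, rfl⟩ _ ⟨A', B', hA', hB', rfl⟩ -
    exact ⟨A ∩ A', B ∩ B', hA.inter hA', hB.inter hB', by rw [Set.inter_inter_inter_comm]⟩
  · exact fun s hs t ht _ => hs.inter ht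
  · rw [condIndepSets_iff m' hm' _ _ hp1m hp2m μ]
    rintro _ T ⟨A, B, hA, hB, rfl⟩ hT
    have h1 : (μ⟦A ∩ B ∩ T | m'⟧) =ᵐ[μ] A.indicator (μ⟦B ∩ T | m'⟧) := by
      rw [Set.inter_assoc]
      exact aux_condexp_indicator_inter μ hA ((hm₂ _ hB).inter (hm₃ _ hT))
    have h2 := hiff B T hB hT
    have h3 : (μ⟦A ∩ B | m'⟧) =ᵐ[μ] A.indicator (μ⟦B | m'⟧) :=
      aux_condexp_indicator_inter μ hA (hm₂ _ hB)
    filter_upwards [h1, h2, h3] with ω e1 e2 e3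
    rw [e1, Pi.mul_apply, e3]
    by_cases hω : ω ∈ A
    · rw [Set.indicator_of_mem hω, Set.indicator_of_mem hω, e2, Pi.mul_apply]
    · rw [Set.indicator_of_notMem hω, Set.indicator_of_notMem hω, zero_mul]

/-- The key computation: if `m₂` and `m₃` are conditionally independent given `m'`, then for
`A ∈ m₂` and `C ∈ m₃` the measure of `A ∩ C` is the integral of `1_A ⋅ μ⟦C|m'⟧`. -/
lemma aux_measure_inter_eq_integral {Ω : Type*} {m' m₂ m₃ : MeasurableSpace Ω}
    [mΩ : MeasurableSpace Ω] [StandardBorelSpace Ω]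
    (hm' : m' ≤ mΩ) (hm₂ : m₂ ≤ mΩ) (hm₃ : m₃ ≤ mΩ)
    (μ : Measure Ω) [IsFiniteMeasure μ]
    (h : CondIndep m' m₂ m₃ hm' μ) {A C : Set Ω}
    (hA : MeasurableSet[m₂] A) (hC : MeasurableSet[m₃] C) :
    (μ (A ∩ C)).toReal
      = ∫ ω, A.indicator (fun _ => (1:ℝ)) ω * (μ⟦C | m'⟧) ω ∂μ := by
  have h1 := (condIndep_iff m' m₂ m₃ hm' hm₂ hm₃ μ).mp h A C hA hC
  set g := (μ⟦C | m'⟧) with hgdef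
  have hgm : StronglyMeasurable[m'] g := stronglyMeasurable_condExp
  have hindA : Integrable (A.indicator fun _ => (1:ℝ)) μ :=
    (integrable_const (1:ℝ)).indicator (hm₂ _ hA)
  have hindAC : Integrable ((A ∩ C).indicator fun _ => (1:ℝ)) μ :=
    (integrable_const (1:ℝ)).indicator ((hm₂ _ hA).inter (hm₃ _ hC))
  have hgint : Integrable g μ := integrable_condExp
  have hbound : ∀ ω, ‖A.indicator (fun _ => (1:ℝ)) ω‖ ≤ 1 := by
    intro ω
    by_cases hω : ω ∈ A
    · rw [Set.indicator_of_mem hω]; simp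
    · rw [Set.indicator_of_notMem hω]; simp
  have hprod : Integrable (fun ω : Ω => A.indicator (fun _ => (1:ℝ)) ω * g ω) μ :=
    hgint.bdd_mul hindA.aestronglyMeasurable (Filter.Eventually.of_forall hbound)
  have hprod' : Integrable (g * (A.indicator fun _ => (1:ℝ))) μ := by
    have he : (g * (A.indicator fun _ => (1:ℝ)))
        = fun ω => A.indicator (fun _ => (1:ℝ)) ω * g ω := by
      funext ω; exact mul_comm _ _
    rw [he]; exact hprod
  have hpull : μ[(g * (A.indicator fun _ => (1:ℝ))) | m']
      =ᵐ[μ] g * μ[(A.indicator fun _ => (1:ℝ)) | m'] :=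
    condExp_mul_of_stronglyMeasurable_left hgm hprod' hindA
  calc (μ (A ∩ C)).toReal
      = ∫ ω, (A ∩ C).indicator (fun _ => (1:ℝ)) ω ∂μ :=
        (integral_indicator_one ((hm₂ _ hA).inter (hm₃ _ hC))).symm
    _ = ∫ ω, (μ⟦A ∩ C | m'⟧) ω ∂μ := (integral_condExp hm').symm
    _ = ∫ ω, ((μ⟦A | m'⟧) * g) ω ∂μ := integral_congr_ae h1
    _ = ∫ ω, (g * μ[(A.indicator fun _ => (1:ℝ)) | m']) ω ∂μ := by
        refine integral_congr_ae (Filter.Eventually.of_forall fun ω => ?_)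
        simp only [Pi.mul_apply]
        exact mul_comm _ _
    _ = ∫ ω, (μ[(g * (A.indicator fun _ => (1:ℝ))) | m']) ω ∂μ :=
        (integral_congr_ae hpull).symm
    _ = ∫ ω, (g * (A.indicator fun _ => (1:ℝ))) ω ∂μ := integral_condExp hm'
    _ = ∫ ω, A.indicator (fun _ => (1:ℝ)) ω * g ω ∂μ := by
        refine integral_congr_ae (Filter.Eventually.of_forall fun ω => ?_)
        simp only [Pi.mul_apply]
        exact mul_comm _ _

end Aux

/-- **Lemma 1 (exchangeability of irrelevant features and their knockoffs).**
If `Z̃` is a valid `ω`-knockoff of `X` (swap-invariance of `Z` and conditional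
independence of `Z̃` and `Y` given `X`), and `ς` is a tuple of permutations that
is the identity outside the null set `H₀` (those `j` with `X_j ⊥ Y` given
`(X_k)_{k ≠ j}`), then `(Z_swap(ς), Y)` and `(Z, Y)` are identically
distributed. -/
theorem exchangeability_of_nulls_and_knockoffs
    {Ω : Type*} [m0 : MeasurableSpace Ω] [StandardBorelSpace Ω] [Nonempty Ω]
    (μ : Measure Ω) [IsProbabilityMeasure μ]
    (p : ℕ) (w : Fin p → ℕ) (hw : ∀ j, 2 ≤ w j)
    (X : Fin p → Ω → ℝ) (hX : ∀ j, Measurable (X j))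
    (Y : Ω → ℝ) (hY : Measurable Y)
    (Z : Ω → (j : Fin p) → Fin (w j) → ℝ) (hZ : Measurable Z)
    -- the first coordinate of block j of Z is the original feature X j
    (hZfirst : ∀ ω₀ j, Z ω₀ j ⟨0, by have := hw j; omega⟩ = X j ω₀)
    -- valid ω-knockoff, property (1): swap-invariance of Z
    (hswap : ∀ ς : (j : Fin p) → Equiv.Perm (Fin (w j)),
      IdentDistrib (fun ω₀ => fun j ℓ => Z ω₀ j (ς j ℓ)) Z μ μ)
    -- valid ω-knockoff, property (2): the knockoffs Z̃ (the coordinates ℓ ≠ 1 of Z)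
    -- and Y are conditionally independent given X
    (hcondindep : CondIndepFun
      (MeasurableSpace.comap (fun ω₀ => fun j => X j ω₀) inferInstance)
      (Measurable.comap_le (measurable_pi_lambda _ fun j => hX j))
      (fun ω₀ => fun j => fun ℓ : {ℓ : Fin (w j) // (ℓ : ℕ) ≠ 0} => Z ω₀ j ℓ.1)
      Y μ)
    -- H₀ is the set of null indices
    (H0 : Finset (Fin p))
    (hH0 : ∀ j : Fin p, j ∈ H0 ↔ CondIndepFun
      (MeasurableSpace.comap (fun ω₀ => fun k : {k : Fin p // k ≠ j} => X k ω₀)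
        inferInstance)
      (Measurable.comap_le (measurable_pi_lambda _ fun k => hX k))
      (X j) Y μ) :
    ∀ ς : (j : Fin p) → Equiv.Perm (Fin (w j)), (∀ j ∉ H0, ς j = 1) →
      IdentDistrib (fun ω₀ => ((fun j ℓ => Z ω₀ j (ς j ℓ)), Y ω₀))
        (fun ω₀ => ((fun j ℓ => Z ω₀ j ℓ), Y ω₀)) μ μ := by
  classical
  have hXV : Measurable (fun ω₀ => fun j => X j ω₀) := measurable_pi_lambda _ fun j => hX j
  have hmX : MeasurableSpace.comap (fun ω₀ => fun j => X j ω₀) inferInstance ≤ m0 :=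
    Measurable.comap_le hXV
  have hXVc : Measurable[MeasurableSpace.comap (fun ω₀ => fun j => X j ω₀) inferInstance]
      (fun ω₀ => fun j => X j ω₀) := Measurable.of_comap_le le_rfl
  set Zt : Ω → (j : Fin p) → {ℓ : Fin (w j) // (ℓ : ℕ) ≠ 0} → ℝ :=
    (fun ω₀ => fun j => fun ℓ : {ℓ : Fin (w j) // (ℓ : ℕ) ≠ 0} => Z ω₀ j ℓ.1) with hZtdef
  have hZt : Measurable Zt :=
    measurable_pi_lambda _ fun j => measurable_pi_lambda _ fun ℓ =>
      (measurable_pi_apply ℓ.1).comp ((measurable_pi_apply j).comp hZ)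
  have hZtc : Measurable[MeasurableSpace.comap Zt inferInstance] Zt :=
    Measurable.of_comap_le le_rfl
  have hwpos : ∀ k, 0 < w k := fun k => lt_of_lt_of_le (by norm_num) (hw k)
  -- conditional independence of (X, Z̃) and Y given X, σ-algebra form
  have hsup1 : CondIndep (MeasurableSpace.comap (fun ω₀ => fun j => X j ω₀) inferInstance)
      ((MeasurableSpace.comap (fun ω₀ => fun j => X j ω₀) inferInstance)
        ⊔ MeasurableSpace.comap Zt inferInstance)
      (MeasurableSpace.comap Y inferInstance)
      (Measurable.comap_le (measurable_pi_lambda _ fun j => hX j)) μ := by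
    refine aux_condIndep_sup _ (Measurable.comap_le hZt) (Measurable.comap_le hY) μ ?_
    exact (condIndepFun_iff_condIndep _ _ _ _ μ).mp hcondindep
  -- measurability of any swap of Z with respect to mX ⊔ comap Z̃
  have hWmeas : ∀ τ : (k : Fin p) → Equiv.Perm (Fin (w k)),
      Measurable[(MeasurableSpace.comap (fun ω₀ => fun j => X j ω₀) inferInstance)
          ⊔ MeasurableSpace.comap Zt inferInstance]
        (fun ω₀ => fun k ℓ => Z ω₀ k (τ k ℓ)) := by
    intro τ
    refine aux_pi_lambda _ fun k => aux_pi_lambda _ fun ℓ => ?_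
    by_cases h0 : ((τ k ℓ : Fin (w k)) : ℕ) = 0
    · have hτ : τ k ℓ = ⟨0, hwpos k⟩ := Fin.ext h0
      have he : (fun ω₀ => Z ω₀ k (τ k ℓ)) = fun ω₀ => X k ω₀ := by
        funext ω₀
        rw [hτ]
        exact hZfirst ω₀ k
      rw [he]
      exact ((measurable_pi_apply k).comp hXVc).mono le_sup_left le_rfl
    · have he : (fun ω₀ => Z ω₀ k (τ k ℓ)) = fun ω₀ => Zt ω₀ k ⟨τ k ℓ, h0⟩ := rfl
      rw [he]
      exact (((measurable_pi_apply _).comp (measurable_pi_apply k)).comp hZtc).mono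
        le_sup_right le_rfl
  -- Key identity 1: measure of (Z_swap τ ∈ s) ∩ (Y ∈ t) as an integral against μ⟦Y⁻¹t|mX⟧
  have key1 : ∀ τ : (k : Fin p) → Equiv.Perm (Fin (w k)),
      ∀ s : Set ((k : Fin p) → Fin (w k) → ℝ), ∀ t : Set ℝ,
      MeasurableSet s → MeasurableSet t →
      (μ ((fun ω₀ => fun k ℓ => Z ω₀ k (τ k ℓ)) ⁻¹' s ∩ Y ⁻¹' t)).toReal
        = ∫ ω, ((fun ω₀ => fun k ℓ => Z ω₀ k (τ k ℓ)) ⁻¹' s).indicator (fun _ => (1:ℝ)) ω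
            * (μ⟦Y ⁻¹' t | MeasurableSpace.comap (fun ω₀ => fun j => X j ω₀) inferInstance⟧) ω
              ∂μ := by
    intro τ s t hs ht
    exact aux_measure_inter_eq_integral _ (sup_le hmX (Measurable.comap_le hZt))
      (Measurable.comap_le hY) μ hsup1 (hWmeas τ hs) ⟨t, ht, rfl⟩
  -- The single-swap step at a null index j
  have step : ∀ j ∈ H0, ∀ ς : (k : Fin p) → Equiv.Perm (Fin (w k)),
      ∀ s : Set ((k : Fin p) → Fin (w k) → ℝ), ∀ t : Set ℝ,
      MeasurableSet s → MeasurableSet t →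
      (μ ((fun ω₀ => fun k ℓ => Z ω₀ k (ς k ℓ)) ⁻¹' s ∩ Y ⁻¹' t)).toReal
        = (μ ((fun ω₀ => fun k ℓ => Z ω₀ k (Function.update ς j 1 k ℓ)) ⁻¹' s ∩ Y ⁻¹' t)).toReal := by
    intro j hj ς s t hs ht
    -- set-up for the null index j
    set XVj : Ω → {k : Fin p // k ≠ j} → ℝ :=
      (fun ω₀ => fun k : {k : Fin p // k ≠ j} => X k ω₀) with hXVjdef
    have hXVj : Measurable XVj := measurable_pi_lambda _ fun k => hX k.1
    have hmXj : MeasurableSpace.comap XVj inferInstance ≤ m0 := Measurable.comap_le hXVj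
    have hXVjc : Measurable[MeasurableSpace.comap XVj inferInstance] XVj :=
      Measurable.of_comap_le le_rfl
    have hXjc : Measurable[MeasurableSpace.comap (X j) inferInstance] (X j) :=
      Measurable.of_comap_le le_rfl
    have hnull := (hH0 j).mp hj
    have hsupj : CondIndep (MeasurableSpace.comap XVj inferInstance)
        ((MeasurableSpace.comap XVj inferInstance) ⊔ MeasurableSpace.comap (X j) inferInstance)
        (MeasurableSpace.comap Y inferInstance)
        (Measurable.comap_le (measurable_pi_lambda _ fun k => hX k)) μ := by
      refine aux_condIndep_sup _ (Measurable.comap_le (hX j)) (Measurable.comap_le hY) μ ?_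
      exact (condIndepFun_iff_condIndep _ _ _ _ μ).mp hnull
    have hmXle : MeasurableSpace.comap (fun ω₀ => fun j => X j ω₀) inferInstance
        ≤ (MeasurableSpace.comap XVj inferInstance) ⊔ MeasurableSpace.comap (X j) inferInstance := by
      refine Measurable.comap_le (aux_pi_lambda _ fun k => ?_)
      by_cases hk : k = j
      · subst hk
        exact hXjc.mono le_sup_right le_rfl
      · exact ((measurable_pi_apply ⟨k, hk⟩).comp hXVjc).mono le_sup_left le_rfl
    have hmXjle : MeasurableSpace.comap XVj inferInstance
        ≤ MeasurableSpace.comap (fun ω₀ => fun j => X j ω₀) inferInstance :=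
      Measurable.comap_le (aux_pi_lambda _ fun k =>
        (measurable_pi_apply k.1).comp hXVc)
    -- the conditional probability as an explicit function of X_{-j}
    set gj : Ω → ℝ := fun ω₀ => (condDistrib Y XVj μ (XVj ω₀) t).toReal with hgjdef
    have hgj_null : gj =ᵐ[μ] (μ⟦Y ⁻¹' t | MeasurableSpace.comap XVj inferInstance⟧) :=
      condDistrib_ae_eq_condExp hXVj hY ht
    -- Key identity 2: for mX-measurable A, μ(A ∩ Y⁻¹t) = ∫ 1_A ⋅ gj
    have keyj : ∀ A : Set Ω,
        MeasurableSet[MeasurableSpace.comap (fun ω₀ => fun j => X j ω₀) inferInstance] A →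
        (μ (A ∩ Y ⁻¹' t)).toReal = ∫ ω, A.indicator (fun _ => (1:ℝ)) ω * gj ω ∂μ := by
      intro A hA
      have h1 := aux_measure_inter_eq_integral _
        (sup_le hmXj (Measurable.comap_le (hX j))) (Measurable.comap_le hY) μ hsupj
        (hmXle A hA) (⟨t, ht, rfl⟩ : MeasurableSet[MeasurableSpace.comap Y inferInstance]
          (Y ⁻¹' t))
      rw [h1]
      refine integral_congr_ae ?_
      filter_upwards [hgj_null] with ω hω
      rw [hω]
    -- Step 3 : μ⟦Y⁻¹t | mX⟧ = gj  almost everywhere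
    have step3 : (μ⟦Y ⁻¹' t | MeasurableSpace.comap (fun ω₀ => fun j => X j ω₀) inferInstance⟧)
        =ᵐ[μ] gj := by
      refine (ae_eq_condExp_of_forall_setIntegral_eq hmX
        ((integrable_const (1:ℝ)).indicator (hY ht))
        (fun A _ _ => (integrable_toReal_condDistrib hXVj.aemeasurable ht).integrableOn)
        (fun A hA _ => ?_) ?_).symm
      · -- integrals over mX-measurable sets agree
        have e1 : ∫ x in A, gj x ∂μ = ∫ x, A.indicator (fun _ => (1:ℝ)) x * gj x ∂μ := by
          rw [← integral_indicator (hmX _ hA)]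
          refine integral_congr_ae (Filter.Eventually.of_forall fun ω => ?_)
          by_cases hω : ω ∈ A
          · simp only [Set.indicator_of_mem hω, one_mul]
          · simp only [Set.indicator_of_notMem hω, zero_mul]
        have e2 : ∫ x in A, (Y ⁻¹' t).indicator (fun _ => (1:ℝ)) x ∂μ
            = (μ (A ∩ Y ⁻¹' t)).toReal := by
          rw [integral_indicator_const (1:ℝ) (hY ht), measureReal_def, Measure.restrict_apply (hY ht),
            smul_eq_mul, mul_one, Set.inter_comm]
        change ∫ x in A, gj x ∂μ = _
        rw [e1, e2, keyj A hA]
      · -- gj is mX-strongly measurable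
        have h1 : Measurable[MeasurableSpace.comap XVj inferInstance] gj :=
          @Measurable.ennreal_toReal _ (MeasurableSpace.comap XVj inferInstance) _
            (measurable_condDistrib ht)
        exact StronglyMeasurable.aestronglyMeasurable (h1.mono hmXjle le_rfl).stronglyMeasurable
    -- the function of X_{-j} used to transport along the swap
    set hj' : ({k : Fin p // k ≠ j} → ℝ) → ℝ :=
      fun x => (condDistrib Y XVj μ x t).toReal with hj'def
    have hhj' : Measurable hj' := (Kernel.measurable_coe _ ht).ennreal_toReal
    -- the compensating permutation tuple
    set τ : (k : Fin p) → Equiv.Perm (Fin (w k)) :=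
      Function.update (fun k => (1 : Equiv.Perm (Fin (w k)))) j (ς j)⁻¹ with hτdef
    set G : ((k : Fin p) → Fin (w k) → ℝ) → ℝ :=
      fun z => Set.indicator s (fun _ => (1:ℝ)) (fun k ℓ => z k (ς k ℓ))
        * hj' (fun k : {k : Fin p // k ≠ j} => z k.1 ⟨0, hwpos k.1⟩) with hGdef
    have hG : Measurable G := by
      refine Measurable.mul ?_ ?_
      · exact (measurable_const.indicator hs).comp
          (measurable_pi_lambda _ fun k => measurable_pi_lambda _ fun ℓ =>
            (measurable_pi_apply _).comp (measurable_pi_apply k))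
      · exact hhj'.comp (measurable_pi_lambda _ fun k =>
          (measurable_pi_apply _).comp (measurable_pi_apply k.1))
    -- pointwise identifications
    have e1 : ∀ ω, G (Z ω)
        = ((fun ω₀ => fun k ℓ => Z ω₀ k (ς k ℓ)) ⁻¹' s).indicator (fun _ => (1:ℝ)) ω * gj ω := by
      intro ω
      have hx : (fun k : {k : Fin p // k ≠ j} => Z ω k.1 ⟨0, hwpos k.1⟩) = XVj ω := by
        funext k
        exact hZfirst ω k.1
      have hind : Set.indicator s (fun _ => (1:ℝ)) (fun k ℓ => Z ω k (ς k ℓ))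
          = ((fun ω₀ => fun k ℓ => Z ω₀ k (ς k ℓ)) ⁻¹' s).indicator (fun _ => (1:ℝ)) ω := by
        by_cases hω : (fun k ℓ => Z ω k (ς k ℓ)) ∈ s
        · rw [Set.indicator_of_mem hω]
          exact (Set.indicator_of_mem (f := fun _ => (1:ℝ))
            (show ω ∈ (fun ω₀ => fun k ℓ => Z ω₀ k (ς k ℓ)) ⁻¹' s from hω)).symm
        · rw [Set.indicator_of_notMem hω]
          exact (Set.indicator_of_notMem (f := fun _ => (1:ℝ))
            (show ω ∉ (fun ω₀ => fun k ℓ => Z ω₀ k (ς k ℓ)) ⁻¹' s from hω)).symm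
      show Set.indicator s (fun _ => (1:ℝ)) (fun k ℓ => Z ω k (ς k ℓ))
          * hj' (fun k : {k : Fin p // k ≠ j} => Z ω k.1 ⟨0, hwpos k.1⟩) = _
      rw [hx, hind]
    have e2 : ∀ ω, G (fun k ℓ => Z ω k (τ k ℓ))
        = ((fun ω₀ => fun k ℓ => Z ω₀ k (Function.update ς j 1 k ℓ)) ⁻¹' s).indicator
            (fun _ => (1:ℝ)) ω * gj ω := by
      intro ω
      have harg1 : (fun k ℓ => Z ω k (τ k (ς k ℓ)))
          = fun k ℓ => Z ω k (Function.update ς j 1 k ℓ) := by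
        funext k ℓ
        by_cases hk : k = j
        · subst hk
          rw [hτdef]
          rw [Function.update_self, Function.update_self, Equiv.Perm.coe_inv, Equiv.symm_apply_apply,
            Equiv.Perm.one_apply]
        · rw [hτdef]
          rw [Function.update_of_ne hk, Function.update_of_ne hk, Equiv.Perm.one_apply]
      have hx : (fun k : {k : Fin p // k ≠ j} => Z ω k.1 (τ k.1 ⟨0, hwpos k.1⟩)) = XVj ω := by
        funext k
        have hτk : τ k.1 = 1 := by rw [hτdef]; exact Function.update_of_ne k.2 _ _
        rw [hτk, Equiv.Perm.one_apply]
        exact hZfirst ω k.1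
      have hind : Set.indicator s (fun _ => (1:ℝ)) (fun k ℓ => Z ω k (τ k (ς k ℓ)))
          = ((fun ω₀ => fun k ℓ => Z ω₀ k (Function.update ς j 1 k ℓ)) ⁻¹' s).indicator
              (fun _ => (1:ℝ)) ω := by
        rw [harg1]
        by_cases hω : (fun k ℓ => Z ω k (Function.update ς j 1 k ℓ)) ∈ s
        · rw [Set.indicator_of_mem hω]
          exact (Set.indicator_of_mem (f := fun _ => (1:ℝ))
            (show ω ∈ (fun ω₀ => fun k ℓ => Z ω₀ k (Function.update ς j 1 k ℓ)) ⁻¹' s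
              from hω)).symm
        · rw [Set.indicator_of_notMem hω]
          exact (Set.indicator_of_notMem (f := fun _ => (1:ℝ))
            (show ω ∉ (fun ω₀ => fun k ℓ => Z ω₀ k (Function.update ς j 1 k ℓ)) ⁻¹' s
              from hω)).symm
      show Set.indicator s (fun _ => (1:ℝ)) (fun k ℓ => Z ω k (τ k (ς k ℓ)))
          * hj' (fun k : {k : Fin p // k ≠ j} => Z ω k.1 (τ k.1 ⟨0, hwpos k.1⟩)) = _
      rw [hx, hind]
    -- swap-invariance transports the integral
    have hswapint : ∫ ω, G (fun k ℓ => Z ω k (τ k ℓ)) ∂μ = ∫ ω, G (Z ω) ∂μ :=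
      ((hswap τ).comp hG).integral_eq
    -- assemble
    calc (μ ((fun ω₀ => fun k ℓ => Z ω₀ k (ς k ℓ)) ⁻¹' s ∩ Y ⁻¹' t)).toReal
        = ∫ ω, ((fun ω₀ => fun k ℓ => Z ω₀ k (ς k ℓ)) ⁻¹' s).indicator (fun _ => (1:ℝ)) ω
            * (μ⟦Y ⁻¹' t | MeasurableSpace.comap (fun ω₀ => fun j => X j ω₀) inferInstance⟧) ω
              ∂μ := key1 ς s t hs ht
      _ = ∫ ω, ((fun ω₀ => fun k ℓ => Z ω₀ k (ς k ℓ)) ⁻¹' s).indicator (fun _ => (1:ℝ)) ω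
            * gj ω ∂μ := by
          refine integral_congr_ae ?_
          filter_upwards [step3] with ω hω
          rw [hω]
      _ = ∫ ω, G (Z ω) ∂μ :=
          integral_congr_ae (Filter.Eventually.of_forall fun ω => (e1 ω).symm)
      _ = ∫ ω, G (fun k ℓ => Z ω k (τ k ℓ)) ∂μ := hswapint.symm
      _ = ∫ ω, ((fun ω₀ => fun k ℓ => Z ω₀ k (Function.update ς j 1 k ℓ)) ⁻¹' s).indicator
            (fun _ => (1:ℝ)) ω * gj ω ∂μ :=
          integral_congr_ae (Filter.Eventually.of_forall fun ω => e2 ω)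
      _ = ∫ ω, ((fun ω₀ => fun k ℓ => Z ω₀ k (Function.update ς j 1 k ℓ)) ⁻¹' s).indicator
            (fun _ => (1:ℝ)) ω
            * (μ⟦Y ⁻¹' t | MeasurableSpace.comap (fun ω₀ => fun j => X j ω₀) inferInstance⟧) ω
              ∂μ := by
          refine integral_congr_ae ?_
          filter_upwards [step3] with ω hω
          rw [hω]
      _ = (μ ((fun ω₀ => fun k ℓ => Z ω₀ k (Function.update ς j 1 k ℓ)) ⁻¹' s ∩ Y ⁻¹' t)).toReal :=
          (key1 (Function.update ς j 1) s t hs ht).symm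
  -- induction over the support of ς
  have main : ∀ S : Finset (Fin p), ∀ ς : (k : Fin p) → Equiv.Perm (Fin (w k)),
      (∀ k ∉ H0, ς k = 1) → (∀ k ∉ S, ς k = 1) →
      ∀ s : Set ((k : Fin p) → Fin (w k) → ℝ), ∀ t : Set ℝ,
      MeasurableSet s → MeasurableSet t →
      (μ ((fun ω₀ => fun k ℓ => Z ω₀ k (ς k ℓ)) ⁻¹' s ∩ Y ⁻¹' t)).toReal
        = (μ ((fun ω₀ => fun k ℓ => Z ω₀ k ℓ) ⁻¹' s ∩ Y ⁻¹' t)).toReal := by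
    intro S
    induction S using Finset.induction_on with
    | empty =>
      intro ς h1 h2 s t hs ht
      have he : (fun ω₀ => fun k ℓ => Z ω₀ k (ς k ℓ)) = fun ω₀ => fun k ℓ => Z ω₀ k ℓ := by
        funext ω₀ k ℓ
        rw [h2 k (Finset.notMem_empty k), Equiv.Perm.one_apply]
      rw [he]
    | @insert a S ha ih =>
      intro ς h1 h2 s t hs ht
      by_cases haH : a ∈ H0
      · rw [step a haH ς s t hs ht]
        refine ih (Function.update ς a 1) (fun k hk => ?_) (fun k hk => ?_) s t hs ht
        · rcases eq_or_ne k a with rfl | hne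
          · rw [Function.update_self]
          · rw [Function.update_of_ne hne]; exact h1 k hk
        · rcases eq_or_ne k a with rfl | hne
          · rw [Function.update_self]
          · rw [Function.update_of_ne hne]
            exact h2 k (fun hmem => (Finset.mem_insert.mp hmem).elim hne hk)
      · refine ih ς h1 (fun k hk => ?_) s t hs ht
        rcases eq_or_ne k a with rfl | hne
        · exact h1 k haH
        · exact h2 k (fun hmem => (Finset.mem_insert.mp hmem).elim hne hk)
  -- conclusion
  intro ς hς
  have hW : Measurable (fun ω₀ => fun k ℓ => Z ω₀ k (ς k ℓ)) :=
    measurable_pi_lambda _ fun k => measurable_pi_lambda _ fun ℓ =>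
      (measurable_pi_apply _).comp ((measurable_pi_apply k).comp hZ)
  have hZ' : Measurable (fun ω₀ => fun k ℓ => Z ω₀ k ℓ) :=
    measurable_pi_lambda _ fun k => measurable_pi_lambda _ fun ℓ =>
      (measurable_pi_apply _).comp ((measurable_pi_apply k).comp hZ)
  have hm1 : Measurable (fun ω₀ => ((fun k ℓ => Z ω₀ k (ς k ℓ)), Y ω₀)) := hW.prodMk hY
  have hm2 : Measurable (fun ω₀ => ((fun k ℓ => Z ω₀ k ℓ), Y ω₀)) := hZ'.prodMk hY
  refine ⟨hm1.aemeasurable, hm2.aemeasurable, ?_⟩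
  haveI h1 : IsProbabilityMeasure (μ.map (fun ω₀ => ((fun k ℓ => Z ω₀ k (ς k ℓ)), Y ω₀))) :=
    Measure.isProbabilityMeasure_map hm1.aemeasurable
  haveI h2 : IsProbabilityMeasure (μ.map (fun ω₀ => ((fun k ℓ => Z ω₀ k ℓ), Y ω₀))) :=
    Measure.isProbabilityMeasure_map hm2.aemeasurable
  refine ext_of_generate_finite _ generateFrom_prod.symm isPiSystem_prod ?_ ?_
  · rintro _ ⟨s, hs, t, ht, rfl⟩
    have hs' : MeasurableSet s := hs
    have ht' : MeasurableSet t := ht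
    rw [Measure.map_apply hm1 (hs'.prod ht'), Measure.map_apply hm2 (hs'.prod ht')]
    have hpre1 : (fun ω₀ => ((fun k ℓ => Z ω₀ k (ς k ℓ)), Y ω₀)) ⁻¹' (s ×ˢ t)
        = (fun ω₀ => fun k ℓ => Z ω₀ k (ς k ℓ)) ⁻¹' s ∩ Y ⁻¹' t := by
      ext ω₀; simp [Set.mem_prod]
    have hpre2 : (fun ω₀ => ((fun k ℓ => Z ω₀ k ℓ), Y ω₀)) ⁻¹' (s ×ˢ t)
        = (fun ω₀ => fun k ℓ => Z ω₀ k ℓ) ⁻¹' s ∩ Y ⁻¹' t := by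
      ext ω₀; simp [Set.mem_prod]
    rw [hpre1, hpre2]
    exact (ENNReal.toReal_eq_toReal_iff' (measure_ne_top μ _) (measure_ne_top μ _)).mp
      (main H0 ς hς hς s t hs' ht')
  · rw [Measure.map_apply hm1 MeasurableSet.univ, Measure.map_apply hm2 MeasurableSet.univ,
      Set.preimage_univ, Set.preimage_univ]
end

section
/- Let (X_i)_{i ∈ I} be a finite family of random variables on a probability space, each taking values in a measurable space, such that for every i ∈ I, X_i is independent of the σ-algebra generated by the family (X_k)_{k ∈ I, k ≠ i}. Then the family (X_i)_{i ∈ I} is mutually independent. -/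
open MeasureTheory ProbabilityTheory

/-- **Each-versus-rest independence implies mutual independence.**
If each random variable `X i` in a finite family is independent of the
σ-algebra generated by the rest of the family `(X k)_{k ≠ i}`, then the family
is mutually independent. -/
theorem iIndepFun_of_indep_rest
    {Ω : Type*} [MeasurableSpace Ω] (μ : Measure Ω) [IsProbabilityMeasure μ]
    {ι : Type*} [Fintype ι] {β : ι → Type*} (mβ : ∀ i, MeasurableSpace (β i))
    (X : ∀ i, Ω → β i) (hX : ∀ i, Measurable (X i))
    (hindep : ∀ i, Indep (MeasurableSpace.comap (X i) (mβ i))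
      (⨆ k ∈ ({k | k ≠ i} : Set ι), MeasurableSpace.comap (X k) (mβ k)) μ) :
    iIndepFun (m := mβ) X μ := by
  classical
  rw [iIndepFun_iff_iIndep, iIndep_iff]
  intro s f hf
  induction s using Finset.induction_on with
  | empty => simp
  | @insert j s hj ih =>
    have h1 : MeasurableSet[MeasurableSpace.comap (X j) (mβ j)] (f j) :=
      hf j (Finset.mem_insert_self j s)
    have h2 : MeasurableSet[⨆ k ∈ ({k | k ≠ j} : Set ι),
        MeasurableSpace.comap (X k) (mβ k)] (⋂ i ∈ s, f i) := by
      refine MeasurableSet.biInter s.countable_toSet fun i hi => ?_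
      have hij : i ≠ j := fun h => hj (h ▸ hi)
      have hle : MeasurableSpace.comap (X i) (mβ i) ≤
          ⨆ k ∈ ({k | k ≠ j} : Set ι), MeasurableSpace.comap (X k) (mβ k) :=
        le_biSup (fun k => MeasurableSpace.comap (X k) (mβ k)) (by exact hij)
      exact hle _ (hf i (Finset.mem_insert_of_mem hi))
    have := (Indep_iff _ _ _).mp (hindep j) (f j) (⋂ i ∈ s, f i) h1 h2
    rw [Finset.set_biInter_insert, Finset.prod_insert hj, this,
      ih (fun i hi => hf i (Finset.mem_insert_of_mem hi))]
end
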